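/- arXiv:1304.0151 — 8 statements merged into one kernel-verified Lean document; each statement's English description precedes it below -/
import Mathlib

section
/- Let T be a negative binomial random variable counting the number of i.i.d. Bernoulli(p) trials (0 < p ≤ 1) needed to obtain N successes, with N ≥ 2. Then E[(N-1)/(T-1)] = p. -/
/-- For a negative binomial random variable `T` counting the number of
i.i.d. Bernoulli(p) trials (0 < p ≤ 1) needed to obtain `N ≥ 2` successes, with
`P(T = t) = C(t-1, N-1) p^N (1-p)^(t-N)` for `t ≥ N`, we have `E[(N-1)/(T-1)] = p`. -/
theorem negBinom_expect_inv_pred (p : ℝ) (hp0 : 0 < p) (hp1 : p ≤ 1)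
    (N : ℕ) (hN : 2 ≤ N) :
    (∑' t : ℕ, if N ≤ t then
        (((t - 1).choose (N - 1) : ℝ) * p ^ N * (1 - p) ^ (t - N)) *
          (((N : ℝ) - 1) / ((t : ℝ) - 1))
      else 0) = p := by
  obtain ⟨M, rfl⟩ : ∃ M, N = M + 2 := ⟨N - 2, by omega⟩
  set g : ℕ → ℝ := fun t => if M + 2 ≤ t then
        (((t - 1).choose (M + 2 - 1) : ℝ) * p ^ (M + 2) * (1 - p) ^ (t - (M + 2))) *
          (((((M + 2 : ℕ) : ℝ)) - 1) / ((t : ℝ) - 1))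
      else 0 with hg
  have hr : ‖1 - p‖ < 1 := by
    rw [Real.norm_eq_abs, abs_lt]; constructor <;> linarith
  have hinj : Function.Injective (fun k : ℕ => k + (M + 2)) := fun a b h => by
    simp only at h; omega
  have hsupp : Function.support g ⊆ Set.range (fun k : ℕ => k + (M + 2)) := by
    intro t ht
    by_contra hc
    have hlt : ¬ (M + 2 ≤ t) := by
      intro h
      exact hc ⟨t - (M + 2), by simp only; omega⟩
    exact ht (by simp [hg, hlt])
  have key : ∀ k : ℕ, g (k + (M + 2)) =
      p ^ (M + 2) * (((k + M).choose M : ℝ) * (1 - p) ^ k) := by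
    intro k
    have hif : M + 2 ≤ k + (M + 2) := by omega
    have h1 : k + (M + 2) - 1 = k + M + 1 := by omega
    have h2 : M + 2 - 1 = M + 1 := by omega
    have h3 : k + (M + 2) - (M + 2) = k := by omega
    have hch : ((k + M + 1) : ℕ) * (k + M).choose M = (k + M + 1).choose (M + 1) * (M + 1) := by
      simpa using Nat.add_one_mul_choose_eq (k + M) M
    have hchR : ((k : ℝ) + M + 1) * ((k + M).choose M : ℝ)
        = ((k + M + 1).choose (M + 1) : ℝ) * ((M : ℝ) + 1) := by
      exact_mod_cast congrArg (Nat.cast : ℕ → ℝ) hch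
    have hne : ((k + (M + 2) : ℕ) : ℝ) - 1 ≠ 0 := by
      push_cast; intro h; nlinarith [Nat.cast_nonneg (α := ℝ) k]
    simp only [hg, hif, if_true, h1, h2, h3]
    rw [← mul_div_assoc, div_eq_iff hne]
    push_cast
    linear_combination (-(p ^ (M + 2) * (1 - p) ^ k)) * hchR
  calc (∑' t : ℕ, g t)
      = ∑' k : ℕ, g (k + (M + 2)) := (hinj.tsum_eq hsupp).symm
    _ = ∑' k : ℕ, p ^ (M + 2) * (((k + M).choose M : ℝ) * (1 - p) ^ k) := tsum_congr key
    _ = p ^ (M + 2) * ∑' k : ℕ, (((k + M).choose M : ℝ) * (1 - p) ^ k) := tsum_mul_left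
    _ = p ^ (M + 2) * (1 / (1 - (1 - p)) ^ (M + 1)) := by
        rw [tsum_choose_mul_geometric_of_norm_lt_one M hr]
    _ = p := by
        have h : (1 : ℝ) - (1 - p) = p := by ring
        rw [h, pow_succ, pow_succ]
        field_simp
end

section
/- Let T be a negative binomial random variable counting the number of i.i.d. Bernoulli(p) trials (0 < p ≤ 1) needed to obtain N successes, with N ≥ 3. Then E[(N-1)(N-2)/((T-1)(T-2))] = p^2. -/
lemma negBinom_choose_id (s M : ℕ) :
    (s + M + 2).choose (M + 2) * ((M + 2) * (M + 1)) =
      (s + M).choose M * ((s + M + 2) * (s + M + 1)) := by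
  have h1 : (s + M + 2) * (s + M + 1).choose (M + 1) =
      (s + M + 2).choose (M + 2) * (M + 2) := Nat.add_one_mul_choose_eq (s + M + 1) (M + 1)
  have h2 : (s + M + 1) * (s + M).choose M =
      (s + M + 1).choose (M + 1) * (M + 1) := Nat.add_one_mul_choose_eq (s + M) M
  nlinarith [h1, h2]

/-- For a negative binomial random variable `T` (number of i.i.d.
Bernoulli(p) trials until `N ≥ 3` successes, `0 < p ≤ 1`), one has
`E[(N-1)(N-2)/((T-1)(T-2))] = p^2`. -/
theorem negBinom_expect_inv_pred_sq (p : ℝ) (hp0 : 0 < p) (hp1 : p ≤ 1)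
    (N : ℕ) (hN : 3 ≤ N) :
    (∑' t : ℕ, if N ≤ t then
        (((t - 1).choose (N - 1) : ℝ) * p ^ N * (1 - p) ^ (t - N)) *
          ((((N : ℝ) - 1) * ((N : ℝ) - 2)) / ((((t : ℝ) - 1)) * (((t : ℝ) - 2))))
      else 0) = p ^ 2 := by
  obtain ⟨M, rfl⟩ : ∃ M, N = M + 3 := ⟨N - 3, by omega⟩
  set f : ℕ → ℝ := fun t => if M + 3 ≤ t then
        (((t - 1).choose (M + 3 - 1) : ℝ) * p ^ (M + 3) * (1 - p) ^ (t - (M + 3))) *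
          ((((M + 3 : ℕ) : ℝ) - 1) * (((M + 3 : ℕ) : ℝ) - 2) /
            ((((t : ℝ) - 1)) * (((t : ℝ) - 2)))) else 0 with hf
  have hr : ‖1 - p‖ < 1 := by
    rw [Real.norm_eq_abs, abs_lt]; constructor <;> linarith
  have hinj : Function.Injective (fun s : ℕ => s + (M + 3)) := fun a b h => by
    simpa using h
  have hshift : ∑' s : ℕ, f (s + (M + 3)) = ∑' t, f t := by
    refine hinj.tsum_eq fun x hx => ?_
    have hxle : M + 3 ≤ x := by
      by_contra h
      exact hx (by simp [hf, h])
    exact ⟨x - (M + 3), by simp only []; omega⟩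
  have hterm : ∀ s : ℕ, f (s + (M + 3)) =
      (p ^ 2 * p ^ (M + 1)) * (((s + M).choose M : ℝ) * (1 - p) ^ s) := by
    intro s
    have hle : M + 3 ≤ s + (M + 3) := by omega
    have h1 : s + (M + 3) - 1 = s + M + 2 := by omega
    have h2 : s + (M + 3) - (M + 3) = s := by omega
    have h3 : M + 3 - 1 = M + 2 := by omega
    simp only [hf, if_pos hle, h1, h2, h3]
    have hd : (((s + (M + 3) : ℕ) : ℝ) - 1) * (((s + (M + 3) : ℕ) : ℝ) - 2) ≠ 0 := by
      push_cast
      nlinarith [Nat.cast_nonneg (α := ℝ) s, Nat.cast_nonneg (α := ℝ) M]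
    have key : ((s + M + 2).choose (M + 2) : ℝ) * (((M : ℝ) + 2) * ((M : ℝ) + 1)) =
        ((s + M).choose M : ℝ) * (((s : ℝ) + (M : ℝ) + 2) * ((s : ℝ) + (M : ℝ) + 1)) := by
      exact_mod_cast congrArg (Nat.cast : ℕ → ℝ) (negBinom_choose_id s M)
    rw [mul_div_assoc', div_eq_iff hd]
    push_cast
    linear_combination (p ^ (M + 3) * (1 - p) ^ s) * key
  have hsum : ∑' s : ℕ, (((s + M).choose M : ℝ) * (1 - p) ^ s) = 1 / p ^ (M + 1) := by
    have := tsum_choose_mul_geometric_of_norm_lt_one (𝕜 := ℝ) M hr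
    simpa using this
  calc ∑' t, f t = ∑' s : ℕ, f (s + (M + 3)) := hshift.symm
    _ = ∑' s : ℕ, (p ^ 2 * p ^ (M + 1)) * (((s + M).choose M : ℝ) * (1 - p) ^ s) :=
        tsum_congr hterm
    _ = (p ^ 2 * p ^ (M + 1)) * ∑' s : ℕ, (((s + M).choose M : ℝ) * (1 - p) ^ s) :=
        tsum_mul_left
    _ = p ^ 2 := by
        rw [hsum]
        field_simp
end

section
/- Let (F, 𝓕) be a measurable space, ν a probability measure on F, B ∈ 𝓕 with ν(B) > 0, X^1, X^2, ... i.i.d. with law ν, N ≥ 2, and T = inf{n ≥ 1 : Σ_{i=1}^n 1_B(X^i) ≥ N}. Then for any bounded measurable φ : F → ℝ, E[(1/(T-1)) Σ_{i=1}^{T-1} φ(X^i)] = ν(φ), i.e., the stopped empirical average of the first T-1 samples is an unbiased estimator of the ν-integral of φ. -/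
open MeasureTheory ProbabilityTheory
open scoped Classical
lemma aux_count_ind {F : Type*} (B' : Set F) (y : ℕ → F) (s : Finset ℕ) (k : ℕ) :
    (if (s.filter (fun j => y j ∈ B')).card = k then (1:ℝ) else 0)
    = ∑ u ∈ Finset.powersetCard k s, ∏ j ∈ s,
        (if j ∈ u then B'.indicator (fun _ => (1:ℝ)) (y j)
         else B'ᶜ.indicator (fun _ => (1:ℝ)) (y j)) := by
  set u₀ := s.filter (fun j => y j ∈ B') with hu₀
  have hterm : ∀ u ∈ Finset.powersetCard k s,
      (∏ j ∈ s, (if j ∈ u then B'.indicator (fun _ => (1:ℝ)) (y j)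
        else B'ᶜ.indicator (fun _ => (1:ℝ)) (y j))) = if u = u₀ then 1 else 0 := by
    intro u hu
    rw [Finset.mem_powersetCard] at hu
    by_cases h : u = u₀
    · subst h
      rw [if_pos rfl]
      apply Finset.prod_eq_one
      intro j hj
      by_cases hjb : y j ∈ B'
      · rw [if_pos (Finset.mem_filter.2 ⟨hj, hjb⟩), Set.indicator_of_mem hjb]
      · rw [if_neg (show j ∉ u₀ from fun hc => hjb (Finset.mem_filter.1 hc).2)]
        exact Set.indicator_of_mem (Set.mem_compl hjb) _
    · rw [if_neg h]
      have : ∃ j ∈ s, ¬ ((j ∈ u) ↔ (j ∈ u₀)) := by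
        by_contra hc
        push_neg at hc
        exact h (Finset.ext fun j => by
          constructor
          · intro hj; exact (hc j (hu.1 hj)).1 hj
          · intro hj; exact (hc j (Finset.mem_filter.1 hj).1).2 hj)
      obtain ⟨j, hjs, hj⟩ := this
      apply Finset.prod_eq_zero hjs
      by_cases hjb : y j ∈ B'
      · have hj0 : j ∈ u₀ := Finset.mem_filter.2 ⟨hjs, hjb⟩
        have : j ∉ u := fun hju => hj ⟨fun _ => hj0, fun _ => hju⟩
        rw [if_neg this, Set.indicator_of_notMem (by simpa using hjb)]
      · have hj0 : j ∉ u₀ := fun hc => hjb (Finset.mem_filter.1 hc).2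
        have : j ∈ u := by
          by_contra hju
          exact hj ⟨fun h' => absurd h' hju, fun h' => absurd h' hj0⟩
        rw [if_pos this, Set.indicator_of_notMem hjb]
  rw [Finset.sum_congr rfl hterm, Finset.sum_ite_eq' (Finset.powersetCard k s) u₀ (fun _ => (1:ℝ))]
  congr 1
  simp only [Finset.mem_powersetCard, eq_iff_iff]
  constructor
  · intro hc; exact ⟨Finset.filter_subset _ _, hc⟩
  · rintro ⟨_, h2⟩; exact h2

lemma aux_pointwise {F : Type*} (B : Set F) (φ : F → ℝ) (y : ℕ → F) (N t i : ℕ)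
    (hN : 2 ≤ N) (hi : i < t - 1) :
    (if ((Finset.range (t-1)).filter (fun j => y j ∈ B)).card = N-1 ∧ y (t-1) ∈ B
      then φ (y i) else 0)
    = (∑ u ∈ Finset.powersetCard (N-2) ((Finset.range (t-1)).erase i),
        ∏ j ∈ insert i (insert (t-1) ((Finset.range (t-1)).erase i)),
          (if j = i then (fun x => φ x * B.indicator (fun _ => (1:ℝ)) x)
           else if j = t-1 then B.indicator (fun _ => (1:ℝ))
           else if j ∈ u then B.indicator (fun _ => (1:ℝ))
           else Bᶜ.indicator (fun _ => (1:ℝ))) (y j))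
    + (∑ u ∈ Finset.powersetCard (N-1) ((Finset.range (t-1)).erase i),
        ∏ j ∈ insert i (insert (t-1) ((Finset.range (t-1)).erase i)),
          (if j = i then (fun x => φ x * Bᶜ.indicator (fun _ => (1:ℝ)) x)
           else if j = t-1 then B.indicator (fun _ => (1:ℝ))
           else if j ∈ u then B.indicator (fun _ => (1:ℝ))
           else Bᶜ.indicator (fun _ => (1:ℝ))) (y j)) := by
  set χ : F → ℝ := B.indicator (fun _ => (1:ℝ)) with hχ
  set χ' : F → ℝ := Bᶜ.indicator (fun _ => (1:ℝ)) with hχ'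
  set s' : Finset ℕ := (Finset.range (t-1)).erase i with hs'
  have hiU : i ∉ insert (t-1) s' := by
    simp only [Finset.mem_insert, hs', Finset.mem_erase]
    push_neg
    exact ⟨by omega, fun h => absurd rfl h⟩
  have ht1s' : (t-1) ∉ s' := by simp [hs', Finset.mem_erase]
  have hprod : ∀ (ψ : F → ℝ) (u : Finset ℕ),
      (∏ j ∈ insert i (insert (t-1) s'),
        (if j = i then ψ else if j = t-1 then χ else if j ∈ u then χ else χ') (y j))
      = ψ (y i) * (χ (y (t-1)) *
          ∏ j ∈ s', (if j ∈ u then χ (y j) else χ' (y j))) := by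
    intro ψ u
    rw [Finset.prod_insert hiU, Finset.prod_insert ht1s']
    rw [if_pos rfl]
    congr 1
    rw [if_neg (show (t-1) ≠ i by omega), if_pos rfl]
    congr 1
    apply Finset.prod_congr rfl
    intro j hj
    have hji : j ≠ i := (Finset.mem_erase.1 hj).1
    have hjt : j ≠ t-1 := by
      have := (Finset.mem_erase.1 hj).2; rw [Finset.mem_range] at this; omega
    rw [if_neg hji, if_neg hjt]
    split_ifs <;> rfl
  have hsum : ∀ (ψ : F → ℝ) (k : ℕ),
      (∑ u ∈ Finset.powersetCard k s',
        ∏ j ∈ insert i (insert (t-1) s'),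
          (if j = i then ψ else if j = t-1 then χ else if j ∈ u then χ else χ') (y j))
      = ψ (y i) * (χ (y (t-1)) *
          (if (s'.filter (fun j => y j ∈ B)).card = k then (1:ℝ) else 0)) := by
    intro ψ k
    rw [Finset.sum_congr rfl (fun u _ => hprod ψ u), ← Finset.mul_sum, ← Finset.mul_sum,
      ← aux_count_ind B y s' k]
  rw [hsum _ (N-2), hsum _ (N-1)]
  have hcard : ((Finset.range (t-1)).filter (fun j => y j ∈ B)).card
      = (if y i ∈ B then (s'.filter (fun j => y j ∈ B)).card + 1
         else (s'.filter (fun j => y j ∈ B)).card) := by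
    have h1 : Finset.range (t-1) = insert i s' :=
      (Finset.insert_erase (Finset.mem_range.2 hi)).symm
    rw [h1, Finset.filter_insert]
    split_ifs with h
    · rw [Finset.card_insert_of_notMem (fun hc => ht1s' (by
        exact absurd (Finset.mem_filter.1 hc).1 (Finset.notMem_erase i _)))]
    · rfl
  by_cases h1 : y i ∈ B <;> by_cases h2 : y (t-1) ∈ B <;>
    simp only [hcard, hχ, hχ', Set.indicator_apply, Set.mem_compl_iff, h1, h2, if_true,
      if_false, not_true, not_false_iff, mul_one, mul_zero, zero_mul, add_zero, zero_add,
      one_mul, and_true, and_false] <;>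
    try split_ifs <;> first | ring1 | (exfalso; omega)
  all_goals first | ring1 | (exfalso; omega)
lemma aux_prod_int {F : Type*} [MeasurableSpace F] {Ω : Type*} [MeasurableSpace Ω]
    (μ : Measure Ω) [IsProbabilityMeasure μ] (ν : Measure F)
    (X : ℕ → Ω → F) (hXm : ∀ i, Measurable (X i))
    (hindep : iIndepFun X μ)
    (hlaw : ∀ i, Measure.map (X i) μ = ν)
    (s : Finset ℕ) (f : ℕ → F → ℝ) (hfm : ∀ j, Measurable (f j)) :
    ∫ ω, ∏ j ∈ s, f j (X j ω) ∂μ = ∏ j ∈ s, ∫ x, f j x ∂ν := by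
  induction s using Finset.induction_on with
  | empty => simp
  | @insert i s hi ih =>
    have hmeas : ∀ (t : Finset ℕ), Measurable (fun ω => ∏ j ∈ t, f j (X j ω)) :=
      fun t => Finset.measurable_prod t (fun j _ => (hfm j).comp (hXm j))
    have h := hindep.indepFun_finset {i} s (by simp [Finset.disjoint_left, hi]) hXm
    have h1 : IndepFun (fun ω => f i (X i ω)) (fun ω => ∏ j ∈ s, f j (X j ω)) μ := by
      have g1m : Measurable (fun v : (({i} : Finset ℕ) → F) => f i (v ⟨i, Finset.mem_singleton_self i⟩)) :=
        (hfm i).comp (measurable_pi_apply _)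
      have g2m : Measurable (fun v : ((j : s) → F) => ∏ j : s, f j (v j)) :=
        Finset.measurable_prod Finset.univ (fun j _ => (hfm j).comp (measurable_pi_apply j))
      have e2 : (fun ω => ∏ j ∈ s, f j (X j ω))
          = ((fun v : ((j : s) → F) => ∏ j : s, f (j : ℕ) (v j)) ∘ fun a (j : s) => X (j : ℕ) a) :=
        funext fun ω => (Finset.prod_coe_sort s (fun j => f j (X j ω))).symm
      rw [e2]
      exact h.comp g1m g2m
    rw [show (fun ω => ∏ j ∈ insert i s, f j (X j ω)) = fun ω => (f i (X i ω)) * ∏ j ∈ s, f j (X j ω) by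
        funext ω; rw [Finset.prod_insert hi]]
    rw [h1.integral_fun_mul_eq_mul_integral ((hfm i).comp (hXm i)).aestronglyMeasurable (hmeas s).aestronglyMeasurable]
    rw [ih, Finset.prod_insert hi]
    congr 1
    rw [← hlaw i, integral_map (hXm i).aemeasurable (hfm i).aestronglyMeasurable]



section
variable {F : Type*} [MeasurableSpace F] {Ω : Type*} [MeasurableSpace Ω]
  {μ : Measure Ω} [IsProbabilityMeasure μ] {ν : Measure F} [IsProbabilityMeasure ν]
  {X : ℕ → Ω → F}

lemma aux_integrable_bdd (μ : Measure Ω)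
    [IsProbabilityMeasure μ] {g : Ω → ℝ} (hg : AEStronglyMeasurable g μ) {D : ℝ}
    (hb : ∀ ω, |g ω| ≤ D) : Integrable g μ :=
  (integrable_const D).mono' hg (Filter.Eventually.of_forall fun ω => by
    simpa [Real.norm_eq_abs] using hb ω)

lemma aux_integrable_prod (hXm : ∀ i, Measurable (X i))
    (U : Finset ℕ) (f : ℕ → F → ℝ) (hm : ∀ j, Measurable (f j)) (D : ℝ)
    (hD : ∀ j x, |f j x| ≤ D) :
    Integrable (fun ω => ∏ j ∈ U, f j (X j ω)) μ := by
  apply aux_integrable_bdd μ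
    (Finset.measurable_prod U (fun j _ => (hm j).comp (hXm j))).aestronglyMeasurable
    (D := D ^ U.card)
  intro ω
  rw [Finset.abs_prod, ← Finset.prod_const]
  exact Finset.prod_le_prod (fun j _ => abs_nonneg _) (fun j _ => hD j _)

lemma aux_int_indicator_one (hB : MeasurableSet (B : Set F)) :
    ∫ x, B.indicator (fun _ => (1:ℝ)) x ∂ν = (ν B).toReal := by
  rw [MeasureTheory.integral_indicator_const (1:ℝ) hB, smul_eq_mul, mul_one, measureReal_def]

lemma aux_compl_toReal (hB : MeasurableSet (B : Set F)) :
    (ν Bᶜ).toReal = 1 - (ν B).toReal := by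
  rw [prob_compl_eq_one_sub hB, ENNReal.toReal_sub_of_le prob_le_one ENNReal.one_ne_top,
    ENNReal.toReal_one]


lemma aux_block (hXm : ∀ i, Measurable (X i))
    (hindep : iIndepFun X μ)
    (hlaw : ∀ i, Measure.map (X i) μ = ν)
    (B : Set F) (hB : MeasurableSet B)
    (ψ : F → ℝ) (hψm : Measurable ψ) (D : ℝ) (hψb : ∀ x, |ψ x| ≤ D)
    (t i k : ℕ) (hi : i < t - 1) :
    ∫ ω, ∑ u ∈ Finset.powersetCard k ((Finset.range (t-1)).erase i),
      ∏ j ∈ insert i (insert (t-1) ((Finset.range (t-1)).erase i)),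
        (if j = i then ψ else if j = t-1 then B.indicator (fun _ => (1:ℝ))
          else if j ∈ u then B.indicator (fun _ => (1:ℝ))
          else Bᶜ.indicator (fun _ => (1:ℝ))) (X j ω) ∂μ
    = ((t-2).choose k : ℝ) *
        ((∫ x, ψ x ∂ν) * ((ν B).toReal * ((ν B).toReal ^ k * (1 - (ν B).toReal) ^ (t-2-k)))) := by
  set χ : F → ℝ := B.indicator (fun _ => (1:ℝ)) with hχ
  set χ' : F → ℝ := Bᶜ.indicator (fun _ => (1:ℝ)) with hχ'
  set s' : Finset ℕ := (Finset.range (t-1)).erase i with hs'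
  have hχm : Measurable χ := measurable_const.indicator hB
  have hχ'm : Measurable χ' := measurable_const.indicator hB.compl
  have hχb : ∀ x, |χ x| ≤ 1 := fun x => by
    by_cases h : x ∈ B <;> simp [hχ, Set.indicator_apply, h]
  have hχ'b : ∀ x, |χ' x| ≤ 1 := fun x => by
    by_cases h : x ∈ Bᶜ <;> simp [hχ', Set.indicator_apply, h]
  have hfm : ∀ (u : Finset ℕ) (j : ℕ), Measurable
      ((if j = i then ψ else if j = t-1 then χ else if j ∈ u then χ else χ')) := by
    intro u j
    split_ifs <;> first | exact hψm | exact hχm | exact hχ'm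
  have hfb : ∀ (u : Finset ℕ) (j : ℕ) (x : F),
      |(if j = i then ψ else if j = t-1 then χ else if j ∈ u then χ else χ') x| ≤ max D 1 := by
    intro u j x
    split_ifs
    · exact le_trans (hψb x) (le_max_left _ _)
    · exact le_trans (hχb x) (le_max_right _ _)
    · exact le_trans (hχb x) (le_max_right _ _)
    · exact le_trans (hχ'b x) (le_max_right _ _)
  have hiU : i ∉ insert (t-1) s' := by
    simp only [Finset.mem_insert, hs', Finset.mem_erase]
    push_neg
    exact ⟨by omega, fun h => absurd rfl h⟩
  have ht1s' : (t-1) ∉ s' := by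
    simp [hs', Finset.mem_erase]
  have hs'card : s'.card = t - 2 := by
    rw [hs', Finset.card_erase_of_mem (Finset.mem_range.2 hi), Finset.card_range]
    omega
  rw [integral_finset_sum _ (fun u _ => aux_integrable_prod hXm _ _ (hfm u) (max D 1) (hfb u))]
  have hterm : ∀ u ∈ Finset.powersetCard k s',
      (∫ ω, ∏ j ∈ insert i (insert (t-1) s'),
        (if j = i then ψ else if j = t-1 then χ else if j ∈ u then χ else χ') (X j ω) ∂μ)
      = (∫ x, ψ x ∂ν) * ((ν B).toReal * ((ν B).toReal ^ k * (1 - (ν B).toReal) ^ (t-2-k))) := by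
    intro u hu
    rw [Finset.mem_powersetCard] at hu
    rw [aux_prod_int μ ν X hXm hindep hlaw _ _ (hfm u)]
    rw [Finset.prod_insert hiU, Finset.prod_insert ht1s']
    have e1 : (if i = i then ψ else if i = t-1 then χ else if i ∈ u then χ else χ') = ψ :=
      if_pos rfl
    have e2 : (if (t-1) = i then ψ else if (t-1) = t-1 then χ else if (t-1) ∈ u then χ else χ') = χ := by
      rw [if_neg (by omega), if_pos rfl]
    rw [e1, e2, aux_int_indicator_one hB]
    congr 1
    congr 1
    have e3 : ∀ j ∈ s', (∫ x, (if j = i then ψ else if j = t-1 then χ else if j ∈ u then χ else χ') x ∂ν)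
        = if j ∈ u then (ν B).toReal else (1 - (ν B).toReal) := by
      intro j hj
      have hji : j ≠ i := (Finset.mem_erase.1 hj).1
      have hjt : j ≠ t-1 := by
        have := (Finset.mem_erase.1 hj).2
        rw [Finset.mem_range] at this
        omega
      rw [if_neg hji, if_neg hjt]
      by_cases h : j ∈ u
      · rw [if_pos h, if_pos h, aux_int_indicator_one hB]
      · rw [if_neg h, if_neg h, ← aux_compl_toReal hB, aux_int_indicator_one hB.compl]
    rw [Finset.prod_congr rfl e3, Finset.prod_ite, Finset.prod_const, Finset.prod_const]
    have e4 : Finset.filter (fun j => j ∈ u) s' = u := by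
      rw [Finset.filter_mem_eq_inter, Finset.inter_eq_right.2 hu.1]
    have e5 : (Finset.filter (fun j => j ∉ u) s').card = t - 2 - k := by
      have : Finset.filter (fun j => j ∉ u) s' = s' \ u := by
        rw [Finset.sdiff_eq_filter]
      rw [this, Finset.card_sdiff_of_subset hu.1, hs'card, hu.2]
    rw [e4, e5, hu.2]
  rw [Finset.sum_congr rfl hterm, Finset.sum_const, Finset.card_powersetCard, hs'card,
    nsmul_eq_mul]
lemma aux_main (μ : Measure Ω) [IsProbabilityMeasure μ] (ν : Measure F) [IsProbabilityMeasure ν]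
    (hXm : ∀ i, Measurable (X i))
    (hindep : iIndepFun X μ)
    (hlaw : ∀ i, Measure.map (X i) μ = ν)
    (B : Set F) (hB : MeasurableSet B)
    (φ : F → ℝ) (hφm : Measurable φ) (C : ℝ) (hφb : ∀ x, |φ x| ≤ C)
    (N t i : ℕ) (hN : 2 ≤ N) (ht : N ≤ t) (hi : i < t - 1) :
    ∫ ω in {ω | ((Finset.range (t-1)).filter (fun j => X j ω ∈ B)).card = N - 1
        ∧ X (t-1) ω ∈ B}, φ (X i ω) ∂μ
    = (∫ x in B, φ x ∂ν) * ((ν B).toReal ^ (N-1) *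
        (((t-2).choose (N-2) : ℝ) * (1 - (ν B).toReal) ^ (t-N)))
      + (∫ x in Bᶜ, φ x ∂ν) * ((ν B).toReal ^ N *
        (((t-2).choose (N-1) : ℝ) * (1 - (ν B).toReal) ^ (t-1-N))) := by
  set χ : F → ℝ := B.indicator (fun _ => (1:ℝ)) with hχ
  set χ' : F → ℝ := Bᶜ.indicator (fun _ => (1:ℝ)) with hχ'
  have hχb : ∀ x, |χ x| ≤ 1 := fun x => by
    by_cases h : x ∈ B <;> simp [hχ, Set.indicator_apply, h]
  have hχ'b : ∀ x, |χ' x| ≤ 1 := fun x => by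
    by_cases h : x ∈ Bᶜ <;> simp [hχ', Set.indicator_apply, h]
  have hχm : Measurable χ := measurable_const.indicator hB
  have hχ'm : Measurable χ' := measurable_const.indicator hB.compl
  have hψ1m : Measurable (fun x => φ x * χ x) := hφm.mul hχm
  have hψ2m : Measurable (fun x => φ x * χ' x) := hφm.mul hχ'm
  have hψ1b : ∀ x, |φ x * χ x| ≤ C := fun x => by
    rw [abs_mul]
    exact le_trans (mul_le_of_le_one_right (abs_nonneg _) (hχb x)) (hφb x)
  have hψ2b : ∀ x, |φ x * χ' x| ≤ C := fun x => by
    rw [abs_mul]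
    exact le_trans (mul_le_of_le_one_right (abs_nonneg _) (hχ'b x)) (hφb x)
  have hcntm : Measurable (fun ω => ((Finset.range (t-1)).filter (fun j => X j ω ∈ B)).card) := by
    have : (fun ω => ((Finset.range (t-1)).filter (fun j => X j ω ∈ B)).card)
        = fun ω => ∑ j ∈ Finset.range (t-1), if X j ω ∈ B then 1 else 0 :=
      funext fun ω => Finset.card_filter _ _
    rw [this]
    exact Finset.measurable_sum _ (fun j _ =>
      Measurable.ite ((hXm j) hB) measurable_const measurable_const)
  have hE : MeasurableSet {ω | ((Finset.range (t-1)).filter (fun j => X j ω ∈ B)).card = N - 1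
      ∧ X (t-1) ω ∈ B} := by
    have : {ω | ((Finset.range (t-1)).filter (fun j => X j ω ∈ B)).card = N - 1
        ∧ X (t-1) ω ∈ B}
        = (fun ω => ((Finset.range (t-1)).filter (fun j => X j ω ∈ B)).card) ⁻¹' {N-1}
          ∩ (X (t-1)) ⁻¹' B := rfl
    rw [this]
    exact (hcntm (measurableSet_singleton _)).inter ((hXm (t-1)) hB)
  rw [← integral_indicator hE]
  have hpt : (Set.indicator {ω | ((Finset.range (t-1)).filter (fun j => X j ω ∈ B)).card = N - 1
      ∧ X (t-1) ω ∈ B} (fun ω => φ (X i ω)))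
      = fun ω =>
      (∑ u ∈ Finset.powersetCard (N-2) ((Finset.range (t-1)).erase i),
        ∏ j ∈ insert i (insert (t-1) ((Finset.range (t-1)).erase i)),
          (if j = i then (fun x => φ x * χ x)
           else if j = t-1 then χ else if j ∈ u then χ else χ') (X j ω))
      + (∑ u ∈ Finset.powersetCard (N-1) ((Finset.range (t-1)).erase i),
        ∏ j ∈ insert i (insert (t-1) ((Finset.range (t-1)).erase i)),
          (if j = i then (fun x => φ x * χ' x)
           else if j = t-1 then χ else if j ∈ u then χ else χ') (X j ω)) := by
    funext ω
    rw [Set.indicator_apply]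
    simp only [Set.mem_setOf_eq]
    exact aux_pointwise B φ (fun j => X j ω) N t i hN hi
  rw [hpt]
  have hfm1 : ∀ (u : Finset ℕ) (j : ℕ), Measurable
      ((if j = i then (fun x => φ x * χ x) else if j = t-1 then χ else if j ∈ u then χ else χ')) := by
    intro u j; split_ifs <;> first | exact hψ1m | exact hχm | exact hχ'm
  have hfm2 : ∀ (u : Finset ℕ) (j : ℕ), Measurable
      ((if j = i then (fun x => φ x * χ' x) else if j = t-1 then χ else if j ∈ u then χ else χ')) := by
    intro u j; split_ifs <;> first | exact hψ2m | exact hχm | exact hχ'm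
  have hfb1 : ∀ (u : Finset ℕ) (j : ℕ) (x : F),
      |(if j = i then (fun x => φ x * χ x) else if j = t-1 then χ else if j ∈ u then χ else χ') x|
        ≤ max C 1 := by
    intro u j x
    split_ifs
    · exact le_trans (hψ1b x) (le_max_left _ _)
    · exact le_trans (hχb x) (le_max_right _ _)
    · exact le_trans (hχb x) (le_max_right _ _)
    · exact le_trans (hχ'b x) (le_max_right _ _)
  have hfb2 : ∀ (u : Finset ℕ) (j : ℕ) (x : F),
      |(if j = i then (fun x => φ x * χ' x) else if j = t-1 then χ else if j ∈ u then χ else χ') x|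
        ≤ max C 1 := by
    intro u j x
    split_ifs
    · exact le_trans (hψ2b x) (le_max_left _ _)
    · exact le_trans (hχb x) (le_max_right _ _)
    · exact le_trans (hχb x) (le_max_right _ _)
    · exact le_trans (hχ'b x) (le_max_right _ _)
  rw [integral_add
    (integrable_finset_sum _ (fun u _ => aux_integrable_prod hXm _ _ (hfm1 u) (max C 1) (hfb1 u)))
    (integrable_finset_sum _ (fun u _ => aux_integrable_prod hXm _ _ (hfm2 u) (max C 1) (hfb2 u)))]
  rw [aux_block hXm hindep hlaw B hB _ hψ1m C hψ1b t i (N-2) hi,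
    aux_block hXm hindep hlaw B hB _ hψ2m C hψ2b t i (N-1) hi]
  have hint1 : ∫ x, φ x * χ x ∂ν = ∫ x in B, φ x ∂ν := by
    have : (fun x => φ x * χ x) = B.indicator φ := funext fun x => by
      by_cases h : x ∈ B <;> simp [hχ, Set.indicator_apply, h]
    rw [this, integral_indicator hB]
  have hint2 : ∫ x, φ x * χ' x ∂ν = ∫ x in Bᶜ, φ x ∂ν := by
    have : (fun x => φ x * χ' x) = Bᶜ.indicator φ := funext fun x => by
      by_cases h : x ∈ Bᶜ <;> simp [hχ', Set.indicator_apply, h]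
    rw [this, integral_indicator hB.compl]
  rw [hint1, hint2]
  have e1 : t - 2 - (N-2) = t - N := by omega
  have e2 : t - 2 - (N-1) = t - 1 - N := by omega
  have e3 : (ν B).toReal * (ν B).toReal ^ (N-2) = (ν B).toReal ^ (N-1) := by
    rw [← pow_succ']
    congr 1
    omega
  have e4 : (ν B).toReal * (ν B).toReal ^ (N-1) = (ν B).toReal ^ N := by
    rw [← pow_succ']
    congr 1
    omega
  rw [e1, e2]
  rw [show ∀ (c a x y : ℝ), c * (a * (x * (y * (1 - (ν B).toReal) ^ (t-N)))) =
    a * ((x*y) * (c * (1 - (ν B).toReal) ^ (t-N))) from fun c a x y => by ring]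
  rw [show ∀ (c a x y : ℝ), c * (a * (x * (y * (1 - (ν B).toReal) ^ (t-1-N)))) =
    a * ((x*y) * (c * (1 - (ν B).toReal) ^ (t-1-N))) from fun c a x y => by ring]
  rw [e3, e4]

end
lemma aux_cnt_succ {F : Type*} (B : Set F) (y : ℕ → F) (k : ℕ) :
    ((Finset.range (k+1)).filter (fun i => y i ∈ B)).card
    = ((Finset.range k).filter (fun i => y i ∈ B)).card + (if y k ∈ B then 1 else 0) := by
  rw [Finset.range_add_one, Finset.filter_insert]
  split_ifs with h
  · rw [Finset.card_insert_of_notMem (fun hc => by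
      have := (Finset.mem_filter.1 hc).1
      simp at this)]
  · rw [add_zero]

lemma aux_cnt_mono {F : Type*} (B : Set F) (y : ℕ → F) {m n : ℕ} (h : m ≤ n) :
    ((Finset.range m).filter (fun i => y i ∈ B)).card
    ≤ ((Finset.range n).filter (fun i => y i ∈ B)).card :=
  Finset.card_le_card (Finset.filter_subset_filter _ (Finset.range_subset_range.2 h))

lemma aux_cnt_le {F : Type*} (B : Set F) (y : ℕ → F) (n : ℕ) :
    ((Finset.range n).filter (fun i => y i ∈ B)).card ≤ n :=
  le_trans (Finset.card_filter_le _ _) (le_of_eq (Finset.card_range n))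

lemma aux_T_char {F : Type*} (B : Set F) (y : ℕ → F) (N t : ℕ) (hN : 2 ≤ N) (ht : 1 ≤ t) :
    sInf {n : ℕ | N ≤ ((Finset.range n).filter (fun i => y i ∈ B)).card} = t
    ↔ (((Finset.range (t-1)).filter (fun i => y i ∈ B)).card = N - 1 ∧ y (t-1) ∈ B) := by
  constructor
  · intro h
    have hne : {n : ℕ | N ≤ ((Finset.range n).filter (fun i => y i ∈ B)).card}.Nonempty := by
      by_contra he
      rw [Set.not_nonempty_iff_eq_empty] at he
      rw [he, Nat.sInf_empty] at h
      omega
    have htM := Nat.sInf_mem hne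
    rw [h] at htM
    have ht1 : t - 1 ∉ {n : ℕ | N ≤ ((Finset.range n).filter (fun i => y i ∈ B)).card} := by
      intro hc
      have := Nat.sInf_le hc
      omega
    simp only [Set.mem_setOf_eq, not_le] at htM ht1
    have hstep := aux_cnt_succ B y (t-1)
    rw [show t - 1 + 1 = t by omega] at hstep
    by_cases hyB : y (t-1) ∈ B
    · rw [if_pos hyB] at hstep
      exact ⟨by omega, hyB⟩
    · rw [if_neg hyB] at hstep
      omega
  · rintro ⟨h1, h2⟩
    have hct : ((Finset.range t).filter (fun i => y i ∈ B)).card = N := by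
      have hstep := aux_cnt_succ B y (t-1)
      rw [show t - 1 + 1 = t by omega, if_pos h2] at hstep
      omega
    have htM : t ∈ {n : ℕ | N ≤ ((Finset.range n).filter (fun i => y i ∈ B)).card} := by
      simp only [Set.mem_setOf_eq, hct, le_refl]
    refine le_antisymm (Nat.sInf_le htM) (le_csInf ⟨t, htM⟩ ?_)
    intro m hm
    by_contra hlt
    push_neg at hlt
    have hmono := aux_cnt_mono B y (show m ≤ t - 1 by omega)
    simp only [Set.mem_setOf_eq] at hm
    omega

lemma aux_T_zero {F : Type*} (B : Set F) (y : ℕ → F) (N : ℕ) (hN : 2 ≤ N) :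
    sInf {n : ℕ | N ≤ ((Finset.range n).filter (fun i => y i ∈ B)).card} = 0
    ↔ ∀ n, ((Finset.range n).filter (fun i => y i ∈ B)).card < N := by
  constructor
  · intro h n
    by_contra hc
    push_neg at hc
    have hne : {n : ℕ | N ≤ ((Finset.range n).filter (fun i => y i ∈ B)).card}.Nonempty := ⟨n, hc⟩
    have h0 := Nat.sInf_mem hne
    rw [h] at h0
    simp only [Set.mem_setOf_eq, Finset.range_zero, Finset.filter_empty, Finset.card_empty] at h0
    omega
  · intro h
    have : {n : ℕ | N ≤ ((Finset.range n).filter (fun i => y i ∈ B)).card} = ∅ :=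
      Set.eq_empty_iff_forall_notMem.2 fun n hn => absurd hn (not_le.2 (h n))
    rw [this, Nat.sInf_empty]
/-- Let `ν` be a probability measure on `F`, `B` measurable with `ν B > 0`,
`X 0, X 1, ...` i.i.d. with law `ν`, `N ≥ 2`, and `T` the first time `n` such that `N`
of the samples `X 0, ..., X (n-1)` lie in `B`.  Then for any bounded measurable
`φ : F → ℝ`, the stopped empirical average of the first `T - 1` samples is an unbiased
estimator of `∫ φ dν`. -/
theorem alive_empirical_average_unbiased
    {F : Type*} [MeasurableSpace F] {Ω : Type*} [MeasurableSpace Ω]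
    (μ : Measure Ω) [IsProbabilityMeasure μ]
    (ν : Measure F) [IsProbabilityMeasure ν]
    (X : ℕ → Ω → F) (hXm : ∀ i, Measurable (X i))
    (hindep : iIndepFun X μ)
    (hlaw : ∀ i, Measure.map (X i) μ = ν)
    (B : Set F) (hB : MeasurableSet B) (hBpos : 0 < ν B)
    (N : ℕ) (hN : 2 ≤ N)
    (T : Ω → ℕ)
    (hT : ∀ ω, T ω =
      sInf {n : ℕ | N ≤ ((Finset.range n).filter (fun i => X i ω ∈ B)).card})
    (φ : F → ℝ) (hφm : Measurable φ) (C : ℝ) (hφb : ∀ x, |φ x| ≤ C) :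
    ∫ ω, (1 / ((T ω : ℝ) - 1)) * ∑ i ∈ Finset.range (T ω - 1), φ (X i ω) ∂μ
      = ∫ x, φ x ∂ν := by
  set G : ℕ → Ω → ℝ :=
    fun t ω => (1 / ((t : ℝ) - 1)) * ∑ i ∈ Finset.range (t - 1), φ (X i ω) with hGdef
  set a : ℝ := ∫ x in B, φ x ∂ν with ha
  set b : ℝ := ∫ x in Bᶜ, φ x ∂ν with hb
  set p : ℝ := (ν B).toReal with hp
  set q : ℝ := 1 - p with hq
  have hφint : Integrable φ ν := aux_integrable_bdd ν hφm.aestronglyMeasurable hφb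
  have hab : ∫ x, φ x ∂ν = a + b := (integral_add_compl hB hφint).symm
  have hppos : 0 < p := ENNReal.toReal_pos hBpos.ne' (measure_ne_top ν B)
  have hple : p ≤ 1 := by
    rw [hp, ← ENNReal.toReal_one]
    exact ENNReal.toReal_mono ENNReal.one_ne_top prob_le_one
  have hq0 : 0 ≤ q := by rw [hq]; linarith
  have hq1 : q < 1 := by rw [hq]; linarith
  -- measurability of counts
  have hcntm : ∀ n, Measurable (fun ω => ((Finset.range n).filter (fun j => X j ω ∈ B)).card) := by
    intro n
    have : (fun ω => ((Finset.range n).filter (fun j => X j ω ∈ B)).card)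
        = fun ω => ∑ j ∈ Finset.range n, if X j ω ∈ B then 1 else 0 :=
      funext fun ω => Finset.card_filter _ _
    rw [this]
    exact Finset.measurable_sum _ (fun j _ =>
      Measurable.ite ((hXm j) hB) measurable_const measurable_const)
  -- measurability of level sets of T
  have hTset : ∀ t, 1 ≤ t → {ω | T ω = t}
      = {ω | ((Finset.range (t-1)).filter (fun j => X j ω ∈ B)).card = N - 1
          ∧ X (t-1) ω ∈ B} := by
    intro t ht
    ext ω
    simp only [Set.mem_setOf_eq, hT ω]
    exact aux_T_char B (fun j => X j ω) N t hN ht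
  have hTms : ∀ t, MeasurableSet {ω | T ω = t} := by
    intro t
    rcases Nat.eq_zero_or_pos t with rfl | ht
    · have : {ω | T ω = 0}
          = ⋂ n, {ω | ((Finset.range n).filter (fun j => X j ω ∈ B)).card < N} := by
        ext ω
        simp only [Set.mem_setOf_eq, hT ω, Set.mem_iInter]
        exact aux_T_zero B (fun j => X j ω) N hN
      rw [this]
      exact MeasurableSet.iInter fun n =>
        (hcntm n) (measurableSet_Iio (a := N))
    · rw [hTset t ht]
      exact ((hcntm (t-1)) (measurableSet_singleton _)).inter ((hXm (t-1)) hB)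
  -- measurability and boundedness of the integrand
  have hGm : ∀ t, Measurable (G t) := fun t =>
    (Finset.measurable_sum _ (fun i _ => hφm.comp (hXm i))).const_mul _
  have hGbd : ∀ t ω, |G t ω| ≤ max C 0 := by
    intro t ω
    rcases Nat.lt_or_ge t 2 with h2 | h2
    · have ht1 : t - 1 = 0 := by omega
      simp only [hGdef, ht1, Finset.range_zero, Finset.sum_empty, mul_zero, abs_zero]
      exact le_max_right _ _
    · have hsum : |∑ i ∈ Finset.range (t-1), φ (X i ω)| ≤ ((t-1 : ℕ) : ℝ) * C := by
        calc |∑ i ∈ Finset.range (t-1), φ (X i ω)|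
            ≤ ∑ i ∈ Finset.range (t-1), |φ (X i ω)| := Finset.abs_sum_le_sum_abs _ _
          _ ≤ ∑ i ∈ Finset.range (t-1), C := Finset.sum_le_sum fun i _ => hφb _
          _ = ((t-1 : ℕ) : ℝ) * C := by rw [Finset.sum_const, Finset.card_range, nsmul_eq_mul]
      have hcast : ((t - 1 : ℕ) : ℝ) = (t : ℝ) - 1 := by
        rw [Nat.cast_sub (by omega)]; norm_num
      have hxpos : (0:ℝ) < (t : ℝ) - 1 := by
        have : (2:ℝ) ≤ (t:ℝ) := by exact_mod_cast h2
        linarith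
      have : |G t ω| ≤ (1 / ((t:ℝ) - 1)) * (((t:ℝ) - 1) * C) := by
        rw [hGdef, abs_mul, abs_of_pos (by positivity : (0:ℝ) < 1 / ((t:ℝ)-1))]
        apply mul_le_mul_of_nonneg_left _ (by positivity)
        rw [← hcast]
        exact hsum
      calc |G t ω| ≤ (1 / ((t:ℝ) - 1)) * (((t:ℝ) - 1) * C) := this
        _ = C := by field_simp
        _ ≤ max C 0 := le_max_left _ _
  have hgm : Measurable (fun ω => G (T ω) ω) := by
    intro s hs
    have : (fun ω => G (T ω) ω) ⁻¹' s = ⋃ t, ({ω | T ω = t} ∩ (G t) ⁻¹' s) := by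
      ext ω
      simp only [Set.mem_preimage, Set.mem_iUnion, Set.mem_inter_iff, Set.mem_setOf_eq]
      constructor
      · intro h
        exact ⟨T ω, rfl, h⟩
      · rintro ⟨t, rfl, h⟩
        exact h
    rw [this]
    exact MeasurableSet.iUnion fun t => (hTms t).inter ((hGm t) hs)
  have hgint : Integrable (fun ω => G (T ω) ω) μ :=
    aux_integrable_bdd μ hgm.aestronglyMeasurable (fun ω => hGbd (T ω) ω)
  -- the partition
  have hcover : (⋃ t, {ω | T ω = t}) = Set.univ :=
    Set.eq_univ_of_forall fun ω => Set.mem_iUnion.2 ⟨T ω, rfl⟩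
  have hdisj : Pairwise (Function.onFun Disjoint (fun t => {ω | T ω = t})) := by
    intro s t hst
    rw [Function.onFun, Set.disjoint_left]
    rintro ω (h1 : T ω = s) (h2 : T ω = t)
    exact hst (h1 ▸ h2 ▸ rfl)
  have hHasSum1 : HasSum (fun t => ∫ ω in {ω | T ω = t}, G (T ω) ω ∂μ)
      (∫ ω, G (T ω) ω ∂μ) := by
    have h := MeasureTheory.hasSum_integral_iUnion (μ := μ) hTms hdisj
      (by rw [hcover]; exact hgint.integrableOn)
    rw [hcover, setIntegral_univ] at h
    exact h
  set c : ℕ → ℝ := fun t => if t < N then 0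
    else a * (p^(N-1) * (((t-2).choose (N-2) : ℝ) * q^(t-N)))
       + b * (p^N * (((t-2).choose (N-1) : ℝ) * q^(t-1-N))) with hc
  have hterm : ∀ t, ∫ ω in {ω | T ω = t}, G (T ω) ω ∂μ = c t := by
    intro t
    have hcongr : ∫ ω in {ω | T ω = t}, G (T ω) ω ∂μ = ∫ ω in {ω | T ω = t}, G t ω ∂μ :=
      setIntegral_congr_fun (hTms t) (fun ω (hω : T ω = t) => by rw [hω])
    rcases Nat.lt_or_ge t N with hlt | hge
    · rcases Nat.eq_zero_or_pos t with rfl | ht1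
      · have hG0 : (fun ω => G 0 ω) = fun _ => (0:ℝ) := funext fun ω => by
          simp [hGdef]
        rw [hcongr, hG0, integral_zero]
        simp only [hc]
        rw [if_pos (by omega)]
      · have hempty : {ω | T ω = t} = ∅ := by
          rw [hTset t ht1]
          apply Set.eq_empty_iff_forall_notMem.2
          rintro ω ⟨h1, h2⟩
          have hstep := aux_cnt_succ B (fun j => X j ω) (t-1)
          rw [show t - 1 + 1 = t by omega, if_pos h2] at hstep
          have hle := aux_cnt_le B (fun j => X j ω) t
          omega
        rw [hcongr, hempty, Measure.restrict_empty, integral_zero_measure]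
        simp only [hc]
        rw [if_pos (by omega)]
    · rw [hcongr, hTset t (by omega)]
      have hint : ∀ i : ℕ, Integrable (fun ω => φ (X i ω))
          (μ.restrict {ω | ((Finset.range (t-1)).filter (fun j => X j ω ∈ B)).card = N - 1
            ∧ X (t-1) ω ∈ B}) := fun i =>
        (aux_integrable_bdd μ ((hφm.comp (hXm i)).aestronglyMeasurable)
          (fun ω => hφb _)).restrict
      have hGt : (fun ω => G t ω)
          = fun ω => (1 / ((t : ℝ) - 1)) * ∑ i ∈ Finset.range (t - 1), φ (X i ω) := rfl
      rw [hGt, integral_const_mul, integral_finset_sum _ (fun i _ => hint i)]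
      have hkey : ∀ i ∈ Finset.range (t-1),
          (∫ ω in {ω | ((Finset.range (t-1)).filter (fun j => X j ω ∈ B)).card = N - 1
            ∧ X (t-1) ω ∈ B}, φ (X i ω) ∂μ)
          = a * (p^(N-1) * (((t-2).choose (N-2) : ℝ) * q^(t-N)))
            + b * (p^N * (((t-2).choose (N-1) : ℝ) * q^(t-1-N))) := fun i hi =>
        aux_main μ ν hXm hindep hlaw B hB φ hφm C hφb N t i hN hge (Finset.mem_range.1 hi)
      rw [Finset.sum_congr rfl hkey, Finset.sum_const, Finset.card_range, nsmul_eq_mul]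
      have hcast : ((t - 1 : ℕ) : ℝ) = (t : ℝ) - 1 := by
        rw [Nat.cast_sub (by omega)]; norm_num
      have hx : ((t:ℝ) - 1) ≠ 0 := by
        have : (2:ℝ) ≤ (t:ℝ) := by exact_mod_cast (show 2 ≤ t by omega)
        intro hcon; linarith
      rw [hcast, one_div, inv_mul_cancel_left₀ hx]
      simp only [hc]
      rw [if_neg (by omega)]
  have hHasSum1' : HasSum c (∫ ω, G (T ω) ω ∂μ) := by
    have he : (fun t => ∫ ω in {ω | T ω = t}, G (T ω) ω ∂μ) = c := funext hterm
    rw [← he]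
    exact hHasSum1
  -- the negative binomial series
  have hnq : ‖q‖ < 1 := by rw [Real.norm_eq_abs, abs_of_nonneg hq0]; exact hq1
  have h1q : 1 - q = p := by rw [hq]; ring
  have hppow : ∀ k : ℕ, (p:ℝ)^k ≠ 0 := fun k => pow_ne_zero k (ne_of_gt hppos)
  set d1 : ℕ → ℝ := fun t => if t < N then 0
    else a * (p^(N-1) * (((t-2).choose (N-2) : ℝ) * q^(t-N))) with hd1
  set d2 : ℕ → ℝ := fun t => if t < N then 0
    else b * (p^N * (((t-2).choose (N-1) : ℝ) * q^(t-1-N))) with hd2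
  have hd1sum : HasSum d1 a := by
    have hser := (hasSum_choose_mul_geometric_of_norm_lt_one (N-2) hnq).mul_left (a * p^(N-1))
    have hshift : (fun n => d1 (n + N)) = fun n =>
        (a * p^(N-1)) * (((n + (N-2)).choose (N-2) : ℝ) * q ^ n) := by
      funext n
      simp only [hd1]
      rw [if_neg (by omega), show n + N - N = n by omega, show n + N - 2 = n + (N-2) by omega]
      ring
    have hval : (a * p^(N-1)) * (1 / (1-q)^((N-2)+1)) = a := by
      rw [h1q, show (N-2)+1 = N-1 by omega]
      field_simp
    have h2 : HasSum (fun n => d1 (n + N)) a := by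
      rw [hshift]
      have h' := hser
      rw [hval] at h'
      exact h'
    have h3 := (hasSum_nat_add_iff (f := d1) N).1 h2
    have hz : ∑ i ∈ Finset.range N, d1 i = 0 :=
      Finset.sum_eq_zero fun i hi => by
        simp only [hd1]; rw [if_pos (Finset.mem_range.1 hi)]
    rwa [hz, add_zero] at h3
  have hd2sum : HasSum d2 b := by
    have hser := (hasSum_choose_mul_geometric_of_norm_lt_one (N-1) hnq).mul_left (b * p^N)
    have hshift : (fun n => d2 (n + (N+1))) = fun n =>
        (b * p^N) * (((n + (N-1)).choose (N-1) : ℝ) * q ^ n) := by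
      funext n
      simp only [hd2]
      rw [if_neg (by omega), show n + (N+1) - 2 = n + (N-1) by omega,
        show n + (N+1) - 1 - N = n by omega]
      ring
    have hval : (b * p^N) * (1 / (1-q)^((N-1)+1)) = b := by
      rw [h1q, show (N-1)+1 = N by omega]
      field_simp
    have h2 : HasSum (fun n => d2 (n + (N+1))) b := by
      rw [hshift]
      have h' := hser
      rw [hval] at h'
      exact h'
    have h3 := (hasSum_nat_add_iff (f := d2) (N+1)).1 h2
    have hz : ∑ i ∈ Finset.range (N+1), d2 i = 0 := by
      apply Finset.sum_eq_zero
      intro i hi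
      simp only [hd2]
      rcases Nat.lt_or_ge i N with h | h
      · rw [if_pos h]
      · have hiN : i = N := by
          have := Finset.mem_range.1 hi
          omega
        rw [if_neg (by omega), hiN, Nat.choose_eq_zero_of_lt (by omega)]
        norm_num
    rwa [hz, add_zero] at h3
  have hcd : c = fun t => d1 t + d2 t := by
    funext t
    simp only [hc, hd1, hd2]
    split_ifs with h
    · norm_num
    · rfl
  have hHasSum2 : HasSum c (a + b) := by
    rw [hcd]
    exact hd1sum.add hd2sum
  have hfinal : ∫ ω, G (T ω) ω ∂μ = a + b := hHasSum1'.unique hHasSum2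
  calc ∫ ω, (1 / ((T ω : ℝ) - 1)) * ∑ i ∈ Finset.range (T ω - 1), φ (X i ω) ∂μ
      = ∫ ω, G (T ω) ω ∂μ := rfl
    _ = a + b := hfinal
    _ = ∫ x, φ x ∂ν := hab.symm
end

section
/- With the same setup (ν(B) ∧ ν(B^c) ≥ c > 0, N ≥ 2, T negative binomial with parameters N and ν(B)): for every p ∈ [1,4] there exists C_p < ∞ depending only on p and c such that E[ | ((N-1)/(T-1))·ν(1_B φ)/ν(B) + ((T-N)/(T-1))·ν(1_{B^c} φ)/ν(B^c) − ν(φ) |^p ]^{1/p} ≤ C_p ‖φ‖_∞ / √N for all bounded measurable φ. -/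
open MeasureTheory Finset

/-- Binomial/rising-factorial identity. -/
lemma aux_choose_prod (n m k : ℕ) :
    ((n+m).choose m) * ∏ i ∈ Finset.range k, (n+m+1+i)
      = (∏ i ∈ Finset.range k, (m+1+i)) * ((n+m+k).choose (m+k)) := by
  induction k with
  | zero => simp
  | succ k ih =>
    rw [Finset.prod_range_succ, ← mul_assoc, ih, Finset.prod_range_succ]
    have h := Nat.add_one_mul_choose_eq (n+m+k) (m+k)
    have h' : (n+m+k+1) * ((n+m+k).choose (m+k)) = ((n+m+k+1).choose (m+k+1)) * (m+k+1) := by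
      simpa [Nat.succ_eq_add_one] using h
    have e3 : n+m+(k+1) = n+m+k+1 := by ring
    have e4 : m+(k+1) = m+k+1 := by ring
    rw [e3, e4]
    calc (∏ i ∈ Finset.range k, (m+1+i)) * ((n+m+k).choose (m+k)) * (n+m+1+k)
        = (∏ i ∈ Finset.range k, (m+1+i)) * ((n+m+k+1) * ((n+m+k).choose (m+k))) := by ring
      _ = (∏ i ∈ Finset.range k, (m+1+i)) * (((n+m+k+1).choose (m+k+1)) * (m+k+1)) := by rw [h']
      _ = (∏ i ∈ Finset.range k, (m+1+i)) * (m+1+k) * ((n+m+k+1).choose (m+k+1)) := by ring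

/-- Rising factorial moments of the negative binomial distribution. -/
lemma aux_moment (q : ℝ) (hq0 : 0 < q) (hq1 : q < 1) (N k : ℕ) (hN : 1 ≤ N) :
    HasSum (fun t : ℕ => if N ≤ t then
        ((t-1).choose (N-1) : ℝ) * q^N * (1-q)^(t-N) * (∏ i ∈ Finset.range k, ((t:ℝ)+i))
      else 0)
      ((∏ i ∈ Finset.range k, ((N:ℝ)+i)) / q^k) := by
  obtain ⟨m, rfl⟩ : ∃ m, N = m + 1 := ⟨N - 1, by omega⟩
  set f : ℕ → ℝ := fun t => if m+1 ≤ t then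
      ((t-1).choose (m+1-1) : ℝ) * q^(m+1) * (1-q)^(t-(m+1)) * (∏ i ∈ Finset.range k, ((t:ℝ)+i))
    else 0 with hf
  have hr : ‖1 - q‖ < 1 := by
    rw [Real.norm_eq_abs, abs_lt]; constructor <;> linarith
  have base := hasSum_choose_mul_geometric_of_norm_lt_one (𝕜 := ℝ) (m+k) hr
  -- base : HasSum (fun n => ((n + (m+k)).choose (m+k) : ℝ) * (1-q)^n) (1 / (1 - (1-q))^(m+k+1))
  have c0 : ℝ := 0
  have hshift : HasSum (fun n : ℕ => f (n + (m+1)))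
      ((∏ i ∈ Finset.range k, ((m:ℝ)+1+i)) / q^k) := by
    have hmain := base.mul_left ((∏ i ∈ Finset.range k, ((m:ℝ)+1+i)) * q^(m+1))
    convert hmain using 1
    · rfl
    · funext n
      have h1 : m + 1 ≤ n + (m+1) := by omega
      have h2 : n + (m+1) - 1 = n + m := by omega
      have h3 : n + (m+1) - (m+1) = n := by omega
      simp only [hf, if_pos h1, h2, h3, Nat.add_sub_cancel]
      have key : ((n+m).choose m : ℝ) * (∏ i ∈ Finset.range k, (((n:ℝ) + (m+1)) + i))
          = (∏ i ∈ Finset.range k, ((m:ℝ)+1+i)) * ((n+(m+k)).choose (m+k) : ℝ) := by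
        have := aux_choose_prod n m k
        have hcast := congrArg (fun x : ℕ => (x : ℝ)) this
        push_cast at hcast
        convert hcast using 2
        · apply Finset.prod_congr rfl; intro i _; push_cast; ring
        · norm_cast
          congr 1
          omega
      push_cast
      calc ((n+m).choose m : ℝ) * q^(m+1) * (1-q)^n * (∏ i ∈ Finset.range k, (((n:ℝ)+(m+1)) + i))
          = (((n+m).choose m : ℝ) * (∏ i ∈ Finset.range k, (((n:ℝ) + (m+1)) + i))) * (q^(m+1) * (1-q)^n) := by ring
        _ = ((∏ i ∈ Finset.range k, ((m:ℝ)+1+i)) * ((n+(m+k)).choose (m+k) : ℝ)) * (q^(m+1) * (1-q)^n) := by rw [key]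
        _ = (∏ i ∈ Finset.range k, ((m:ℝ)+1+i)) * q^(m+1) * (((n+(m+k)).choose (m+k) : ℝ) * (1-q)^n) := by ring
    · have hq1q : 1 - (1-q) = q := by ring
      rw [hq1q]
      have hqne : q ≠ 0 := ne_of_gt hq0
      field_simp
      ring
  have := (hasSum_nat_add_iff (f := f) (m+1)).mp hshift
  have hz : ∑ i ∈ Finset.range (m+1), f i = 0 := by
    apply Finset.sum_eq_zero
    intro i hi
    rw [Finset.mem_range] at hi
    simp [hf, Nat.not_le.mpr hi, show ¬ m < i by omega]
  rw [hz, add_zero] at this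
  convert this using 2
  · rfl
  · push_cast <;> ring

/-- Fourth moment of `q·T − N` for the negative binomial distribution. -/
lemma aux_fourth (q : ℝ) (hq0 : 0 < q) (hq1 : q < 1) (N : ℕ) (hN : 1 ≤ N) :
    HasSum (fun t : ℕ => if N ≤ t then
        ((t-1).choose (N-1) : ℝ) * q^N * (1-q)^(t-N) * (q*(t:ℝ) - N)^4
      else 0)
      (3*(N:ℝ)^2*(1-q)^2 + (N:ℝ)*(6 - 12*q + 7*q^2 - q^3)) := by
  have h0 := aux_moment q hq0 hq1 N 0 hN
  have h1 := aux_moment q hq0 hq1 N 1 hN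
  have h2 := aux_moment q hq0 hq1 N 2 hN
  have h3 := aux_moment q hq0 hq1 N 3 hN
  have h4 := aux_moment q hq0 hq1 N 4 hN
  set n : ℝ := (N:ℝ) with hn
  set e0 : ℝ := n^4 with he0
  set e1 : ℝ := -4*q*n^3 - 6*q^2*n^2 - 4*q^3*n - q^4 with he1
  set e2 : ℝ := 6*q^2*n^2 + 12*q^3*n + 7*q^4 with he2
  set e3 : ℝ := -4*q^3*n - 6*q^4 with he3
  set e4 : ℝ := q^4 with he4
  have hcomb := ((((h0.mul_left e0).add (h1.mul_left e1)).add (h2.mul_left e2)).add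
      (h3.mul_left e3)).add (h4.mul_left e4)
  convert hcomb using 1
  · rfl
  · funext t
    by_cases ht : N ≤ t
    · simp only [if_pos ht, Finset.prod_range_succ, Finset.prod_range_zero]
      push_cast
      ring
    · simp [ht]
  · simp only [Finset.prod_range_succ, Finset.prod_range_zero]
    have hqne : q ≠ 0 := ne_of_gt hq0
    simp only [he0, he1, he2, he3, he4]
    field_simp
    ring

set_option maxHeartbeats 2000000 in
/-- With `ν` a probability measure, `B` with `min(ν B, ν Bᶜ) ≥ c > 0`,
`N ≥ 2`, and `T` negative binomial with parameters `N` and `ν(B)` (i.e.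
`P(T = t) = C(t-1,N-1) ν(B)^N (1-ν(B))^(t-N)` for `t ≥ N`): for every `p ∈ [1,4]`
there exists `C_p` depending only on `p` and `c` such that
`E[ |((N-1)/(T-1))·ν(1_B φ)/ν(B) + ((T-N)/(T-1))·ν(1_{Bᶜ} φ)/ν(Bᶜ) − ν(φ)|^p ]^(1/p)
  ≤ C_p ‖φ‖_∞ / √N` for all bounded measurable `φ`. -/
theorem alive_conditional_mean_Lp_bound
    {F : Type*} [MeasurableSpace F]
    (c : ℝ) (hc0 : 0 < c) (hc1 : c < 1)
    (p : ℝ) (hp1 : 1 ≤ p) (hp4 : p ≤ 4) :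
    ∃ Cp : ℝ, 0 < Cp ∧
      ∀ (ν : Measure F), IsProbabilityMeasure ν →
      ∀ (B : Set F), MeasurableSet B →
        c ≤ min (ν B).toReal (ν Bᶜ).toReal →
      ∀ (N : ℕ), 2 ≤ N →
      ∀ (φ : F → ℝ), Measurable φ →
      ∀ (M : ℝ), (∀ x, |φ x| ≤ M) →
        (∑' t : ℕ, if N ≤ t then
            (((t - 1).choose (N - 1) : ℝ) * (ν B).toReal ^ N
                * (1 - (ν B).toReal) ^ (t - N)) *
              |((N : ℝ) - 1) / ((t : ℝ) - 1) * ((∫ x in B, φ x ∂ν) / (ν B).toReal)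
                + ((t : ℝ) - (N : ℝ)) / ((t : ℝ) - 1)
                    * ((∫ x in Bᶜ, φ x ∂ν) / (ν Bᶜ).toReal)
                - ∫ x, φ x ∂ν| ^ p
          else 0) ^ (1 / p)
        ≤ Cp * M / Real.sqrt (N : ℝ) := by
  refine ⟨3586, by norm_num, ?_⟩
  intro ν hν B hB hcB N hN φ hφ M hM
  have hp0 : 0 < p := lt_of_lt_of_le one_pos hp1
  set q : ℝ := (ν B).toReal with hqdef
  have hqc : c ≤ q := le_trans (le_min_iff.mp hcB).1 le_rfl
  have hq0 : 0 < q := lt_of_lt_of_le hc0 hqc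
  have hcompl : (ν Bᶜ).toReal = 1 - q := by
    rw [prob_compl_eq_one_sub hB, ENNReal.toReal_sub_of_le prob_le_one ENNReal.one_ne_top,
      ENNReal.toReal_one]
  have hq1 : q < 1 := by
    have h2 : c ≤ (ν Bᶜ).toReal := (le_min_iff.mp hcB).2
    rw [hcompl] at h2; linarith
  rw [hcompl]
  -- nonnegativity of M
  have hFne : Nonempty F := by
    by_contra h
    rw [not_nonempty_iff] at h
    have h1 : ν Set.univ = 1 := measure_univ
    rw [Set.univ_eq_empty_iff.mpr h] at h1
    simp at h1
  obtain ⟨x0⟩ := hFne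
  have hM0 : 0 ≤ M := le_trans (abs_nonneg _) (hM x0)
  -- integrability
  have hInt : Integrable φ ν := by
    refine Integrable.mono' (integrable_const M) hφ.aestronglyMeasurable ?_
    exact Filter.Eventually.of_forall (fun x => by simpa using hM x)
  set a : ℝ := (∫ x in B, φ x ∂ν) / q with hadef
  set b : ℝ := (∫ x in Bᶜ, φ x ∂ν) / (1 - q) with hbdef
  have haM : |a| ≤ M := by
    have h1 : ‖∫ x in B, φ x ∂ν‖ ≤ M * (ν B).toReal :=
      norm_setIntegral_le_of_norm_le_const (measure_lt_top ν B)
        (fun x _ => by simpa using hM x)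
    rw [Real.norm_eq_abs] at h1
    rw [hadef, abs_div, abs_of_pos hq0, div_le_iff₀ hq0]
    exact h1
  have hbM : |b| ≤ M := by
    have h1 : ‖∫ x in Bᶜ, φ x ∂ν‖ ≤ M * (ν Bᶜ).toReal :=
      norm_setIntegral_le_of_norm_le_const (measure_lt_top ν Bᶜ)
        (fun x _ => by simpa using hM x)
    rw [Real.norm_eq_abs, hcompl] at h1
    rw [hbdef, abs_div, abs_of_pos (by linarith : (0:ℝ) < 1 - q), div_le_iff₀ (by linarith : (0:ℝ) < 1 - q)]
    exact h1
  have hab : |a - b| ≤ 2 * M := by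
    calc |a - b| ≤ |a| + |b| := abs_sub _ _
      _ ≤ 2 * M := by linarith
  have hIint : ∫ x, φ x ∂ν = q * a + (1 - q) * b := by
    have ha' : q * a = ∫ x in B, φ x ∂ν := by
      rw [hadef, mul_div_cancel₀ _ (ne_of_gt hq0)]
    have hb' : (1 - q) * b = ∫ x in Bᶜ, φ x ∂ν := by
      rw [hbdef, mul_div_cancel₀ _ (by linarith : (1:ℝ) - q ≠ 0)]
    rw [ha', hb', integral_add_compl hB hInt]
  clear_value q a b
  -- abbreviations
  set w : ℕ → ℝ := fun t => ((t-1).choose (N-1) : ℝ) * q^N * (1-q)^(t-N) with hwdef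
  have hw0 : ∀ t, 0 ≤ w t := by
    intro t
    apply mul_nonneg (mul_nonneg (Nat.cast_nonneg _) (by positivity))
    have : (0:ℝ) ≤ 1 - q := by linarith
    positivity
  set D : ℕ → ℝ := fun t => ((N:ℝ) - 1) / ((t:ℝ) - 1) - q with hDdef
  have hDval : ∀ t : ℕ, D t = ((N:ℝ) - 1) / ((t:ℝ) - 1) - q := fun _ => rfl
  have hpow4 : ∀ x : ℝ, 0 ≤ x^4 := fun x => by positivity
  -- series facts
  have h0 : HasSum (fun t : ℕ => if N ≤ t then w t else 0) 1 := by
    have := aux_moment q hq0 hq1 N 0 (by omega)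
    simpa using this
  set A : ℝ := 3*(N:ℝ)^2*(1-q)^2 + (N:ℝ)*(6 - 12*q + 7*q^2 - q^3) with hAdef
  have h4 : HasSum (fun t : ℕ => if N ≤ t then w t * (q*(t:ℝ) - N)^4 else 0) A :=
    aux_fourth q hq0 hq1 N (by omega)
  have hN2 : (2:ℝ) ≤ (N:ℝ) := by exact_mod_cast hN
  -- replace the goal's explicit weight by `w`
  show (∑' t : ℕ, if N ≤ t then
      w t * |((N:ℝ) - 1) / ((t:ℝ) - 1) * a + ((t:ℝ) - (N:ℝ)) / ((t:ℝ) - 1) * b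
        - ∫ x, φ x ∂ν| ^ p else 0) ^ (1/p) ≤ 3586 * M / Real.sqrt (N:ℝ)
  clear_value w D A
  have hA6 : A ≤ 6 * (N:ℝ)^2 := by
    rw [hAdef]
    have t1 : 3*(N:ℝ)^2*(1-q)^2 ≤ 3*(N:ℝ)^2 := by
      nlinarith [mul_nonneg (mul_nonneg (by positivity : (0:ℝ) ≤ 3*(N:ℝ)^2) hq0.le)
        (by linarith : (0:ℝ) ≤ 2 - q)]
    have t2 : 6 - 12*q + 7*q^2 - q^3 ≤ 6 := by
      nlinarith [mul_nonneg hq0.le (by nlinarith : (0:ℝ) ≤ 12 - 7*q + q^2)]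
    have t3 : (N:ℝ)*(6 - 12*q + 7*q^2 - q^3) ≤ 6*(N:ℝ) := by
      nlinarith [mul_le_mul_of_nonneg_left t2 (by linarith : (0:ℝ) ≤ (N:ℝ))]
    have t4 : 0 ≤ (N:ℝ) * ((N:ℝ) - 2) := mul_nonneg (by linarith) (by linarith)
    linarith [t1, t3, t4]
  -- lambda
  set lam : ℝ := (Real.sqrt (N:ℝ))⁻¹ with hlamdef
  have hsN : 0 < Real.sqrt (N:ℝ) := Real.sqrt_pos.mpr (by linarith)
  have hlam0 : 0 < lam := by rw [hlamdef]; positivity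
  have hs2 : (Real.sqrt (N:ℝ))^2 = (N:ℝ) := Real.sq_sqrt (by linarith)
  have hlam4 : lam^4 * (N:ℝ)^2 = 1 := by
    have h1 : (Real.sqrt (N:ℝ))^4 = (N:ℝ)^2 := by
      rw [show (Real.sqrt (N:ℝ))^4 = ((Real.sqrt (N:ℝ))^2)^2 by ring, hs2]
    rw [hlamdef, inv_pow, h1]
    field_simp
  clear_value lam
  -- pointwise D^4 bound
  have hD4 : ∀ t : ℕ, N ≤ t → (D t)^4 ≤ (16 / ((N:ℝ)-1)^4) * ((q*(t:ℝ) - N)^4 + 1) := by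
    intro t ht
    have htN : (N:ℝ) ≤ (t:ℝ) := by exact_mod_cast ht
    have ht1 : (0:ℝ) < (t:ℝ) - 1 := by linarith
    have hN1 : (1:ℝ) ≤ (N:ℝ) - 1 := by linarith
    have hnum : |((N:ℝ)-1) - q*((t:ℝ)-1)| ≤ |q*(t:ℝ) - N| + 1 := by
      have he : ((N:ℝ)-1) - q*((t:ℝ)-1) = -(q*(t:ℝ) - N) + (q - 1) := by ring
      rw [he]
      refine (abs_add_le _ _).trans ?_
      rw [abs_neg]
      have : |q - 1| ≤ 1 := by rw [abs_le]; constructor <;> linarith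
      linarith
    have hDform : D t = (((N:ℝ)-1) - q*((t:ℝ)-1)) / ((t:ℝ)-1) := by
      rw [hDval]
      field_simp
    have hDabs : |D t| ≤ (|q*(t:ℝ) - N| + 1) / ((N:ℝ)-1) := by
      rw [hDform, abs_div, abs_of_pos ht1]
      exact div_le_div₀ (by positivity) hnum (by linarith) (by linarith)
    have habs4 : (D t)^4 = |D t|^4 := by
      rw [← abs_pow, abs_of_nonneg (hpow4 _)]
    have hu4 : |q*(t:ℝ) - N|^4 = (q*(t:ℝ) - N)^4 := by
      rw [← abs_pow, abs_of_nonneg (hpow4 _)]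
    have h16 : (|q*(t:ℝ) - N| + 1)^4 ≤ 16 * ((q*(t:ℝ) - N)^4 + 1) := by
      have hv : 0 ≤ |q*(t:ℝ) - N| := abs_nonneg _
      rcases le_or_gt (|q*(t:ℝ) - N|) 1 with hcase | hcase
      · have h1 : (|q*(t:ℝ) - N| + 1)^4 ≤ (2:ℝ)^4 :=
          pow_le_pow_left₀ (by linarith) (by linarith) 4
        have h2 : (0:ℝ) ≤ (q*(t:ℝ) - N)^4 := hpow4 _
        norm_num at h1
        linarith
      · have h1 : (|q*(t:ℝ) - N| + 1)^4 ≤ (2 * |q*(t:ℝ) - N|)^4 :=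
          pow_le_pow_left₀ (by linarith) (by linarith) 4
        have h2 : (2 * |q*(t:ℝ) - N|)^4 = 16 * |q*(t:ℝ) - N|^4 := by ring
        rw [h2, hu4] at h1
        have h3 : (0:ℝ) ≤ (q*(t:ℝ) - N)^4 := hpow4 _
        linarith
    calc (D t)^4 = |D t|^4 := habs4
      _ ≤ ((|q*(t:ℝ) - N| + 1) / ((N:ℝ)-1))^4 := by
          apply pow_le_pow_left₀ (abs_nonneg _) hDabs
      _ = (|q*(t:ℝ) - N| + 1)^4 / ((N:ℝ)-1)^4 := by rw [div_pow]
      _ ≤ (16 * ((q*(t:ℝ) - N)^4 + 1)) / ((N:ℝ)-1)^4 := by gcongr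
      _ = (16 / ((N:ℝ)-1)^4) * ((q*(t:ℝ) - N)^4 + 1) := by ring
  -- expression rewriting
  have hE : ∀ t : ℕ, N ≤ t →
      |((N:ℝ) - 1) / ((t:ℝ) - 1) * a + ((t:ℝ) - (N:ℝ)) / ((t:ℝ) - 1) * b - ∫ x, φ x ∂ν|
        = |a - b| * |D t| := by
    intro t ht
    have htN : (N:ℝ) ≤ (t:ℝ) := by exact_mod_cast ht
    have ht1 : (0:ℝ) < (t:ℝ) - 1 := by linarith
    have he : ((N:ℝ) - 1) / ((t:ℝ) - 1) * a + ((t:ℝ) - (N:ℝ)) / ((t:ℝ) - 1) * b - ∫ x, φ x ∂ν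
        = (a - b) * D t := by
      rw [hIint, hDdef]
      field_simp
      ring
    rw [he, abs_mul]
  -- rpow pointwise bound for |D t|
  have hlamp : (0:ℝ) < lam ^ p := Real.rpow_pos_of_pos hlam0 p
  have hDp : ∀ t : ℕ, N ≤ t →
      |D t| ^ p ≤ lam ^ p + lam ^ p * ((N:ℝ)^2 * (D t)^4) := by
    intro t ht
    have hD4nn : (0:ℝ) ≤ (D t)^4 := by positivity
    rcases le_or_gt (|D t|) lam with h | h
    · have h1 : |D t| ^ p ≤ lam ^ p := Real.rpow_le_rpow (abs_nonneg _) h hp0.le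
      have h2 : (0:ℝ) ≤ lam ^ p * ((N:ℝ)^2 * (D t)^4) := by positivity
      linarith
    · have hd0 : 0 < |D t| := lt_trans hlam0 h
      have h1 : |D t| ^ p = lam ^ p * (|D t| / lam) ^ p := by
        rw [← Real.mul_rpow hlam0.le (by positivity), mul_div_cancel₀ _ (ne_of_gt hlam0)]
      have h2 : (|D t| / lam) ^ p ≤ (|D t| / lam) ^ (4:ℝ) :=
        Real.rpow_le_rpow_of_exponent_le (by rw [le_div_iff₀ hlam0]; linarith) hp4
      have h3 : (|D t| / lam) ^ (4:ℝ) = (|D t| / lam) ^ (4:ℕ) := by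
        rw [← Real.rpow_natCast]; norm_num
      have h4' : lam ^ p * (|D t| / lam) ^ (4:ℕ) = lam ^ p * ((N:ℝ)^2 * (D t)^4) := by
        have habs : |D t| ^ (4:ℕ) = (D t)^4 := by
          rw [← abs_pow, abs_of_nonneg hD4nn]
        have hmul1 : (N:ℝ)^2 * lam^(4:ℕ) = 1 := by rw [mul_comm]; exact hlam4
        have hinv : (N:ℝ)^2 = (lam^(4:ℕ))⁻¹ := eq_inv_of_mul_eq_one_left hmul1
        have hdiv : (|D t| / lam) ^ (4:ℕ) = (N:ℝ)^2 * (D t)^4 := by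
          rw [div_pow, habs, div_eq_mul_inv, ← hinv]
          ring
          
        rw [hdiv]
      calc |D t| ^ p = lam ^ p * (|D t| / lam) ^ p := h1
        _ ≤ lam ^ p * (|D t| / lam) ^ (4:ℝ) :=
            mul_le_mul_of_nonneg_left h2 hlamp.le
        _ = lam ^ p * (|D t| / lam) ^ (4:ℕ) := by rw [h3]
        _ = lam ^ p + lam ^ p * ((N:ℝ)^2 * (D t)^4) - lam ^ p := by rw [h4']; ring
        _ ≤ lam ^ p + lam ^ p * ((N:ℝ)^2 * (D t)^4) := by linarith
  -- constants
  set R : ℝ := 16 * (N:ℝ)^2 / ((N:ℝ)-1)^4 with hRdef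
  have hN1 : (1:ℝ) ≤ (N:ℝ) - 1 := by linarith
  have hR0 : 0 ≤ R := by rw [hRdef]; positivity
  clear_value R
  set bet : ℝ := lam ^ p * R with hbetdef
  set gam : ℝ := lam ^ p + bet with hgamdef
  have hbet0 : 0 ≤ bet := by rw [hbetdef]; positivity
  clear_value bet gam
  have h2M0 : (0:ℝ) ≤ 2 * M := by linarith
  have h2Mp : (0:ℝ) ≤ (2*M) ^ p := Real.rpow_nonneg h2M0 p
  -- majorant series
  have hmaj : HasSum (fun t : ℕ => (2*M)^p *
      (gam * (if N ≤ t then w t else 0) + bet * (if N ≤ t then w t * (q*(t:ℝ) - N)^4 else 0)))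
      ((2*M)^p * (gam * 1 + bet * A)) :=
    ((h0.mul_left gam).add (h4.mul_left bet)).mul_left _
  -- pointwise comparison
  have hpt : ∀ t : ℕ,
      (if N ≤ t then
          w t * |((N:ℝ) - 1) / ((t:ℝ) - 1) * a + ((t:ℝ) - (N:ℝ)) / ((t:ℝ) - 1) * b
            - ∫ x, φ x ∂ν| ^ p
        else 0)
      ≤ (2*M)^p *
          (gam * (if N ≤ t then w t else 0) + bet * (if N ≤ t then w t * (q*(t:ℝ) - N)^4 else 0)) := by
    intro t
    by_cases ht : N ≤ t
    · simp only [if_pos ht]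
      have e1 := hE t ht
      rw [e1]
      have step1 : (|a - b| * |D t|) ^ p ≤ (2*M) ^ p * |D t| ^ p := by
        have h1 : (|a - b| * |D t|) ^ p ≤ (2*M * |D t|) ^ p :=
          Real.rpow_le_rpow (by positivity)
            (mul_le_mul_of_nonneg_right hab (abs_nonneg _)) hp0.le
        calc (|a - b| * |D t|) ^ p ≤ (2*M * |D t|) ^ p := h1
          _ = (2*M) ^ p * |D t| ^ p := Real.mul_rpow h2M0 (abs_nonneg _)
      have step2 : |D t| ^ p ≤ gam + bet * (q*(t:ℝ) - N)^4 := by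
        have hd := hDp t ht
        have hd4 := hD4 t ht
        have h5 : lam ^ p * ((N:ℝ)^2 * (D t)^4)
            ≤ lam ^ p * ((N:ℝ)^2 * ((16 / ((N:ℝ)-1)^4) * ((q*(t:ℝ) - N)^4 + 1))) := by
          apply mul_le_mul_of_nonneg_left _ hlamp.le
          exact mul_le_mul_of_nonneg_left hd4 (by positivity)
        have h6 : lam ^ p * ((N:ℝ)^2 * ((16 / ((N:ℝ)-1)^4) * ((q*(t:ℝ) - N)^4 + 1)))
            = bet * (q*(t:ℝ) - N)^4 + bet := by
          rw [hbetdef, hRdef]; ring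
        rw [hgamdef]
        linarith
      calc w t * (|a - b| * |D t|) ^ p ≤ w t * ((2*M)^p * |D t| ^ p) :=
            mul_le_mul_of_nonneg_left step1 (hw0 t)
        _ ≤ w t * ((2*M)^p * (gam + bet * (q*(t:ℝ) - N)^4)) := by
            apply mul_le_mul_of_nonneg_left _ (hw0 t)
            exact mul_le_mul_of_nonneg_left step2 h2Mp
        _ = (2*M)^p * (gam * w t + bet * (w t * (q*(t:ℝ) - N)^4)) := by ring
    · simp [ht]
  -- sum the bound
  have hnn : ∀ t : ℕ, 0 ≤ (if N ≤ t then
      w t * |((N:ℝ) - 1) / ((t:ℝ) - 1) * a + ((t:ℝ) - (N:ℝ)) / ((t:ℝ) - 1) * b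
        - ∫ x, φ x ∂ν| ^ p else 0) := by
    intro t
    by_cases ht : N ≤ t
    · simp only [if_pos ht]
      exact mul_nonneg (hw0 t) (Real.rpow_nonneg (abs_nonneg _) p)
    · simp [ht]
  have hsummable : Summable (fun t : ℕ => if N ≤ t then
      w t * |((N:ℝ) - 1) / ((t:ℝ) - 1) * a + ((t:ℝ) - (N:ℝ)) / ((t:ℝ) - 1) * b
        - ∫ x, φ x ∂ν| ^ p else 0) :=
    Summable.of_nonneg_of_le hnn hpt hmaj.summable
  have hZbound : (∑' t : ℕ, if N ≤ t then
      w t * |((N:ℝ) - 1) / ((t:ℝ) - 1) * a + ((t:ℝ) - (N:ℝ)) / ((t:ℝ) - 1) * b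
        - ∫ x, φ x ∂ν| ^ p else 0)
      ≤ (2*M)^p * (gam * 1 + bet * A) := by
    calc _ ≤ ∑' t : ℕ, (2*M)^p *
        (gam * (if N ≤ t then w t else 0) + bet * (if N ≤ t then w t * (q*(t:ℝ) - N)^4 else 0)) :=
          Summable.tsum_le_tsum hpt hsummable hmaj.summable
      _ = (2*M)^p * (gam * 1 + bet * A) := hmaj.tsum_eq
  -- numeric bound on constants
  have hconst : gam * 1 + bet * A ≤ lam ^ p * 1793 := by
    have hpoly : R * (1 + 6*(N:ℝ)^2) ≤ 1792 := by
      rw [hRdef, div_mul_eq_mul_div, div_le_iff₀ (by positivity : (0:ℝ) < ((N:ℝ)-1)^4)]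
      have hx : (0:ℝ) ≤ (N:ℝ) - 2 := by linarith
      nlinarith [hx, mul_nonneg hx hx, mul_nonneg (mul_nonneg hx hx) hx,
        mul_nonneg (mul_nonneg (mul_nonneg hx hx) hx) hx]
    have hbA : bet * A ≤ bet * (6*(N:ℝ)^2) := mul_le_mul_of_nonneg_left hA6 hbet0
    have h7 : gam * 1 + bet * (6*(N:ℝ)^2) = lam ^ p * (1 + R * (1 + 6*(N:ℝ)^2)) := by
      rw [hgamdef, hbetdef]; ring
    have h8 : lam ^ p * (1 + R * (1 + 6*(N:ℝ)^2)) ≤ lam ^ p * 1793 := by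
      apply mul_le_mul_of_nonneg_left _ hlamp.le
      linarith
    linarith
  -- assemble
  have hWnn : (0:ℝ) ≤ 3586 * M / Real.sqrt (N:ℝ) := by positivity
  have hfinal : (2*M)^p * (gam * 1 + bet * A) ≤ (3586 * M / Real.sqrt (N:ℝ)) ^ p := by
    have h1 : (2*M)^p * (gam * 1 + bet * A) ≤ (2*M)^p * (lam ^ p * 1793) :=
      mul_le_mul_of_nonneg_left hconst h2Mp
    have h2 : (1793:ℝ) ≤ (1793:ℝ) ^ p := by
      calc (1793:ℝ) = (1793:ℝ) ^ (1:ℝ) := (Real.rpow_one _).symm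
        _ ≤ (1793:ℝ) ^ p := Real.rpow_le_rpow_of_exponent_le (by norm_num) hp1
    have h3 : (2*M)^p * (lam ^ p * 1793) ≤ (2*M)^p * (lam ^ p * (1793:ℝ)^p) := by
      apply mul_le_mul_of_nonneg_left _ h2Mp
      exact mul_le_mul_of_nonneg_left h2 hlamp.le
    have h4' : (2*M)^p * (lam ^ p * (1793:ℝ)^p) = (3586 * M / Real.sqrt (N:ℝ)) ^ p := by
      rw [← Real.mul_rpow hlam0.le (by norm_num : (0:ℝ) ≤ 1793),
        ← Real.mul_rpow h2M0 (by positivity)]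
      congr 1
      rw [hlamdef]
      field_simp
      ring
    linarith
  calc (∑' t : ℕ, if N ≤ t then
        w t * |((N:ℝ) - 1) / ((t:ℝ) - 1) * a + ((t:ℝ) - (N:ℝ)) / ((t:ℝ) - 1) * b
          - ∫ x, φ x ∂ν| ^ p else 0) ^ (1/p)
      ≤ ((3586 * M / Real.sqrt (N:ℝ)) ^ p) ^ (1/p) := by
        apply Real.rpow_le_rpow (tsum_nonneg hnn) (le_trans hZbound hfinal) (by positivity)
    _ = 3586 * M / Real.sqrt (N:ℝ) := by
        rw [← Real.rpow_mul hWnn, mul_one_div_cancel hp0.ne', Real.rpow_one]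
end

section
/- Let X^1, X^2, ... be i.i.d. with law ν on a measurable space, B a set with q := ν(B) ∈ (0,1), N ≥ 2, and T = inf{n : Σ_{i≤n} 1_B(X^i) ≥ N}. Conditional on T = t, the positions of the N successes among the first t trials are: trial t is a success, and the remaining N−1 successes are uniformly distributed among the first t−1 trials; moreover, conditional on T and the success/failure pattern, the samples in B are i.i.d. with law ν(· ∩ B)/ν(B) and the samples in B^c are i.i.d. with law ν(· ∩ B^c)/ν(B^c). -/
open MeasureTheory ProbabilityTheory
open scoped Classical

/-- Let `X 0, X 1, ...` be i.i.d. with law `ν`, `B` with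
`q = ν(B) ∈ (0,1)`, `N ≥ 2`, and `T = inf{n : #{i < n : X i ∈ B} ≥ N}`.  Conditional
on `T = t`: trial `t` (index `t-1`) is a success, the remaining `N-1` successes form a
uniformly distributed pattern `S` among the first `t-1` trials, and given the pattern
the samples in `B` are i.i.d. with law `ν(· ∩ B)/ν(B)` while those in `Bᶜ` are i.i.d.
with law `ν(· ∩ Bᶜ)/ν(Bᶜ)`.  This is encoded by the finite-dimensional identity:
for every `t ≥ N`, every pattern `S ⊆ {0,...,t-2}` with `|S| = N-1` and measurable
sets `A i`,
`μ(T = t, pattern = S, X i ∈ A i ∀ i < t)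
  = ν(A (t-1) ∩ B) · ∏_{i<t-1} (ν(A i ∩ B) if i ∈ S else ν(A i ∩ Bᶜ))`. -/
theorem alive_conditional_distribution
    {F : Type*} [MeasurableSpace F] {Ω : Type*} [MeasurableSpace Ω]
    (μ : Measure Ω) [IsProbabilityMeasure μ]
    (ν : Measure F) [IsProbabilityMeasure ν]
    (X : ℕ → Ω → F) (hXm : ∀ i, Measurable (X i))
    (hindep : iIndepFun X μ)
    (hlaw : ∀ i, Measure.map (X i) μ = ν)
    (B : Set F) (hB : MeasurableSet B) (hB0 : 0 < ν B) (hB1 : ν B < 1)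
    (N : ℕ) (hN : 2 ≤ N)
    (T : Ω → ℕ)
    (hT : ∀ ω, T ω =
      sInf {n : ℕ | N ≤ ((Finset.range n).filter (fun i => X i ω ∈ B)).card}) :
    ∀ (t : ℕ), N ≤ t →
    ∀ (S : Finset ℕ), S ⊆ Finset.range (t - 1) → S.card = N - 1 →
    ∀ (A : ℕ → Set F), (∀ i, MeasurableSet (A i)) →
      μ {ω | T ω = t ∧ (∀ i < t - 1, (X i ω ∈ B ↔ i ∈ S)) ∧ ∀ i < t, X i ω ∈ A i}
        = ν (A (t - 1) ∩ B) *
            ∏ i ∈ Finset.range (t - 1),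
              (if i ∈ S then ν (A i ∩ B) else ν (A i ∩ Bᶜ)) := by
  intro t ht S hSsub hScard A hA
  have ht1 : 1 ≤ t := le_trans (by omega) ht
  -- define the per-coordinate sets
  set C : ℕ → Set F := fun i =>
    if i = t - 1 then A (t - 1) ∩ B
    else if i ∈ S then A i ∩ B else A i ∩ Bᶜ with hC
  have hCmeas : ∀ i, MeasurableSet (C i) := by
    intro i
    simp only [hC]
    split_ifs
    · exact (hA _).inter hB
    · exact (hA _).inter hB
    · exact (hA _).inter hB.compl
  -- key: filter over range (t-1) equals S under the pattern
  have hfilter : ∀ ω, (∀ i < t - 1, (X i ω ∈ B ↔ i ∈ S)) →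
      (Finset.range (t - 1)).filter (fun i => X i ω ∈ B) = S := by
    intro ω hpat
    ext i
    simp only [Finset.mem_filter, Finset.mem_range]
    constructor
    · rintro ⟨hi, hiB⟩; exact (hpat i hi).1 hiB
    · intro hiS
      have hi : i < t - 1 := Finset.mem_range.1 (hSsub hiS)
      exact ⟨hi, (hpat i hi).2 hiS⟩
  -- the set equality
  have hset : {ω | T ω = t ∧ (∀ i < t - 1, (X i ω ∈ B ↔ i ∈ S)) ∧ ∀ i < t, X i ω ∈ A i}
      = ⋂ i ∈ Finset.range t, X i ⁻¹' (C i) := by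
    ext ω
    simp only [Set.mem_setOf_eq, Set.mem_iInter, Set.mem_preimage, Finset.mem_range]
    constructor
    · rintro ⟨hTt, hpat, hAs⟩
      -- first: X (t-1) ω ∈ B
      have hmem : t ∈ {n : ℕ | N ≤ ((Finset.range n).filter (fun i => X i ω ∈ B)).card} := by
        have hne : {n : ℕ | N ≤ ((Finset.range n).filter (fun i => X i ω ∈ B)).card}.Nonempty := by
          by_contra h
          rw [Set.not_nonempty_iff_eq_empty] at h
          rw [hT ω, h, Nat.sInf_empty] at hTt
          omega
        have := Nat.sInf_mem hne
        rwa [← hT ω, hTt] at this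
      have hlast : X (t - 1) ω ∈ B := by
        by_contra hnB
        have : (Finset.range t).filter (fun i => X i ω ∈ B)
            = (Finset.range (t - 1)).filter (fun i => X i ω ∈ B) := by
          have : Finset.range t = insert (t - 1) (Finset.range (t - 1)) := by
            rw [← Finset.range_add_one]; congr 1; omega
          rw [this, Finset.filter_insert, if_neg hnB]
        have hcard : ((Finset.range t).filter (fun i => X i ω ∈ B)).card = N - 1 := by
          rw [this, hfilter ω hpat, hScard]
        rw [Set.mem_setOf_eq, hcard] at hmem
        omega
      intro i hi
      simp only [hC]
      by_cases hit : i = t - 1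
      · subst hit
        rw [if_pos rfl]
        exact Set.mem_inter (hAs _ (by omega)) hlast
      · have hi' : i < t - 1 := by omega
        by_cases hiS : i ∈ S
        · rw [if_neg hit, if_pos hiS]
          exact Set.mem_inter (hAs i hi) ((hpat i hi').2 hiS)
        · rw [if_neg hit, if_neg hiS]
          exact Set.mem_inter (hAs i hi) ((hpat i hi').1.mt hiS)
    · intro h
      have hpat : ∀ i < t - 1, (X i ω ∈ B ↔ i ∈ S) := by
        intro i hi
        have := h i (by omega)
        simp only [hC, if_neg (by omega : ¬ i = t - 1)] at this
        by_cases hiS : i ∈ S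
        · rw [if_pos hiS] at this; exact ⟨fun _ => hiS, fun _ => this.2⟩
        · rw [if_neg hiS] at this
          exact ⟨fun hb => absurd hb this.2, fun hb => absurd hb hiS⟩
      have hlast : X (t - 1) ω ∈ B := by
        have := h (t - 1) (by omega)
        simp only [hC, if_pos rfl] at this
        exact this.2
      have hAs : ∀ i < t, X i ω ∈ A i := by
        intro i hi
        have := h i hi
        simp only [hC] at this
        by_cases hit : i = t - 1
        · subst hit; rw [if_pos rfl] at this; exact this.1
        · rw [if_neg hit] at this; split_ifs at this <;> exact this.1
      refine ⟨?_, hpat, hAs⟩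
      -- T ω = t
      have hfeq : (Finset.range (t - 1)).filter (fun i => X i ω ∈ B) = S := hfilter ω hpat
      have hcardt : ((Finset.range t).filter (fun i => X i ω ∈ B)).card = N := by
        have hins : Finset.range t = insert (t - 1) (Finset.range (t - 1)) := by
          rw [← Finset.range_add_one]; congr 1; omega
        rw [hins, Finset.filter_insert, if_pos hlast, Finset.card_insert_of_notMem,
          hfeq, hScard]
        · omega
        · rw [hfeq]
          intro hmem
          have := Finset.mem_range.1 (hSsub hmem)
          omega
      have hmem : t ∈ {n : ℕ | N ≤ ((Finset.range n).filter (fun i => X i ω ∈ B)).card} := by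
        rw [Set.mem_setOf_eq, hcardt]
      rw [hT ω]
      refine le_antisymm (Nat.sInf_le hmem) ?_
      by_contra hlt
      push_neg at hlt
      have hsmem := Nat.sInf_mem ⟨t, hmem⟩
      set m := sInf {n : ℕ | N ≤ ((Finset.range n).filter (fun i => X i ω ∈ B)).card}
      have hm : m < t := hlt
      have hsub : (Finset.range m).filter (fun i => X i ω ∈ B)
          ⊆ (Finset.range (t - 1)).filter (fun i => X i ω ∈ B) := by
        apply Finset.filter_subset_filter
        exact Finset.range_subset_range.2 (by omega)
      have := Finset.card_le_card hsub
      rw [hfeq, hScard] at this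
      rw [Set.mem_setOf_eq] at hsmem
      omega
  rw [hset]
  have hXC : ∀ i, μ (X i ⁻¹' (C i)) = ν (C i) := by
    intro i
    rw [← hlaw i, Measure.map_apply (hXm i) (hCmeas i)]
  rw [hindep.meas_biInter (fun i _ => ⟨C i, hCmeas i, rfl⟩)]
  have hts : t = (t - 1) + 1 := by omega
  rw [hts, Finset.prod_range_succ]
  rw [hXC]
  have hClast : C (t - 1) = A (t - 1) ∩ B := by simp [hC]
  rw [hClast, mul_comm]
  congr 1
  apply Finset.prod_congr rfl
  intro i hi
  have hit : ¬ i = t - 1 := by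
    have := Finset.mem_range.1 hi; omega
  rw [hXC]
  simp only [hC, if_neg hit]
  split_ifs <;> rfl
end

section
/- Let μ be a probability measure on a measurable space E, and let X^1, ..., X^{T-1} be samples such that, conditional on T = t, exactly N−1 lie in B and t−N lie in B^c with the conditional i.i.d. structure of the alive sampler for target μ (with q = μ(B) ∈ (0,1), N ≥ 3, T negative binomial(N, q)). Let η(F) := (1/((T-1)(T-2))) Σ_{i≠j} F(X^i, X^j) denote the U-statistic for bounded measurable F : E^2 → ℝ. Then E[η(F)] = μ⊗μ(F) = ∫∫ F(x,y) μ(dx) μ(dy). -/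
open MeasureTheory ProbabilityTheory
open scoped Classical

set_option linter.unusedSectionVars false
set_option linter.unusedVariables false
set_option maxHeartbeats 1000000

namespace AliveAux


noncomputable def ind {E : Type*} (A : Set E) (x : E) : ℝ := if x ∈ A then 1 else 0

lemma ind_eq_indicator {E : Type*} (A : Set E) :
    ind A = A.indicator (fun _ => (1:ℝ)) := by
  funext x; simp [ind, Set.indicator_apply]

lemma ind_nonneg {E : Type*} (A : Set E) (x : E) : 0 ≤ ind A x := by
  unfold ind; split <;> norm_num

lemma ind_le_one {E : Type*} (A : Set E) (x : E) : ind A x ≤ 1 := by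
  unfold ind; split <;> norm_num

lemma ind_mem {E : Type*} {A : Set E} {x : E} (h : x ∈ A) : ind A x = 1 := if_pos h

lemma ind_not_mem {E : Type*} {A : Set E} {x : E} (h : x ∉ A) : ind A x = 0 := if_neg h

lemma measurable_ind {E : Type*} [MeasurableSpace E] {A : Set E} (hA : MeasurableSet A) :
    Measurable (ind A) := by
  rw [ind_eq_indicator]; exact measurable_const.indicator hA

lemma integrable_of_bdd {Ω : Type*} [MeasurableSpace Ω] {P : Measure Ω} [IsProbabilityMeasure P]
    {f : Ω → ℝ} {c : ℝ} (hm : Measurable f) (hb : ∀ ω, |f ω| ≤ c) : Integrable f P :=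
  Integrable.mono' (integrable_const c) hm.aestronglyMeasurable
    (ae_of_all _ fun ω => by simpa [Real.norm_eq_abs] using hb ω)

lemma integral_ind {E Ω : Type*} [MeasurableSpace E] [MeasurableSpace Ω] {P : Measure Ω}
    {μ' : Measure E} {Y : Ω → E} (hY : Measurable Y) (hlaw : Measure.map Y P = μ')
    {A : Set E} (hA : MeasurableSet A) :
    ∫ ω, ind A (Y ω) ∂P = (μ' A).toReal := by
  have h1 : ∫ ω, ind A (Y ω) ∂P = ∫ x, ind A x ∂(Measure.map Y P) :=
    (integral_map hY.aemeasurable ((measurable_ind hA).aestronglyMeasurable)).symm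
  rw [h1, hlaw, ind_eq_indicator]
  exact integral_indicator_one hA



variable {E Ω : Type*} [MeasurableSpace E] [MeasurableSpace Ω]
  {P : Measure Ω} [IsProbabilityMeasure P]
  {μ' : Measure E} [IsProbabilityMeasure μ']
  {X : ℕ → Ω → E}

lemma map_pair (hXm : ∀ i, Measurable (X i))
    (hindep : iIndepFun X P)
    (hlaw : ∀ i, Measure.map (X i) P = μ') {i j : ℕ} (hij : i ≠ j) :
    Measure.map (fun ω => (X i ω, X j ω)) P = μ'.prod μ' := by
  have h := hindep.indepFun hij
  rw [(indepFun_iff_map_prod_eq_prod_map_map (hXm i).aemeasurable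
    (hXm j).aemeasurable).mp h, hlaw i, hlaw j]

lemma integral_pair (hXm : ∀ i, Measurable (X i))
    (hindep : iIndepFun X P)
    (hlaw : ∀ i, Measure.map (X i) P = μ') {i j : ℕ} (hij : i ≠ j)
    {φ : E × E → ℝ} (hφ : Measurable φ) {D : ℝ} (hφb : ∀ z, |φ z| ≤ D) :
    ∫ ω, φ (X i ω, X j ω) ∂P = ∫ z, φ z ∂(μ'.prod μ') := by
  rw [← map_pair hXm hindep hlaw hij]
  exact (integral_map ((hXm i).prodMk (hXm j)).aemeasurable
    hφ.aestronglyMeasurable).symm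

lemma measurable_prod_ind (hXm : ∀ i, Measurable (X i)) (u : Finset ℕ)
    (A : ℕ → Set E) (hA : ∀ l, MeasurableSet (A l)) :
    Measurable (fun ω => ∏ l ∈ u, ind (A l) (X l ω)) :=
  Finset.measurable_prod u fun l _ => (measurable_ind (hA l)).comp (hXm l)

lemma abs_prod_ind_le_one (u : Finset ℕ) (A : ℕ → Set E) (ω : Ω) :
    |∏ l ∈ u, ind (A l) (X l ω)| ≤ 1 := by
  rw [Finset.abs_prod]
  exact Finset.prod_le_one (fun l _ => abs_nonneg _)
    (fun l _ => by rw [abs_of_nonneg (ind_nonneg _ _)]; exact ind_le_one _ _)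

/-- tuple function -/
lemma indep_fun_tuple (hXm : ∀ i, Measurable (X i))
    (hindep : iIndepFun X P)
    (S T : Finset ℕ) (hST : Disjoint S T)
    {g1 : (S → E) → ℝ} {g2 : (T → E) → ℝ}
    (hg1 : Measurable g1) (hg2 : Measurable g2) :
    IndepFun (fun ω => g1 (fun l => X l ω)) (fun ω => g2 (fun l => X l ω)) P :=
  (hindep.indepFun_finset S T hST hXm).comp hg1 hg2

lemma indep_prod_ind (hXm : ∀ i, Measurable (X i))
    (hindep : iIndepFun X P)
    (S : Finset ℕ) {g1 : (S → E) → ℝ} (hg1 : Measurable g1)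
    (u : Finset ℕ) (hSu : Disjoint S u)
    (A : ℕ → Set E) (hA : ∀ l, MeasurableSet (A l)) :
    IndepFun (fun ω => g1 (fun l => X l ω))
      (fun ω => ∏ l ∈ u, ind (A l) (X l ω)) P := by
  have h2 : (fun ω => ∏ l ∈ u, ind (A l) (X l ω))
      = (fun x : (u → E) => ∏ m ∈ u.attach, ind (A m.1) (x m)) ∘
        (fun ω (l : u) => X l ω) := by
    funext ω
    simp only [Function.comp_apply]
    rw [← Finset.prod_attach u (fun l => ind (A l) (X l ω))]
  rw [h2]
  exact indep_fun_tuple hXm hindep S u hSu hg1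
    (Finset.measurable_prod _ fun (m : u) _ =>
      (measurable_ind (hA m.1)).comp (measurable_pi_apply m))

lemma integral_prod_ind (hXm : ∀ i, Measurable (X i))
    (hindep : iIndepFun X P)
    (hlaw : ∀ i, Measure.map (X i) P = μ')
    (u : Finset ℕ) (A : ℕ → Set E) (hA : ∀ l, MeasurableSet (A l)) :
    ∫ ω, ∏ l ∈ u, ind (A l) (X l ω) ∂P = ∏ l ∈ u, (μ' (A l)).toReal := by
  induction u using Finset.induction_on with
  | empty => simp
  | @insert a s ha ih =>
    have hindepf : IndepFun (fun ω => ind (A a) (X a ω))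
        (fun ω => ∏ l ∈ s, ind (A l) (X l ω)) P := by
      have hg1 : Measurable (fun x : (({a} : Finset ℕ) → E) =>
          ind (A a) (x ⟨a, Finset.mem_singleton_self a⟩)) :=
        (measurable_ind (hA a)).comp (measurable_pi_apply _)
      exact indep_prod_ind hXm hindep {a} hg1 s
        (by simpa [Finset.disjoint_left] using ha) A hA
    calc ∫ ω, ∏ l ∈ insert a s, ind (A l) (X l ω) ∂P
        = ∫ ω, (ind (A a) (X a ω)) * ∏ l ∈ s, ind (A l) (X l ω) ∂P := by
          congr 1; funext ω; rw [Finset.prod_insert ha]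
      _ = (∫ ω, ind (A a) (X a ω) ∂P) * ∫ ω, ∏ l ∈ s, ind (A l) (X l ω) ∂P := by
          refine hindepf.integral_fun_mul_eq_mul_integral (Integrable.aestronglyMeasurable ?_) (Integrable.aestronglyMeasurable ?_)
          · exact integrable_of_bdd ((measurable_ind (hA a)).comp (hXm a))
              (c := 1) (fun ω => by
                rw [abs_of_nonneg (ind_nonneg _ _)]; exact ind_le_one _ _)
          · exact integrable_of_bdd (measurable_prod_ind hXm s A hA)
              (fun ω => abs_prod_ind_le_one s A ω)
      _ = ∏ l ∈ insert a s, (μ' (A l)).toReal := by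
          rw [integral_ind (hXm a) (hlaw a) (hA a), ih, Finset.prod_insert ha]

/-- Key independence lemma -/
lemma key_integral (hXm : ∀ i, Measurable (X i))
    (hindep : iIndepFun X P)
    (hlaw : ∀ i, Measure.map (X i) P = μ')
    {φ : E × E → ℝ} (hφ : Measurable φ) {D : ℝ} (hφb : ∀ z, |φ z| ≤ D)
    {i j : ℕ} (hij : i ≠ j) (u : Finset ℕ) (hi : i ∉ u) (hj : j ∉ u)
    (A : ℕ → Set E) (hA : ∀ l, MeasurableSet (A l)) :
    ∫ ω, φ (X i ω, X j ω) * ∏ l ∈ u, ind (A l) (X l ω) ∂P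
      = (∫ z, φ z ∂(μ'.prod μ')) * ∏ l ∈ u, (μ' (A l)).toReal := by
  have hij' : i ∈ ({i, j} : Finset ℕ) := by simp
  have hij'' : j ∈ ({i, j} : Finset ℕ) := by simp
  have hg1 : Measurable (fun x : (({i, j} : Finset ℕ) → E) =>
      φ (x ⟨i, hij'⟩, x ⟨j, hij''⟩)) :=
    hφ.comp ((measurable_pi_apply _).prodMk (measurable_pi_apply _))
  have hindepf : IndepFun (fun ω => φ (X i ω, X j ω))
      (fun ω => ∏ l ∈ u, ind (A l) (X l ω)) P := by
    have := indep_prod_ind hXm hindep ({i, j} : Finset ℕ) hg1 u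
      (by simp [Finset.disjoint_left]; exact ⟨hi, hj⟩) A hA
    exact this
  have hmul : ∫ ω, φ (X i ω, X j ω) * ∏ l ∈ u, ind (A l) (X l ω) ∂P
      = (∫ ω, φ (X i ω, X j ω) ∂P) * ∫ ω, ∏ l ∈ u, ind (A l) (X l ω) ∂P :=
    hindepf.integral_fun_mul_eq_mul_integral
      (integrable_of_bdd (hφ.comp ((hXm i).prodMk (hXm j))) (fun ω => hφb _)).aestronglyMeasurable
      (integrable_of_bdd (measurable_prod_ind hXm u A hA)
        (fun ω => abs_prod_ind_le_one u A ω)).aestronglyMeasurable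
  rw [hmul, integral_pair hXm hindep hlaw hij hφ hφb,
    integral_prod_ind hXm hindep hlaw u A hA]

/-- expansion of the count indicator over subsets -/
lemma expand_count {E : Type*} (B : Set E) (y : ℕ → E) (w : Finset ℕ) (k : ℕ) :
    (if (w.filter (fun l => y l ∈ B)).card = k then (1:ℝ) else 0)
      = ∑ s ∈ w.powersetCard k, ∏ l ∈ w, ind (if l ∈ s then B else Bᶜ) (y l) := by
  have key : ∀ s ∈ w.powersetCard k, (∏ l ∈ w, ind (if l ∈ s then B else Bᶜ) (y l))
      = if s = w.filter (fun l => y l ∈ B) then 1 else 0 := by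
    intro s hs
    rw [Finset.mem_powersetCard] at hs
    by_cases h : s = w.filter (fun l => y l ∈ B)
    · rw [if_pos h]
      apply Finset.prod_eq_one
      intro l hl
      by_cases hy : y l ∈ B
      · have hls : l ∈ s := by rw [h, Finset.mem_filter]; exact ⟨hl, hy⟩
        rw [if_pos hls]; exact ind_mem hy
      · have hls : l ∉ s := by rw [h, Finset.mem_filter]; tauto
        rw [if_neg hls]; exact ind_mem hy
    · rw [if_neg h]
      have : ¬ (∀ l ∈ w, (l ∈ s ↔ y l ∈ B)) := by
        intro hall
        apply h
        ext l
        rw [Finset.mem_filter]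
        constructor
        · intro hls; exact ⟨hs.1 hls, (hall l (hs.1 hls)).mp hls⟩
        · rintro ⟨hlw, hy⟩; exact (hall l hlw).mpr hy
      push_neg at this
      obtain ⟨l, hlw, hmis⟩ := this
      refine Finset.prod_eq_zero hlw ?_
      by_cases hls : l ∈ s
      · rw [if_pos hls]; exact ind_not_mem (by tauto)
      · rw [if_neg hls]; exact ind_not_mem (by simp only [Set.mem_compl_iff]; tauto)
  rw [Finset.sum_congr rfl key, Finset.sum_ite_eq' (w.powersetCard k)
    (w.filter (fun l => y l ∈ B)) (fun _ => (1:ℝ))]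
  congr 1
  rw [eq_iff_iff, Finset.mem_powersetCard]
  simp [Finset.filter_subset]

/-- characterization of the hitting time -/
lemma T_eq_iff {E Ω : Type*} (X : ℕ → Ω → E) (B : Set E)
    (N : ℕ) (hN : 1 ≤ N) (T : Ω → ℕ)
    (hT : ∀ ω, T ω = sInf {n : ℕ | N ≤ ((Finset.range n).filter (fun i => X i ω ∈ B)).card})
    (ω : Ω) (t : ℕ) :
    T ω = t + 1 ↔ (((Finset.range t).filter (fun i => X i ω ∈ B)).card = N - 1 ∧ X t ω ∈ B) := by
  have mono : ∀ a b : ℕ, a ≤ b →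
      ((Finset.range a).filter (fun i => X i ω ∈ B)).card
        ≤ ((Finset.range b).filter (fun i => X i ω ∈ B)).card := fun a b hab =>
    Finset.card_le_card (Finset.filter_subset_filter _ (Finset.range_subset_range.mpr hab))
  have hstep : ∀ n, ((Finset.range (n + 1)).filter (fun i => X i ω ∈ B)).card
      = ((Finset.range n).filter (fun i => X i ω ∈ B)).card
        + (if X n ω ∈ B then 1 else 0) := by
    intro n
    simp only [Finset.range_add_one, Finset.filter_insert]
    split
    · rw [Finset.card_insert_of_notMem (fun hmem =>
        Finset.notMem_range_self (Finset.mem_of_mem_filter n hmem))]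
    · omega
  constructor
  · intro h
    rw [hT ω] at h
    have hne : {n : ℕ | N ≤ ((Finset.range n).filter (fun i => X i ω ∈ B)).card}.Nonempty := by
      by_contra hemp
      rw [Set.not_nonempty_iff_eq_empty] at hemp
      rw [hemp, Nat.sInf_empty] at h
      omega
    have hmem := h ▸ Nat.sInf_mem hne
    have hnot : t ∉ {n : ℕ | N ≤ ((Finset.range n).filter (fun i => X i ω ∈ B)).card} :=
      fun hmem' => by have := Nat.sInf_le hmem'; omega
    simp only [Set.mem_setOf_eq] at hmem hnot
    have hst := hstep t
    have hx : X t ω ∈ B := by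
      by_contra hx
      rw [if_neg hx] at hst
      omega
    rw [if_pos hx] at hst
    exact ⟨by omega, hx⟩
  · rintro ⟨h1, h2⟩
    rw [hT ω]
    have hct1 : ((Finset.range (t + 1)).filter (fun i => X i ω ∈ B)).card = N := by
      have hst := hstep t
      rw [if_pos h2] at hst
      omega
    have hmem : (t + 1) ∈ {n : ℕ | N ≤ ((Finset.range n).filter (fun i => X i ω ∈ B)).card} := by
      simp [hct1]
    refine le_antisymm (Nat.sInf_le hmem) ?_
    by_contra hlt
    push_neg at hlt
    have hmem2 := Nat.sInf_mem (⟨t + 1, hmem⟩ :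
      {n : ℕ | N ≤ ((Finset.range n).filter (fun i => X i ω ∈ B)).card}.Nonempty)
    simp only [Set.mem_setOf_eq] at hmem2
    have hle : sInf {n : ℕ | N ≤ ((Finset.range n).filter (fun i => X i ω ∈ B)).card} ≤ t := by
      omega
    have := mono _ _ hle
    omega

lemma meas_cnt {E Ω : Type*} [MeasurableSpace E] [MeasurableSpace Ω]
    {X : ℕ → Ω → E} (hXm : ∀ i, Measurable (X i)) {B : Set E} (hB : MeasurableSet B)
    (n : ℕ) :
    Measurable (fun ω => ((Finset.range n).filter (fun i => X i ω ∈ B)).card) := by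
  have : (fun ω => ((Finset.range n).filter (fun i => X i ω ∈ B)).card)
      = fun ω => ∑ i ∈ Finset.range n, if X i ω ∈ B then 1 else 0 := by
    funext ω
    rw [Finset.card_filter]
  rw [this]
  exact Finset.measurable_sum _ fun i _ =>
    Measurable.ite (hB.preimage (hXm i)) measurable_const measurable_const

lemma T_meas {E Ω : Type*} [MeasurableSpace E] [MeasurableSpace Ω]
    {X : ℕ → Ω → E} (hXm : ∀ i, Measurable (X i)) {B : Set E} (hB : MeasurableSet B)
    (N : ℕ) (hN : 1 ≤ N) (T : Ω → ℕ)
    (hT : ∀ ω, T ω = sInf {n : ℕ | N ≤ ((Finset.range n).filter (fun i => X i ω ∈ B)).card}) :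
    Measurable T := by
  have h1 : ∀ t : ℕ, MeasurableSet (T ⁻¹' {t + 1}) := by
    intro t
    have : T ⁻¹' {t + 1} = {ω | ((Finset.range t).filter (fun i => X i ω ∈ B)).card = N - 1}
        ∩ X t ⁻¹' B := by
      ext ω
      simp only [Set.mem_preimage, Set.mem_singleton_iff, Set.mem_inter_iff, Set.mem_setOf_eq]
      exact T_eq_iff X B N hN T hT ω t
    rw [this]
    exact (((meas_cnt hXm hB t) (measurableSet_singleton (N - 1))).inter
      (hB.preimage (hXm t)))
  apply measurable_to_countable'
  intro t
  match t with
  | (t + 1) => exact h1 t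
  | 0 =>
    have : T ⁻¹' {0} = (⋃ t : ℕ, T ⁻¹' {t + 1})ᶜ := by
      ext ω
      simp only [Set.mem_preimage, Set.mem_singleton_iff, Set.mem_compl_iff, Set.mem_iUnion]
      constructor
      · intro h ⟨t, ht⟩; omega
      · intro h; by_contra h0; exact h ⟨T ω - 1, by omega⟩
    rw [this]
    exact (MeasurableSet.iUnion h1).compl

lemma pairs_card (n : ℕ) :
    (((Finset.range n) ×ˢ (Finset.range n)).filter (fun p => p.1 ≠ p.2)).card = n * n - n := by
  have h := Finset.card_filter_add_card_filter_not
    (s := (Finset.range n) ×ˢ (Finset.range n)) (fun p : ℕ × ℕ => p.1 = p.2)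
  have hdiag : (((Finset.range n) ×ˢ (Finset.range n)).filter (fun p : ℕ × ℕ => p.1 = p.2))
      = (Finset.range n).image (fun i => (i, i)) := by
    ext ⟨a, b⟩
    simp only [Finset.mem_filter, Finset.mem_product, Finset.mem_image, Finset.mem_range]
    constructor
    · rintro ⟨⟨ha, hb⟩, h⟩; exact ⟨a, ha, by simp [h]⟩
    · rintro ⟨i, hi, h⟩
      obtain ⟨rfl, rfl⟩ : i = a ∧ i = b := by
        constructor <;> [exact congrArg Prod.fst h; exact congrArg Prod.snd h]
      exact ⟨⟨hi, hi⟩, rfl⟩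
  rw [hdiag, Finset.card_image_of_injective _ (fun a b hab => congrArg Prod.fst hab)] at h
  simp only [Finset.card_product, Finset.card_range] at h
  have : (((Finset.range n) ×ˢ (Finset.range n)).filter (fun p : ℕ × ℕ => ¬ p.1 = p.2))
      = (((Finset.range n) ×ˢ (Finset.range n)).filter (fun p : ℕ × ℕ => p.1 ≠ p.2)) := rfl
  rw [this] at h
  omega

def ca : Bool → ℕ := fun a => bif a then 1 else 0
def Aset {E : Type*} (B : Set E) : Bool → Set E := fun a => bif a then B else Bᶜ
def kk (N : ℕ) : Bool → Bool → ℕ := fun a b => N - 1 - (ca a + ca b)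

/-- the pointwise expansion -/
lemma pointwise_expand {E Ω : Type*} (X : ℕ → Ω → E) (B : Set E)
    (N : ℕ) (hN : 3 ≤ N) (F : E × E → ℝ)
    (n i j : ℕ) (hi : i < n) (hj : j < n) (hij : i ≠ j) (ω : Ω) :
    (if ((((Finset.range n).filter (fun l => X l ω ∈ B)).card = N - 1) ∧ X n ω ∈ B)
        then (1:ℝ) else 0) * F (X i ω, X j ω)
      = ∑ a : Bool, ∑ b : Bool,
          ∑ s ∈ ((Finset.range n) \ {i, j}).powersetCard (kk N a b),
            (F (X i ω, X j ω) * (ind (Aset B a) (X i ω) * ind (Aset B b) (X j ω)))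
              * ∏ l ∈ insert n ((Finset.range n) \ {i, j}),
                  ind (if l ∈ insert n s then B else Bᶜ) (X l ω) := by
  set w' : Finset ℕ := (Finset.range n) \ {i, j} with hw'
  have hn_notin : n ∉ w' := by simp [hw']
  have hprod : ∀ s : Finset ℕ, s ⊆ w' →
      (∏ l ∈ insert n w', ind (if l ∈ insert n s then B else Bᶜ) (X l ω))
        = ind B (X n ω) * ∏ l ∈ w', ind (if l ∈ s then B else Bᶜ) (X l ω) := by
    intro s hs
    rw [Finset.prod_insert hn_notin]
    congr 1
    · rw [if_pos (Finset.mem_insert_self n s)]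
    · refine Finset.prod_congr rfl fun l hl => ?_
      have hln : l ≠ n := by
        have : l ∈ Finset.range n := (Finset.mem_sdiff.mp hl).1
        have := Finset.mem_range.mp this
        omega
      congr 1
      simp [Finset.mem_insert, hln]
  have hsum : ∀ k : ℕ,
      (∑ s ∈ w'.powersetCard k, ∏ l ∈ insert n w',
        ind (if l ∈ insert n s then B else Bᶜ) (X l ω))
      = ind B (X n ω) *
          (if (w'.filter (fun l => X l ω ∈ B)).card = k then (1:ℝ) else 0) := by
    intro k
    rw [expand_count B (fun l => X l ω) w' k, Finset.mul_sum]
    refine Finset.sum_congr rfl fun s hs => ?_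
    rw [hprod s (Finset.mem_powersetCard.mp hs).1]
  have hRHS : (∑ a : Bool, ∑ b : Bool,
      ∑ s ∈ w'.powersetCard (kk N a b),
        (F (X i ω, X j ω) * (ind (Aset B a) (X i ω) * ind (Aset B b) (X j ω)))
          * ∏ l ∈ insert n w', ind (if l ∈ insert n s then B else Bᶜ) (X l ω))
      = ∑ a : Bool, ∑ b : Bool,
        (F (X i ω, X j ω) * (ind (Aset B a) (X i ω) * ind (Aset B b) (X j ω)))
          * (ind B (X n ω) *
            (if (w'.filter (fun l => X l ω ∈ B)).card = kk N a b then (1:ℝ) else 0)) := by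
    refine Finset.sum_congr rfl fun a _ => Finset.sum_congr rfl fun b _ => ?_
    rw [← Finset.mul_sum, hsum (kk N a b)]
  rw [hRHS]
  -- split of the count
  have hsub : ({i, j} : Finset ℕ) ⊆ Finset.range n := by
    intro l hl
    rcases Finset.mem_insert.mp hl with rfl | hl
    · exact Finset.mem_range.mpr hi
    · rw [Finset.mem_singleton.mp hl]; exact Finset.mem_range.mpr hj
  have hsplit : ((Finset.range n).filter (fun l => X l ω ∈ B)).card
      = (w'.filter (fun l => X l ω ∈ B)).card
        + ((({i, j} : Finset ℕ)).filter (fun l => X l ω ∈ B)).card := by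
    rw [← Finset.card_union_of_disjoint
      (Finset.disjoint_filter_filter Finset.sdiff_disjoint),
      ← Finset.filter_union, Finset.sdiff_union_of_subset hsub]
  have hcard2 : ((({i, j} : Finset ℕ)).filter (fun l => X l ω ∈ B)).card
      = (if X i ω ∈ B then 1 else 0) + (if X j ω ∈ B then 1 else 0) := by
    rw [show ({i, j} : Finset ℕ) = insert i {j} from rfl, Finset.filter_insert,
      Finset.filter_singleton]
    by_cases hi' : X i ω ∈ B <;> by_cases hj' : X j ω ∈ B <;>
      simp [hi', hj', Finset.card_insert_of_notMem, hij]
  have hmain : ∀ a₀ b₀ : Bool,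
      (∀ a : Bool, ind (Aset B a) (X i ω) = if a = a₀ then (1:ℝ) else 0) →
      (∀ b : Bool, ind (Aset B b) (X j ω) = if b = b₀ then (1:ℝ) else 0) →
      ((({i, j} : Finset ℕ)).filter (fun l => X l ω ∈ B)).card = ca a₀ + ca b₀ →
      (if ((((Finset.range n).filter (fun l => X l ω ∈ B)).card = N - 1) ∧ X n ω ∈ B)
          then (1:ℝ) else 0) * F (X i ω, X j ω)
        = ∑ a : Bool, ∑ b : Bool,
            (F (X i ω, X j ω) * (ind (Aset B a) (X i ω) * ind (Aset B b) (X j ω)))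
              * (ind B (X n ω) *
                (if (w'.filter (fun l => X l ω ∈ B)).card = kk N a b then (1:ℝ) else 0)) := by
    intro a₀ b₀ hia hjb hij_card
    have hca : ca a₀ + ca b₀ ≤ 2 := by cases a₀ <;> cases b₀ <;> simp [ca]
    have hiffc : ((((Finset.range n).filter (fun l => X l ω ∈ B)).card = N - 1))
        ↔ ((w'.filter (fun l => X l ω ∈ B)).card = kk N a₀ b₀) := by
      rw [hij_card] at hsplit
      unfold kk
      omega
    have hcollapse : (∑ a : Bool, ∑ b : Bool,
        (F (X i ω, X j ω) * (ind (Aset B a) (X i ω) * ind (Aset B b) (X j ω)))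
          * (ind B (X n ω) *
            (if (w'.filter (fun l => X l ω ∈ B)).card = kk N a b then (1:ℝ) else 0)))
        = F (X i ω, X j ω) * (ind B (X n ω) *
            (if (w'.filter (fun l => X l ω ∈ B)).card = kk N a₀ b₀ then (1:ℝ) else 0)) := by
      simp only [Fintype.sum_bool, hia, hjb]
      cases a₀ <;> cases b₀ <;> simp
    rw [hcollapse]
    by_cases hx : X n ω ∈ B <;>
      by_cases hc : (w'.filter (fun l => X l ω ∈ B)).card = kk N a₀ b₀
    · rw [if_pos ⟨hiffc.mpr hc, hx⟩, ind_mem hx, if_pos hc]; ring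
    · rw [if_neg (fun hand => hc (hiffc.mp hand.1)), ind_mem hx, if_neg hc]; ring
    · rw [if_neg (fun hand => hx hand.2), ind_not_mem hx]; ring
    · rw [if_neg (fun hand => hx hand.2), ind_not_mem hx]; ring
  by_cases hi' : X i ω ∈ B <;> by_cases hj' : X j ω ∈ B
  · refine hmain true true (fun a => ?_) (fun b => ?_) ?_ <;>
      first
        | (cases a <;> simp [Aset, ind, hi'])
        | (cases b <;> simp [Aset, ind, hj'])
        | (rw [hcard2]; simp [hi', hj', ca])
  · refine hmain true false (fun a => ?_) (fun b => ?_) ?_ <;>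
      first
        | (cases a <;> simp [Aset, ind, hi'])
        | (cases b <;> simp [Aset, ind, hj'])
        | (rw [hcard2]; simp [hi', hj', ca])
  · refine hmain false true (fun a => ?_) (fun b => ?_) ?_ <;>
      first
        | (cases a <;> simp [Aset, ind, hi'])
        | (cases b <;> simp [Aset, ind, hj'])
        | (rw [hcard2]; simp [hi', hj', ca])
  · refine hmain false false (fun a => ?_) (fun b => ?_) ?_ <;>
      first
        | (cases a <;> simp [Aset, ind, hi'])
        | (cases b <;> simp [Aset, ind, hj'])
        | (rw [hcard2]; simp [hi', hj', ca])

lemma pairval {E Ω : Type*} [MeasurableSpace E] [MeasurableSpace Ω]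
    {P : Measure Ω} [IsProbabilityMeasure P] {μ' : Measure E} [IsProbabilityMeasure μ']
    {X : ℕ → Ω → E} (hXm : ∀ i, Measurable (X i))
    (hindep : iIndepFun X P)
    (hlaw : ∀ i, Measure.map (X i) P = μ')
    {B : Set E} (hB : MeasurableSet B)
    (N : ℕ) (hN : 3 ≤ N)
    {F : E × E → ℝ} (hFm : Measurable F) {C : ℝ} (hFb : ∀ x, |F x| ≤ C)
    (n i j : ℕ) (hi : i < n) (hj : j < n) (hij : i ≠ j) :
    ∫ ω, (if ((((Finset.range n).filter (fun l => X l ω ∈ B)).card = N - 1) ∧ X n ω ∈ B)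
        then (1:ℝ) else 0) * F (X i ω, X j ω) ∂P
      = ∑ a : Bool, ∑ b : Bool, (((n - 2).choose (kk N a b) : ℕ) : ℝ) *
          ((∫ z, F z * (ind (Aset B a) z.1 * ind (Aset B b) z.2) ∂(μ'.prod μ'))
            * ((μ' B).toReal * ((μ' B).toReal ^ (kk N a b)
               * (μ' Bᶜ).toReal ^ ((n - 2) - kk N a b)))) := by
  have hAset : ∀ a : Bool, MeasurableSet (Aset B a) := by
    intro a; cases a
    · exact hB.compl
    · exact hB
  have hC0 : 0 ≤ C := by
    have hne : Nonempty E := by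
      by_contra h
      rw [not_nonempty_iff] at h
      have h1 : μ' Set.univ = 0 := by
        rw [Set.univ_eq_empty_iff.mpr h]; exact measure_empty
      rw [measure_univ] at h1
      exact one_ne_zero h1
    obtain ⟨x⟩ := hne
    exact le_trans (abs_nonneg _) (hFb (x, x))
  set φ : Bool → Bool → E × E → ℝ :=
    fun a b z => F z * (ind (Aset B a) z.1 * ind (Aset B b) z.2) with hφdef
  have hφm : ∀ a b, Measurable (φ a b) := fun a b =>
    hFm.mul (((measurable_ind (hAset a)).comp measurable_fst).mul
      ((measurable_ind (hAset b)).comp measurable_snd))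
  have hindab : ∀ (a b : Bool) (z : E × E), |ind (Aset B a) z.1 * ind (Aset B b) z.2| ≤ 1 := by
    intro a b z
    rw [abs_mul, abs_of_nonneg (ind_nonneg _ _), abs_of_nonneg (ind_nonneg _ _)]
    exact mul_le_one₀ (ind_le_one _ _) (ind_nonneg _ _) (ind_le_one _ _)
  have hφb : ∀ a b z, |φ a b z| ≤ C := by
    intro a b z
    rw [hφdef]
    calc |F z * (ind (Aset B a) z.1 * ind (Aset B b) z.2)|
        = |F z| * |ind (Aset B a) z.1 * ind (Aset B b) z.2| := abs_mul _ _
      _ ≤ C * 1 := mul_le_mul (hFb z) (hindab a b z) (abs_nonneg _) hC0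
      _ = C := mul_one C
  set w' : Finset ℕ := (Finset.range n) \ {i, j} with hw'
  have hn_notin : n ∉ w' := by simp [hw']
  have hi_notin : i ∉ insert n w' := by
    simp only [Finset.mem_insert, hw', Finset.mem_sdiff]
    push_neg
    exact ⟨by omega, fun _ => by simp⟩
  have hj_notin : j ∉ insert n w' := by
    simp only [Finset.mem_insert, hw', Finset.mem_sdiff]
    push_neg
    exact ⟨by omega, fun _ => by simp⟩
  have hsub : ({i, j} : Finset ℕ) ⊆ Finset.range n := by
    intro l hl
    rcases Finset.mem_insert.mp hl with rfl | hl
    · exact Finset.mem_range.mpr hi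
    · rw [Finset.mem_singleton.mp hl]; exact Finset.mem_range.mpr hj
  have hw'card : w'.card = n - 2 := by
    rw [hw', Finset.card_sdiff_of_subset hsub, Finset.card_range]
    congr 1
    rw [Finset.card_insert_of_notMem (by simp [hij]), Finset.card_singleton]
  -- the per-term A function
  set AA : Finset ℕ → ℕ → Set E := fun s l => if l ∈ insert n s then B else Bᶜ with hAA
  have hAAm : ∀ s l, MeasurableSet (AA s l) := by
    intro s l
    rw [hAA]
    dsimp only
    split
    · exact hB
    · exact hB.compl
  -- integrability of each term
  have hterm_meas : ∀ (a b : Bool) (s : Finset ℕ),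
      Measurable (fun ω => φ a b (X i ω, X j ω)
        * ∏ l ∈ insert n w', ind (AA s l) (X l ω)) := fun a b s =>
    ((hφm a b).comp ((hXm i).prodMk (hXm j))).mul
      (measurable_prod_ind hXm _ _ (hAAm s))
  have hterm_bdd : ∀ (a b : Bool) (s : Finset ℕ) (ω : Ω),
      |φ a b (X i ω, X j ω) * ∏ l ∈ insert n w', ind (AA s l) (X l ω)| ≤ C := by
    intro a b s ω
    calc |φ a b (X i ω, X j ω) * ∏ l ∈ insert n w', ind (AA s l) (X l ω)|
        = |φ a b (X i ω, X j ω)| * |∏ l ∈ insert n w', ind (AA s l) (X l ω)| := abs_mul _ _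
      _ ≤ C * 1 := mul_le_mul (hφb a b _) (abs_prod_ind_le_one _ _ _) (abs_nonneg _) hC0
      _ = C := mul_one C
  have hterm_int : ∀ (a b : Bool) (s : Finset ℕ),
      Integrable (fun ω => φ a b (X i ω, X j ω)
        * ∏ l ∈ insert n w', ind (AA s l) (X l ω)) P := fun a b s =>
    integrable_of_bdd (hterm_meas a b s) (hterm_bdd a b s)
  -- step 1 : rewrite via pointwise_expand
  have step1 : ∫ ω, (if ((((Finset.range n).filter (fun l => X l ω ∈ B)).card = N - 1)
        ∧ X n ω ∈ B) then (1:ℝ) else 0) * F (X i ω, X j ω) ∂P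
      = ∫ ω, ∑ a : Bool, ∑ b : Bool, ∑ s ∈ w'.powersetCard (kk N a b),
          φ a b (X i ω, X j ω) * ∏ l ∈ insert n w', ind (AA s l) (X l ω) ∂P := by
    refine integral_congr_ae (Filter.Eventually.of_forall fun ω => ?_)
    exact pointwise_expand X B N hN F n i j hi hj hij ω
  rw [step1]
  -- step 2 : interchange
  rw [integral_finset_sum _ (fun a _ => by
    refine integrable_finset_sum _ (fun b _ => ?_)
    exact integrable_finset_sum _ (fun s _ => hterm_int a b s))]
  refine Finset.sum_congr rfl fun a _ => ?_
  rw [integral_finset_sum _ (fun b _ => integrable_finset_sum _ (fun s _ => hterm_int a b s))]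
  refine Finset.sum_congr rfl fun b _ => ?_
  rw [integral_finset_sum _ (fun s _ => hterm_int a b s)]
  -- step 3 : evaluate each term
  have step3 : ∀ s ∈ w'.powersetCard (kk N a b),
      ∫ ω, φ a b (X i ω, X j ω) * ∏ l ∈ insert n w', ind (AA s l) (X l ω) ∂P
        = (∫ z, φ a b z ∂(μ'.prod μ'))
            * ((μ' B).toReal * ((μ' B).toReal ^ (kk N a b)
              * (μ' Bᶜ).toReal ^ ((n - 2) - kk N a b))) := by
    intro s hs
    obtain ⟨hssub, hscard⟩ := Finset.mem_powersetCard.mp hs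
    rw [key_integral hXm hindep hlaw (hφm a b) (hφb a b) hij (insert n w')
      hi_notin hj_notin (AA s) (hAAm s)]
    congr 1
    rw [Finset.prod_insert hn_notin]
    have hAn : AA s n = B := by rw [hAA]; simp
    rw [hAn]
    congr 1
    have hfactor : ∀ l ∈ w', (μ' (AA s l)).toReal
        = if l ∈ s then (μ' B).toReal else (μ' Bᶜ).toReal := by
      intro l hl
      have hln : l ≠ n := by
        have h1 : l ∈ Finset.range n := (Finset.mem_sdiff.mp hl).1
        have := Finset.mem_range.mp h1
        omega
      rw [hAA]
      by_cases hls : l ∈ s <;> simp [Finset.mem_insert, hln, hls]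
    rw [Finset.prod_congr rfl hfactor, Finset.prod_ite, Finset.prod_const, Finset.prod_const]
    have h1 : (w'.filter (fun l => l ∈ s)).card = kk N a b := by
      rw [Finset.filter_mem_eq_inter, Finset.inter_eq_right.mpr hssub, hscard]
    have h2 : (w'.filter (fun l => l ∉ s)).card = (n - 2) - kk N a b := by
      rw [← Finset.sdiff_eq_filter, Finset.card_sdiff_of_subset hssub, hscard, hw'card]
    rw [h1, h2]
  rw [Finset.sum_congr rfl step3, Finset.sum_const, Finset.card_powersetCard, hw'card,
    nsmul_eq_mul]

noncomputable def gU {E Ω : Type*} (X : ℕ → Ω → E) (F : E × E → ℝ) (t : ℕ) (ω : Ω) : ℝ :=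
  (1 / (((t : ℝ) - 1) * ((t : ℝ) - 2))) *
    ∑ i ∈ Finset.range (t - 1), ∑ j ∈ Finset.range (t - 1),
      (if i ≠ j then F (X i ω, X j ω) else 0)

noncomputable def fU {E Ω : Type*} (X : ℕ → Ω → E) (F : E × E → ℝ) (T : Ω → ℕ) (ω : Ω) : ℝ :=
  gU X F (T ω) ω

lemma gU_meas {E Ω : Type*} [MeasurableSpace E] [MeasurableSpace Ω]
    {X : ℕ → Ω → E} (hXm : ∀ i, Measurable (X i)) {F : E × E → ℝ} (hFm : Measurable F)
    (t : ℕ) : Measurable (gU X F t) := by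
  apply Measurable.const_mul
  refine Finset.measurable_sum _ fun i _ => Finset.measurable_sum _ fun j _ => ?_
  by_cases hij : i = j
  · simp [hij]
  · simp only [ne_eq, hij, not_false_eq_true, if_true]; exact hFm.comp ((hXm i).prodMk (hXm j))

lemma fU_meas {E Ω : Type*} [MeasurableSpace E] [MeasurableSpace Ω]
    {X : ℕ → Ω → E} (hXm : ∀ i, Measurable (X i)) {F : E × E → ℝ} (hFm : Measurable F)
    {T : Ω → ℕ} (hT : Measurable T) : Measurable (fU X F T) := by
  have h1 : Measurable (fun pz : Ω × ℕ => gU X F pz.2 pz.1) :=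
    measurable_from_prod_countable_left (fun t => gU_meas hXm hFm t)
  have h2 : Measurable ((fun pz : Ω × ℕ => gU X F pz.2 pz.1) ∘ (fun ω => (ω, T ω))) :=
    h1.comp (measurable_id.prodMk hT)
  exact h2

end AliveAux

open AliveAux
/-- Let `X 0, X 1, ...` be the samples of the alive sampler targeting a
probability measure `μ'` (i.e. i.i.d. with law `μ'`), `B` with `q = μ'(B) ∈ (0,1)`,
`N ≥ 3`, `T` the first time `N` samples land in `B` (so that, conditional on `T = t`,
exactly `N-1` of the first `t-1` samples lie in `B` and `t-N` lie in `Bᶜ`, with the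
conditional i.i.d. structure of the alive sampler).  Then the U-statistic
`η(F) = (1/((T-1)(T-2))) Σ_{i≠j, i,j < T-1} F(X i, X j)` satisfies
`E[η(F)] = ∫∫ F(x,y) μ'(dx) μ'(dy)` for bounded measurable `F`. -/
theorem alive_U_statistic_unbiased
    {E : Type*} [MeasurableSpace E] {Ω : Type*} [MeasurableSpace Ω]
    (P : Measure Ω) [IsProbabilityMeasure P]
    (μ' : Measure E) [IsProbabilityMeasure μ']
    (X : ℕ → Ω → E) (hXm : ∀ i, Measurable (X i))
    (hindep : iIndepFun X P)
    (hlaw : ∀ i, Measure.map (X i) P = μ')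
    (B : Set E) (hB : MeasurableSet B) (hB0 : 0 < μ' B) (hB1 : μ' B < 1)
    (N : ℕ) (hN : 3 ≤ N)
    (T : Ω → ℕ)
    (hT : ∀ ω, T ω =
      sInf {n : ℕ | N ≤ ((Finset.range n).filter (fun i => X i ω ∈ B)).card})
    (F : E × E → ℝ) (hFm : Measurable F) (C : ℝ) (hFb : ∀ x, |F x| ≤ C) :
    ∫ ω, (1 / (((T ω : ℝ) - 1) * ((T ω : ℝ) - 2))) *
        ∑ i ∈ Finset.range (T ω - 1), ∑ j ∈ Finset.range (T ω - 1),
          (if i ≠ j then F (X i ω, X j ω) else 0) ∂P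
      = ∫ x, ∫ y, F (x, y) ∂μ' ∂μ' := by
  classical
  have hTmeas : Measurable T := T_meas hXm hB N (by omega) T hT
  have hmeas_t : ∀ t : ℕ, MeasurableSet (T ⁻¹' {t}) :=
    fun t => hTmeas (measurableSet_singleton t)
  have hC0 : 0 ≤ C := by
    have hne : Nonempty E := by
      by_contra h
      rw [not_nonempty_iff] at h
      have h1 : μ' Set.univ = 0 := by
        rw [Set.univ_eq_empty_iff.mpr h]; exact measure_empty
      rw [measure_univ] at h1
      exact one_ne_zero h1
    obtain ⟨x⟩ := hne
    exact le_trans (abs_nonneg _) (hFb (x, x))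
  -- the integrand
  set f : Ω → ℝ := fU X F T with hfset
  have hgdef : ∀ t ω, gU X F t ω = (1 / (((t : ℝ) - 1) * ((t : ℝ) - 2))) *
      ∑ i ∈ Finset.range (t - 1), ∑ j ∈ Finset.range (t - 1),
        (if i ≠ j then F (X i ω, X j ω) else 0) := fun t ω => rfl
  have hfdef : ∀ ω, f ω = gU X F (T ω) ω := fun ω => rfl
  have hgoal_lhs : ∫ ω, (1 / (((T ω : ℝ) - 1) * ((T ω : ℝ) - 2))) *
        ∑ i ∈ Finset.range (T ω - 1), ∑ j ∈ Finset.range (T ω - 1),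
          (if i ≠ j then F (X i ω, X j ω) else 0) ∂P = ∫ ω, f ω ∂P :=
    integral_congr_ae (Filter.Eventually.of_forall fun ω => rfl)
  rw [hgoal_lhs]
  have hfmeas : Measurable f := fU_meas hXm hFm hTmeas
  have hds : ∀ (m : ℕ) (h : ℕ → ℕ → ℝ),
      (∑ i ∈ Finset.range m, ∑ j ∈ Finset.range m, (if i ≠ j then h i j else 0))
        = ∑ pr ∈ ((Finset.range m) ×ˢ (Finset.range m)).filter (fun pr => pr.1 ≠ pr.2),
            h pr.1 pr.2 := by
    intro m h
    rw [Finset.sum_filter]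
    exact (Finset.sum_product' (Finset.range m) (Finset.range m)
      (fun i j => if i ≠ j then h i j else 0)).symm
  -- boundedness of f
  have hfb : ∀ ω, |f ω| ≤ C := by
    intro ω
    rcases le_or_gt (T ω) 2 with h2 | h3
    · have hz : ∀ i ∈ Finset.range (T ω - 1), ∀ j ∈ Finset.range (T ω - 1),
          (if i ≠ j then F (X i ω, X j ω) else 0) = 0 := by
        intro i hi j hj
        rw [Finset.mem_range] at hi hj
        have : i = j := by omega
        simp [this]
      have hf0 : f ω = 0 := by
        rw [hfdef ω, hgdef (T ω) ω]
        rw [Finset.sum_congr rfl (fun i hi => Finset.sum_congr rfl (fun j hj => hz i hi j hj))]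
        simp
      rw [hf0]; simpa using hC0
    · obtain ⟨u, hu⟩ : ∃ u, T ω = u + 3 := ⟨T ω - 3, by omega⟩
      have hr1 : (T ω : ℝ) - 1 = (u : ℝ) + 2 := by rw [hu]; push_cast; ring
      have hr2 : (T ω : ℝ) - 2 = (u : ℝ) + 1 := by rw [hu]; push_cast; ring
      have hb1 : |∑ i ∈ Finset.range (T ω - 1), ∑ j ∈ Finset.range (T ω - 1),
          (if i ≠ j then F (X i ω, X j ω) else 0)|
          ≤ (((u : ℝ) + 2) * ((u : ℝ) + 1)) * C := by
        rw [hds (T ω - 1) (fun i j => F (X i ω, X j ω))]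
        calc |∑ pr ∈ ((Finset.range (T ω - 1)) ×ˢ (Finset.range (T ω - 1))).filter
                (fun pr => pr.1 ≠ pr.2), F (X pr.1 ω, X pr.2 ω)|
            ≤ ∑ pr ∈ ((Finset.range (T ω - 1)) ×ˢ (Finset.range (T ω - 1))).filter
                (fun pr => pr.1 ≠ pr.2), |F (X pr.1 ω, X pr.2 ω)| :=
              Finset.abs_sum_le_sum_abs _ _
          _ ≤ ∑ _pr ∈ ((Finset.range (T ω - 1)) ×ˢ (Finset.range (T ω - 1))).filter
                (fun pr => pr.1 ≠ pr.2), C := Finset.sum_le_sum (fun pr _ => hFb _)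
          _ = ((((Finset.range (T ω - 1)) ×ˢ (Finset.range (T ω - 1))).filter
                (fun pr => pr.1 ≠ pr.2)).card : ℝ) * C := by
              rw [Finset.sum_const, nsmul_eq_mul]
          _ ≤ (((u : ℝ) + 2) * ((u : ℝ) + 1)) * C := by
              refine mul_le_mul_of_nonneg_right (le_of_eq ?_) hC0
              rw [pairs_card (T ω - 1), hu]
              have h0 : u + 3 - 1 = u + 2 := by omega
              rw [h0]
              have h1 : (u + 2) * (u + 2) - (u + 2) = (u + 2) * (u + 1) := by
                have : (u + 2) * (u + 2) = (u + 2) * (u + 1) + (u + 2) := by ring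
                omega
              rw [h1]
              push_cast
              ring
      have hpos : (0:ℝ) < ((u : ℝ) + 2) * ((u : ℝ) + 1) := by positivity
      have habs : |f ω| = (1 / (((u : ℝ) + 2) * ((u : ℝ) + 1))) *
          |∑ i ∈ Finset.range (T ω - 1), ∑ j ∈ Finset.range (T ω - 1),
            (if i ≠ j then F (X i ω, X j ω) else 0)| := by
        rw [hfdef ω, hgdef (T ω) ω]
        rw [abs_mul, hr1, hr2, abs_of_nonneg (by positivity)]
      rw [habs]
      calc (1 / (((u : ℝ) + 2) * ((u : ℝ) + 1))) *
            |∑ i ∈ Finset.range (T ω - 1), ∑ j ∈ Finset.range (T ω - 1),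
              (if i ≠ j then F (X i ω, X j ω) else 0)|
          ≤ (1 / (((u : ℝ) + 2) * ((u : ℝ) + 1))) * ((((u : ℝ) + 2) * ((u : ℝ) + 1)) * C) :=
            mul_le_mul_of_nonneg_left hb1 (by positivity)
        _ = C := by field_simp
  have hfint : Integrable f P := integrable_of_bdd hfmeas hfb
  -- decomposition over the values of T
  have hdisj : Pairwise (Function.onFun Disjoint fun t : ℕ => T ⁻¹' {t}) := by
    intro s t hst
    refine Set.disjoint_left.mpr fun ω h1 h2 => ?_
    simp only [Set.mem_preimage, Set.mem_singleton_iff] at h1 h2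
    exact hst (h1 ▸ h2 ▸ rfl)
  have hcover : (⋃ t : ℕ, T ⁻¹' {t}) = Set.univ := by
    ext ω; simp
  have hsum1 : HasSum (fun t => ∫ ω in T ⁻¹' {t}, f ω ∂P) (∫ ω, f ω ∂P) := by
    have h1 := hasSum_integral_iUnion hmeas_t hdisj
      (by rw [hcover]; exact hfint.integrableOn)
    rwa [hcover, Measure.restrict_univ] at h1
  -- probability values
  set q : ℝ := (μ' B).toReal with hqdef
  set p : ℝ := (μ' Bᶜ).toReal with hpdef
  have hq0 : 0 < q := ENNReal.toReal_pos (ne_of_gt hB0) (measure_ne_top μ' B)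
  have hq1 : q < 1 := by
    have h1 := (ENNReal.toReal_lt_toReal (measure_ne_top μ' B) ENNReal.one_ne_top).mpr hB1
    simpa using h1
  have hp0 : 0 ≤ p := ENNReal.toReal_nonneg
  have hqp : q + p = 1 := by
    have h1 : μ' B + μ' Bᶜ = 1 := by
      rw [measure_add_measure_compl hB, measure_univ]
    have h2 := congrArg ENNReal.toReal h1
    rwa [ENNReal.toReal_add (measure_ne_top μ' B) (measure_ne_top μ' Bᶜ),
      ENNReal.toReal_one] at h2
  have hpn : ‖p‖ < 1 := by
    rw [Real.norm_eq_abs, abs_of_nonneg hp0]; linarith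
  -- integrals against the product measure
  set I : Bool → Bool → ℝ :=
    fun a b => ∫ z, F z * (ind (Aset B a) z.1 * ind (Aset B b) z.2) ∂(μ'.prod μ') with hIdef
  have hAset : ∀ a : Bool, MeasurableSet (Aset B a) := by
    intro a; cases a
    · exact hB.compl
    · exact hB
  have hφm : ∀ a b : Bool,
      Measurable (fun z : E × E => F z * (ind (Aset B a) z.1 * ind (Aset B b) z.2)) :=
    fun a b => hFm.mul (((measurable_ind (hAset a)).comp measurable_fst).mul
      ((measurable_ind (hAset b)).comp measurable_snd))
  have hφb : ∀ (a b : Bool) (z : E × E),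
      |F z * (ind (Aset B a) z.1 * ind (Aset B b) z.2)| ≤ C := by
    intro a b z
    have h1 : |ind (Aset B a) z.1 * ind (Aset B b) z.2| ≤ 1 := by
      rw [abs_mul, abs_of_nonneg (ind_nonneg _ _), abs_of_nonneg (ind_nonneg _ _)]
      exact mul_le_one₀ (ind_le_one _ _) (ind_nonneg _ _) (ind_le_one _ _)
    calc |F z * (ind (Aset B a) z.1 * ind (Aset B b) z.2)|
        = |F z| * |ind (Aset B a) z.1 * ind (Aset B b) z.2| := abs_mul _ _
      _ ≤ C * 1 := mul_le_mul (hFb z) h1 (abs_nonneg _) hC0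
      _ = C := mul_one C
  have hφint : ∀ a b : Bool,
      Integrable (fun z : E × E => F z * (ind (Aset B a) z.1 * ind (Aset B b) z.2))
        (μ'.prod μ') :=
    fun a b => integrable_of_bdd (hφm a b) (hφb a b)
  have hFint : Integrable F (μ'.prod μ') := integrable_of_bdd hFm hFb
  have hIsum : (∑ a : Bool, ∑ b : Bool, I a b) = ∫ z, F z ∂(μ'.prod μ') := by
    have h1 : ∀ z : E × E,
        (∑ a : Bool, ∑ b : Bool, F z * (ind (Aset B a) z.1 * ind (Aset B b) z.2)) = F z := by
      intro z
      have ha : ind (Aset B true) z.1 + ind (Aset B false) z.1 = 1 := by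
        by_cases h : z.1 ∈ B <;> simp [Aset, ind, h]
      have hb : ind (Aset B true) z.2 + ind (Aset B false) z.2 = 1 := by
        by_cases h : z.2 ∈ B <;> simp [Aset, ind, h]
      calc (∑ a : Bool, ∑ b : Bool, F z * (ind (Aset B a) z.1 * ind (Aset B b) z.2))
          = F z * ((ind (Aset B true) z.1 + ind (Aset B false) z.1)
              * (ind (Aset B true) z.2 + ind (Aset B false) z.2)) := by
            simp only [Fintype.sum_bool]; ring
        _ = F z := by rw [ha, hb]; ring
    calc (∑ a : Bool, ∑ b : Bool, I a b)
        = ∑ a : Bool, ∫ z, (∑ b : Bool,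
            F z * (ind (Aset B a) z.1 * ind (Aset B b) z.2)) ∂(μ'.prod μ') := by
          refine Finset.sum_congr rfl fun a _ => ?_
          rw [integral_finset_sum _ (fun b _ => hφint a b)]
      _ = ∫ z, (∑ a : Bool, ∑ b : Bool,
            F z * (ind (Aset B a) z.1 * ind (Aset B b) z.2)) ∂(μ'.prod μ') := by
          rw [integral_finset_sum _ (fun a _ => integrable_finset_sum _ (fun b _ => hφint a b))]
      _ = ∫ z, F z ∂(μ'.prod μ') := integral_congr_ae (Filter.Eventually.of_forall h1)
  -- the value of the integral on {T = t}
  set V : ℕ → ℝ := fun t => if 3 ≤ t then ∑ a : Bool, ∑ b : Bool,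
      (((t - 3).choose (kk N a b) : ℕ) : ℝ) *
        (I a b * (q * (q ^ (kk N a b) * p ^ ((t - 3) - kk N a b)))) else 0 with hVdef
  have hval : ∀ t : ℕ, ∫ ω in T ⁻¹' {t}, f ω ∂P = V t := by
    intro t
    rcases Nat.lt_or_ge t 3 with hlt | hge
    · have hV0 : V t = 0 := by rw [hVdef]; simp [Nat.not_le.mpr hlt]
      rw [hV0]
      interval_cases t
      · -- t = 0 : f vanishes there
        refine Eq.trans (setIntegral_congr_fun (hmeas_t 0) (g := fun _ => (0:ℝ)) ?_) (by simp)
        intro ω hω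
        simp only [Set.mem_preimage, Set.mem_singleton_iff] at hω
        rw [hfdef ω, hω, hgdef 0 ω]
        simp
      · -- t = 1 : empty event
        have hempty : T ⁻¹' {1} = ∅ := by
          ext ω
          simp only [Set.mem_preimage, Set.mem_singleton_iff, Set.mem_empty_iff_false,
            iff_false]
          intro h1
          have := (T_eq_iff X B N (by omega) T hT ω 0).mp h1
          simp at this
          omega
        rw [hempty]
        simp
      · -- t = 2 : empty event
        have hempty : T ⁻¹' {2} = ∅ := by
          ext ω
          simp only [Set.mem_preimage, Set.mem_singleton_iff, Set.mem_empty_iff_false,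
            iff_false]
          intro h1
          have h2 := (T_eq_iff X B N (by omega) T hT ω 1).mp h1
          have h3 := Finset.card_filter_le (Finset.range 1) (fun i => X i ω ∈ B)
          simp only [Finset.card_range] at h3
          omega
        rw [hempty]
        simp
    · -- main case : t ≥ 3
      set n : ℕ := t - 1 with hndef
      have htn : t = n + 1 := by omega
      have hn2 : 2 ≤ n := by omega
      set c : ℝ := 1 / (((t : ℝ) - 1) * ((t : ℝ) - 2)) with hcdef
      set cond : Ω → Prop := fun ω =>
        (((Finset.range n).filter (fun l => X l ω ∈ B)).card = N - 1) ∧ X n ω ∈ B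
        with hconddef
      have hcond_iff : ∀ ω, cond ω ↔ T ω = t := by
        intro ω
        rw [hconddef]
        constructor
        · intro h; rw [htn]; exact (T_eq_iff X B N (by omega) T hT ω n).mpr h
        · intro h; exact (T_eq_iff X B N (by omega) T hT ω n).mp (htn ▸ h)
      have hcondset : MeasurableSet {ω | cond ω} := by
        have : {ω | cond ω} = T ⁻¹' {t} := by
          ext ω
          simp only [Set.mem_setOf_eq, Set.mem_preimage, Set.mem_singleton_iff]
          exact hcond_iff ω
        rw [this]
        exact hmeas_t t
      set pairs : Finset (ℕ × ℕ) :=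
        ((Finset.range n) ×ˢ (Finset.range n)).filter (fun pr => pr.1 ≠ pr.2) with hprdef
      -- master pointwise identity
      have hmaster : ∀ ω, Set.indicator (T ⁻¹' {t}) f ω
          = ∑ pr ∈ pairs, c * ((if cond ω then (1:ℝ) else 0) * F (X pr.1 ω, X pr.2 ω)) := by
        intro ω
        by_cases hω : T ω = t
        · have hcnd : cond ω := (hcond_iff ω).mpr hω
          rw [Set.indicator_of_mem (by simpa using hω) f]
          rw [hfdef ω, hω, hgdef t ω]
          rw [hds (t - 1) (fun i j => F (X i ω, X j ω))]
          rw [Finset.mul_sum]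
          refine Finset.sum_congr rfl fun pr _ => ?_
          rw [if_pos hcnd, one_mul]
        · have hcnd : ¬ cond ω := fun h => hω ((hcond_iff ω).mp h)
          rw [Set.indicator_of_notMem (by simpa using hω) f]
          simp [hcnd]
      -- integrate
      have hterm_meas : ∀ pr : ℕ × ℕ, Measurable (fun ω =>
          c * ((if cond ω then (1:ℝ) else 0) * F (X pr.1 ω, X pr.2 ω))) := by
        intro pr
        apply Measurable.const_mul
        exact (Measurable.ite hcondset measurable_const measurable_const).mul
          (hFm.comp ((hXm pr.1).prodMk (hXm pr.2)))
      have hterm_bdd : ∀ pr : ℕ × ℕ, ∀ ω,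
          |c * ((if cond ω then (1:ℝ) else 0) * F (X pr.1 ω, X pr.2 ω))| ≤ |c| * C := by
        intro pr ω
        rw [abs_mul]
        refine mul_le_mul_of_nonneg_left ?_ (abs_nonneg c)
        rw [abs_mul]
        calc |if cond ω then (1:ℝ) else 0| * |F (X pr.1 ω, X pr.2 ω)|
            ≤ 1 * C := by
              refine mul_le_mul ?_ (hFb _) (abs_nonneg _) zero_le_one
              split <;> simp
          _ = C := one_mul C
      have hterm_int : ∀ pr : ℕ × ℕ, Integrable (fun ω =>
          c * ((if cond ω then (1:ℝ) else 0) * F (X pr.1 ω, X pr.2 ω))) P :=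
        fun pr => integrable_of_bdd (hterm_meas pr) (hterm_bdd pr)
      have hstep : ∫ ω in T ⁻¹' {t}, f ω ∂P
          = ∑ pr ∈ pairs, c * ∫ ω,
              (if cond ω then (1:ℝ) else 0) * F (X pr.1 ω, X pr.2 ω) ∂P := by
        rw [← integral_indicator (hmeas_t t)]
        rw [integral_congr_ae (Filter.Eventually.of_forall hmaster)]
        rw [integral_finset_sum _ (fun pr _ => hterm_int pr)]
        refine Finset.sum_congr rfl fun pr _ => ?_
        exact integral_const_mul c _
      rw [hstep]
      -- the per-pair value
      have hpairval : ∀ pr ∈ pairs,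
          (∫ ω, (if cond ω then (1:ℝ) else 0) * F (X pr.1 ω, X pr.2 ω) ∂P)
            = ∑ a : Bool, ∑ b : Bool, (((n - 2).choose (kk N a b) : ℕ) : ℝ) *
                ((I a b) * (q * (q ^ (kk N a b) * p ^ ((n - 2) - kk N a b)))) := by
        intro pr hpr
        simp only [hprdef, Finset.mem_filter, Finset.mem_product, Finset.mem_range] at hpr
        exact pairval hXm hindep hlaw hB N hN hFm hFb n pr.1 pr.2 hpr.1.1 hpr.1.2 hpr.2
      rw [Finset.sum_congr rfl (fun pr hpr => by rw [hpairval pr hpr])]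
      rw [Finset.sum_const, nsmul_eq_mul]
      have hcard : (pairs.card : ℝ) = ((t : ℝ) - 1) * ((t : ℝ) - 2) := by
        rw [hprdef, pairs_card n]
        obtain ⟨u, hu⟩ : ∃ u, t = u + 3 := ⟨t - 3, by omega⟩
        have hn : n = u + 2 := by omega
        rw [hn, hu]
        have h1 : (u + 2) * (u + 2) - (u + 2) = (u + 2) * (u + 1) := by
          have : (u + 2) * (u + 2) = (u + 2) * (u + 1) + (u + 2) := by ring
          omega
        rw [h1]
        push_cast
        ring
      have hVt : V t = ∑ a : Bool, ∑ b : Bool, (((n - 2).choose (kk N a b) : ℕ) : ℝ) *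
          ((I a b) * (q * (q ^ (kk N a b) * p ^ ((n - 2) - kk N a b)))) := by
        rw [hVdef]
        simp only [if_pos hge]
        have h32 : n - 2 = t - 3 := by omega
        rw [h32]
      rw [hVt]
      rw [hcard, hcdef]
      have hne : ((t : ℝ) - 1) * ((t : ℝ) - 2) ≠ 0 := by
        obtain ⟨u, hu⟩ : ∃ u, t = u + 3 := ⟨t - 3, by omega⟩
        rw [hu]
        push_cast
        nlinarith [Nat.cast_nonneg (α := ℝ) u]
      field_simp
      rw [mul_div_cancel_left₀ _ hne]
      exact Finset.sum_congr rfl fun a _ => Finset.sum_congr rfl fun b _ => by ring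
  -- the sum of the values
  have hVsum : HasSum V (∫ z, F z ∂(μ'.prod μ')) := by
    rw [← hIsum]
    have hVsplit : V = fun t => ∑ a : Bool, ∑ b : Bool,
        (if 3 ≤ t then (((t - 3).choose (kk N a b) : ℕ) : ℝ) *
          (I a b * (q * (q ^ (kk N a b) * p ^ ((t - 3) - kk N a b)))) else 0) := by
      funext t
      rw [hVdef]
      by_cases h3 : 3 ≤ t <;> simp [h3]
    rw [hVsplit]
    refine hasSum_sum fun a _ => hasSum_sum fun b _ => ?_
    set k : ℕ := kk N a b with hkdef
    -- shift by 3
    have hinj3 : Function.Injective (fun m : ℕ => m + 3) := add_left_injective 3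
    have hz3 : ∀ x ∉ Set.range (fun m : ℕ => m + 3),
        (if 3 ≤ x then ((x - 3).choose k : ℝ) *
          (I a b * (q * (q ^ k * p ^ ((x - 3) - k)))) else 0) = 0 := by
      intro x hx
      have : ¬ 3 ≤ x := by
        intro h
        exact hx ⟨x - 3, by simp; omega⟩
      simp [this]
    refine (Function.Injective.hasSum_iff hinj3 hz3).mp ?_
    have he3 : ((fun x => if 3 ≤ x then ((x - 3).choose k : ℝ) *
        (I a b * (q * (q ^ k * p ^ ((x - 3) - k)))) else 0) ∘ (fun m : ℕ => m + 3))
        = fun m : ℕ => ((m.choose k : ℝ)) * (I a b * (q * (q ^ k * p ^ (m - k)))) := by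
      funext m
      simp [Nat.add_sub_cancel]
    rw [he3]
    -- shift by k
    have hinjk : Function.Injective (fun m : ℕ => m + k) := add_left_injective k
    have hzk : ∀ x ∉ Set.range (fun m : ℕ => m + k),
        ((x.choose k : ℝ)) * (I a b * (q * (q ^ k * p ^ (x - k)))) = 0 := by
      intro x hx
      have hxk : x < k := by
        by_contra h
        exact hx ⟨x - k, by simp; omega⟩
      simp [Nat.choose_eq_zero_of_lt hxk]
    refine (Function.Injective.hasSum_iff hinjk hzk).mp ?_
    have hek : ((fun x => ((x.choose k : ℝ)) * (I a b * (q * (q ^ k * p ^ (x - k))))) ∘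
        (fun m : ℕ => m + k))
        = fun m : ℕ => (((m + k).choose k : ℝ) * p ^ m) * (q ^ (k + 1) * I a b) := by
      funext m
      simp only [Function.comp_apply, Nat.add_sub_cancel]
      rw [pow_succ]
      ring
    rw [hek]
    have h5 := (hasSum_choose_mul_geometric_of_norm_lt_one k hpn).mul_right
      (q ^ (k + 1) * I a b)
    have h6 : (1 / (1 - p) ^ (k + 1)) * (q ^ (k + 1) * I a b) = I a b := by
      have h7 : (1:ℝ) - p = q := by linarith
      rw [h7]
      have h8 : q ^ (k + 1) ≠ 0 := pow_ne_zero _ (ne_of_gt hq0)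
      field_simp
    rw [h6] at h5
    exact h5
  -- conclude
  have hfun : (fun t => ∫ ω in T ⁻¹' {t}, f ω ∂P) = V := funext hval
  rw [hfun] at hsum1
  rw [hsum1.unique hVsum]
  exact integral_prod F hFint
end

section
/- Martingale-difference decomposition: with γ_n^{T_n}(φ) as in the alive particle filter and Φ_p the Feynman–Kac one-step map Φ_p(μ)(φ) = μ(G_{p-1} M_p(φ))/μ(G_{p-1}), one has the telescoping identity γ_n^{T_n}(φ) − γ_n(φ) = Σ_{p=1}^n γ_p^{T_p}(1) [η_p^{T_p} − Φ_p(η_{p-1}^{T_{p-1}})](Q_{p,n}(φ)), where Q_{p,n} is the Feynman–Kac semigroup Q_{p,n}(φ)(x_p) = ∫ Q_{p+1}(x_p,dx_{p+1})···Q_n(x_{n-1},dx_n)φ(x_n) with Q_k(x,dy) = G_{k-1}(x)M_k(x,dy), and with the conventions Φ_1(η_0^{T_0}) = η_1 and Q_{n,n} = Id. -/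
open MeasureTheory ProbabilityTheory
open scoped Classical

/-- The unnormalized Feynman–Kac measure `γ_n(φ)` (convention `B 0 = univ`). -/
noncomputable def fkGamma {E : Type*} [MeasurableSpace E]
    (M : ℕ → ProbabilityTheory.Kernel E E) (B : ℕ → Set E) (x0 : E) :
    ℕ → (E → ℝ) → ℝ
  | 0, φ => φ x0
  | n + 1, φ =>
      fkGamma M B x0 n (fun x => (B n).indicator (fun z => ∫ y, φ y ∂(M (n + 1) z)) x)

/-- Auxiliary iterate: `fkQAux p k φ = Q_{p,p+k}(φ)` where
`Q_k(x,dy) = 1_{B (k-1)}(x) M_k(x,dy)`. -/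
noncomputable def fkQAux {E : Type*} [MeasurableSpace E]
    (M : ℕ → ProbabilityTheory.Kernel E E) (B : ℕ → Set E) :
    ℕ → ℕ → (E → ℝ) → E → ℝ
  | _, 0, φ => φ
  | p, k + 1, φ => fun x =>
      (B p).indicator (fun z => ∫ y, fkQAux M B (p + 1) k φ y ∂(M (p + 1) z)) x

/-- The Feynman–Kac semigroup `Q_{p,n}(φ)`, with `Q_{n,n} = Id`. -/
noncomputable def fkQ {E : Type*} [MeasurableSpace E]
    (M : ℕ → ProbabilityTheory.Kernel E E) (B : ℕ → Set E)
    (p n : ℕ) (φ : E → ℝ) : E → ℝ :=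
  fkQAux M B p (n - p) φ

/-- `η_p^{T_p}(φ)`. -/
noncomputable def aliveEta {E Ω : Type*} (X : ℕ → ℕ → Ω → E) (T : ℕ → Ω → ℕ)
    (p : ℕ) (φ : E → ℝ) (ω : Ω) : ℝ :=
  (1 / ((T p ω : ℝ) - 1)) * ∑ i ∈ Finset.range (T p ω - 1), φ (X p i ω)

/-- `γ_p^{T_p}(1) = Π_{q=1}^{p-1} (N-1)/(T_q−1)`. -/
noncomputable def aliveGammaProd {Ω : Type*} (N : ℕ) (T : ℕ → Ω → ℕ)
    (n : ℕ) (ω : Ω) : ℝ :=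
  ∏ p ∈ Finset.Icc 1 (n - 1), ((N : ℝ) - 1) / ((T p ω : ℝ) - 1)

/-- `Φ_p(η_{p-1}^{T_{p-1}})(φ)`. -/
noncomputable def alivePhi {E Ω : Type*} [MeasurableSpace E]
    (M : ℕ → ProbabilityTheory.Kernel E E) (B : ℕ → Set E)
    (X : ℕ → ℕ → Ω → E) (T : ℕ → Ω → ℕ) (p : ℕ) (φ : E → ℝ) (ω : Ω) : ℝ :=
  (∑ i ∈ Finset.range (T (p - 1) ω - 1),
      (B (p - 1)).indicator (fun z => ∫ y, φ y ∂(M p z)) (X (p - 1) i ω)) /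
    (∑ i ∈ Finset.range (T (p - 1) ω - 1),
      (B (p - 1)).indicator (fun _ => (1 : ℝ)) (X (p - 1) i ω))

lemma fkGamma_fkQAux {E : Type*} [MeasurableSpace E]
    (M : ℕ → ProbabilityTheory.Kernel E E) (B : ℕ → Set E) (x0 : E) :
    ∀ k m (φ : E → ℝ),
      fkGamma M B x0 m (fkQAux M B m k φ) = fkGamma M B x0 (m + k) φ := by
  intro k
  induction k with
  | zero => intro m φ; rfl
  | succ k ih =>
      intro m φ
      have h1 : fkGamma M B x0 m (fkQAux M B m (k + 1) φ)
          = fkGamma M B x0 (m + 1) (fkQAux M B (m + 1) k φ) := rfl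
      rw [h1, ih, show m + 1 + k = m + (k + 1) by omega]

/-- martingale-difference decomposition: with
`γ_n^{T_n}(φ) = γ_n^{T_n}(1) η_n^{T_n}(φ)` as in the alive particle filter and `Φ_p`
the one-step Feynman–Kac map, one has the telescoping identity
`γ_n^{T_n}(φ) − γ_n(φ) = Σ_{p=1}^n γ_p^{T_p}(1) [η_p^{T_p} − Φ_p(η_{p-1}^{T_{p-1}})](Q_{p,n}(φ))`,
with the conventions `Φ_1(η_0^{T_0}) = η_1` (the true predictor, i.e. `γ_1`) and
`Q_{n,n} = Id`. -/
theorem alive_filter_martingale_decomposition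
    {E Ω : Type*} [MeasurableSpace E]
    (M : ℕ → ProbabilityTheory.Kernel E E) (hM : ∀ p, IsMarkovKernel (M p))
    (B : ℕ → Set E) (hBmeas : ∀ p, MeasurableSet (B p)) (hB0 : B 0 = Set.univ)
    (x0 : E) (N : ℕ) (hN : 2 ≤ N)
    (X : ℕ → ℕ → Ω → E) (T : ℕ → Ω → ℕ)
    (hTN : ∀ p ω, 1 ≤ p → N ≤ T p ω)
    (halive : ∀ p ω, 1 ≤ p →
      ((Finset.range (T p ω - 1)).filter (fun i => X p i ω ∈ B p)).card = N - 1)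
    (n : ℕ) (hn : 1 ≤ n) (φ : E → ℝ) (hφm : Measurable φ)
    (hφb : ∃ C, ∀ x, |φ x| ≤ C) :
    ∀ ω,
      aliveGammaProd N T n ω * aliveEta X T n φ ω - fkGamma M B x0 n φ
        = ∑ p ∈ Finset.Icc 1 n,
            aliveGammaProd N T p ω *
              (aliveEta X T p (fkQ M B p n φ) ω -
                if p = 1 then fkGamma M B x0 1 (fkQ M B 1 n φ)
                else alivePhi M B X T p (fkQ M B p n φ) ω) := by

  intro ω
  set F : ℕ → ℝ := fun p =>
    if p = 0 then fkGamma M B x0 n φ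
    else aliveGammaProd N T p ω * aliveEta X T p (fkQ M B p n φ) ω with hF
  have hterm : ∀ i ∈ Finset.range n,
      aliveGammaProd N T (1 + i) ω *
        (aliveEta X T (1 + i) (fkQ M B (1 + i) n φ) ω -
          if 1 + i = 1 then fkGamma M B x0 1 (fkQ M B 1 n φ)
          else alivePhi M B X T (1 + i) (fkQ M B (1 + i) n φ) ω)
      = F (i + 1) - F i := by
    intro i hi
    rw [Finset.mem_range] at hi
    rcases i with _ | j
    · -- p = 1
      simp only [hF]
      have hγ1 : aliveGammaProd N T 1 ω = 1 := by
        simp [aliveGammaProd]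
      have hg : fkGamma M B x0 1 (fkQ M B 1 n φ) = fkGamma M B x0 n φ := by
        unfold fkQ
        rw [fkGamma_fkQAux, show 1 + (n - 1) = n by omega]
      simp [hγ1, hg]
    · -- p = j + 2
      have hp : 1 + (j + 1) = j + 2 := by omega
      rw [hp]
      have hq1 : 1 ≤ j + 1 := by omega
      have hif : (j + 2 = 1) = False := by simp
      simp only [hif, if_false, hF]
      have hj0 : (j + 1 = 0) = False := by simp
      have hj20 : (j + 2 = 0) = False := by simp
      simp only [hj0, hj20, if_false]
      -- key identity: γ_{j+2} Φ_{j+2}(Q_{j+2,n}) = γ_{j+1} η_{j+1}(Q_{j+1,n})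
      have key : aliveGammaProd N T (j + 2) ω *
          alivePhi M B X T (j + 2) (fkQ M B (j + 2) n φ) ω
          = aliveGammaProd N T (j + 1) ω *
            aliveEta X T (j + 1) (fkQ M B (j + 1) n φ) ω := by
        set q := j + 1 with hqdef
        have hTq : N ≤ T q ω := hTN q ω hq1
        have htR : (2 : ℝ) ≤ (T q ω : ℝ) := by
          have : 2 ≤ T q ω := le_trans hN hTq
          exact_mod_cast this
        have ht1 : (T q ω : ℝ) - 1 ≠ 0 := by linarith
        have hNR : (1 : ℝ) ≤ (N : ℝ) - 1 := by
          have : (2 : ℝ) ≤ (N : ℝ) := by exact_mod_cast hN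
          linarith
        have hN1 : (N : ℝ) - 1 ≠ 0 := by linarith
        -- denominator of alivePhi
        have hden : (∑ i ∈ Finset.range (T q ω - 1),
            (B q).indicator (fun _ => (1 : ℝ)) (X q i ω)) = (N : ℝ) - 1 := by
          have : (∑ i ∈ Finset.range (T q ω - 1),
              (B q).indicator (fun _ => (1 : ℝ)) (X q i ω))
              = ((Finset.range (T q ω - 1)).filter
                  (fun i => X q i ω ∈ B q)).card := by
            simp [Set.indicator_apply, Finset.sum_boole]
          rw [this, halive q ω hq1]
          have : ((N - 1 : ℕ) : ℝ) = (N : ℝ) - 1 := by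
            have : 1 ≤ N := by omega
            push_cast [this]; ring
          rw [this]
        -- numerator of alivePhi
        have hQstep : ∀ x, (B q).indicator
            (fun z => ∫ y, fkQ M B (j + 2) n φ y ∂(M (j + 2) z)) x
            = fkQ M B q n φ x := by
          intro x
          unfold fkQ
          have h1 : n - q = (n - (j + 2)) + 1 := by omega
          rw [h1]
          rfl
        have hnum : (∑ i ∈ Finset.range (T q ω - 1),
            (B q).indicator (fun z => ∫ y, fkQ M B (j + 2) n φ y
              ∂(M (j + 2) z)) (X q i ω))
            = ((T q ω : ℝ) - 1) * aliveEta X T q (fkQ M B q n φ) ω := by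
          rw [Finset.sum_congr rfl (fun i _ => hQstep (X q i ω))]
          unfold aliveEta
          field_simp
        have hγ : aliveGammaProd N T (j + 2) ω
            = aliveGammaProd N T q ω * (((N : ℝ) - 1) / ((T q ω : ℝ) - 1)) := by
          unfold aliveGammaProd
          rw [show j + 2 - 1 = j + 1 by omega, show q - 1 = j by omega]
          rw [Finset.prod_Icc_succ_top (by omega : 1 ≤ j + 1)]
        unfold alivePhi
        rw [show j + 2 - 1 = q by omega, hden, hnum, hγ]
        field_simp
      rw [show j + 1 + 1 = j + 2 by omega]
      linear_combination -key
  have hsum : (∑ p ∈ Finset.Icc 1 n,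
      aliveGammaProd N T p ω *
        (aliveEta X T p (fkQ M B p n φ) ω -
          if p = 1 then fkGamma M B x0 1 (fkQ M B 1 n φ)
          else alivePhi M B X T p (fkQ M B p n φ) ω))
      = ∑ i ∈ Finset.range n, (F (i + 1) - F i) := by
    rw [← Finset.Ico_add_one_right_eq_Icc, Finset.sum_Ico_eq_sum_range,
      show n + 1 - 1 = n by omega]
    exact Finset.sum_congr rfl hterm
  rw [hsum, Finset.sum_range_sub]
  have hFn : F n = aliveGammaProd N T n ω * aliveEta X T n φ ω := by
    have hn0 : (n = 0) = False := by simp; omega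
    simp only [hF, hn0, if_false]
    have : fkQ M B n n φ = φ := by
      unfold fkQ
      rw [Nat.sub_self]
      rfl
    rw [this]
  have hF0 : F 0 = fkGamma M B x0 n φ := by simp [hF]
  rw [hFn, hF0]
end

section
/- Conditional unbiasedness of the one-step empirical measure: in the alive particle filter, for n ≥ 1, N ≥ 2, and bounded measurable φ, E[η_n^{T_n}(φ) | 𝓕_{n-1}] = Φ_n(η_{n-1}^{T_{n-1}})(φ) almost surely, where 𝓕_{n-1} is the σ-algebra generated by the particle system up to time n−1. -/
open MeasureTheory ProbabilityTheory
open scoped Classical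

set_option linter.unusedSectionVars false

open MeasureTheory ProbabilityTheory
open scoped Classical

namespace AliveAux

variable {E : Type*} [MeasurableSpace E]

/-- number of successes among the first `n` samples -/
noncomputable def cnt (B : Set E) (n : ℕ) (f : ℕ → E) : ℕ :=
  ((Finset.range n).filter (fun i => f i ∈ B)).card

/-- hitting time of the `N`-th success -/
noncomputable def tau (B : Set E) (N : ℕ) (f : ℕ → E) : ℕ :=
  sInf {n : ℕ | N ≤ cnt B n f}

lemma cnt_le (B : Set E) (n : ℕ) (f : ℕ → E) : cnt B n f ≤ n := by
  simpa [cnt] using Finset.card_filter_le (Finset.range n) _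

lemma cnt_mono (B : Set E) {n m : ℕ} (h : n ≤ m) (f : ℕ → E) :
    cnt B n f ≤ cnt B m f :=
  Finset.card_le_card (Finset.filter_subset_filter _ (Finset.range_subset_range.2 h))

lemma cnt_succ_of_mem (B : Set E) {n : ℕ} {f : ℕ → E} (h : f n ∈ B) :
    cnt B (n + 1) f = cnt B n f + 1 := by
  unfold cnt
  rw [Finset.range_add_one, Finset.filter_insert, if_pos h,
    Finset.card_insert_of_notMem (by simp)]

lemma measurable_cnt (B : Set E) (hB : MeasurableSet B) (n : ℕ) :
    Measurable (cnt B n) := by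
  have : cnt B n = fun f => ∑ i ∈ Finset.range n, if f i ∈ B then 1 else 0 := by
    funext f
    rw [cnt, Finset.card_filter]
  rw [this]
  exact Finset.measurable_sum _ fun i _ =>
    Measurable.ite ((measurable_pi_apply i) hB) measurable_const measurable_const

lemma tau_eq_zero_iff {B : Set E} {N : ℕ} (hN : 1 ≤ N) (f : ℕ → E) :
    tau B N f = 0 ↔ ∀ n, cnt B n f < N := by
  constructor
  · intro h n
    by_contra hc
    push_neg at hc
    have hne : {n : ℕ | N ≤ cnt B n f}.Nonempty := ⟨n, hc⟩
    have := Nat.sInf_mem hne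
    rw [tau] at h
    rw [h] at this
    have h0 : cnt B 0 f = 0 := by simp [cnt]
    simp only [Set.mem_setOf_eq, h0] at this
    omega
  · intro h
    have : {n : ℕ | N ≤ cnt B n f} = ∅ := by
      ext n; simp only [Set.mem_setOf_eq, Set.mem_empty_iff_false, iff_false, not_le]
      exact h n
    rw [tau, this, Nat.sInf_empty]

lemma tau_eq_succ_iff {B : Set E} {N : ℕ} (t : ℕ) (f : ℕ → E) :
    tau B N f = t + 1 ↔ N ≤ cnt B (t + 1) f ∧ cnt B t f < N := by
  constructor
  · intro h
    have hne : {n : ℕ | N ≤ cnt B n f}.Nonempty := by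
      by_contra hc
      rw [Set.not_nonempty_iff_eq_empty] at hc
      rw [tau, hc, Nat.sInf_empty] at h
      omega
    have h1 := Nat.sInf_mem hne
    rw [tau] at h
    rw [h] at h1
    refine ⟨h1, ?_⟩
    by_contra hc
    push_neg at hc
    have := Nat.sInf_le (by exact hc : t ∈ {n : ℕ | N ≤ cnt B n f})
    omega
  · rintro ⟨h1, h2⟩
    have hle : sInf {n : ℕ | N ≤ cnt B n f} ≤ t + 1 := Nat.sInf_le h1
    have hne : {n : ℕ | N ≤ cnt B n f}.Nonempty := ⟨t + 1, h1⟩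
    have hmem := Nat.sInf_mem hne
    rw [tau]
    by_contra hc
    have hlt : sInf {n : ℕ | N ≤ cnt B n f} ≤ t := by omega
    have : N ≤ cnt B t f :=
      le_trans hmem (cnt_mono B hlt f)
    omega

lemma measurable_tau (B : Set E) (hB : MeasurableSet B) (N : ℕ) (hN : 1 ≤ N) :
    Measurable (tau B N) := by
  apply measurable_to_countable'
  intro t
  rcases t with _ | t
  · have : tau B N ⁻¹' {0} = ⋂ n, {f : ℕ → E | cnt B n f < N} := by
      ext f
      simp only [Set.mem_preimage, Set.mem_singleton_iff, Set.mem_iInter, Set.mem_setOf_eq]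
      exact tau_eq_zero_iff hN f
    rw [this]
    exact MeasurableSet.iInter fun n =>
      measurableSet_lt (measurable_cnt B hB n) measurable_const
  · have : tau B N ⁻¹' {t + 1} =
        {f : ℕ → E | N ≤ cnt B (t + 1) f} ∩ {f : ℕ → E | cnt B t f < N} := by
      ext f
      simp only [Set.mem_preimage, Set.mem_singleton_iff, Set.mem_inter_iff, Set.mem_setOf_eq]
      exact tau_eq_succ_iff t f
    rw [this]
    exact (measurableSet_le measurable_const (measurable_cnt B hB (t + 1))).inter
      (measurableSet_lt (measurable_cnt B hB t) measurable_const)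





/-- count among coordinates `< n` (within `Fin s`) -/
noncomputable def dcnt (B : Set E) (s n : ℕ) (x : Fin s → E) : ℕ :=
  (Finset.univ.filter (fun j : Fin s => (j : ℕ) < n ∧ x j ∈ B)).card

lemma cnt_eq_dcnt (B : Set E) {s n : ℕ} (hns : n ≤ s) (f : ℕ → E) :
    cnt B n f = dcnt B s n (fun j : Fin s => f j) := by
  classical
  unfold cnt dcnt
  refine Finset.card_bij' (fun i hi => (⟨i, by
      simp only [Finset.mem_filter, Finset.mem_range] at hi
      omega⟩ : Fin s)) (fun j _ => (j : ℕ)) ?_ ?_ ?_ ?_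
  · intro i hi
    simp only [Finset.mem_filter, Finset.mem_range] at hi ⊢
    exact ⟨Finset.mem_univ _, hi.1, hi.2⟩
  · intro j hj
    simp only [Finset.mem_filter, Finset.mem_range] at hj ⊢
    exact ⟨hj.2.1, hj.2.2⟩
  · intro i hi; rfl
  · intro j hj; rfl

lemma measurable_dcnt (B : Set E) (hB : MeasurableSet B) (s n : ℕ) :
    Measurable (dcnt B s n) := by
  have : dcnt B s n = fun x =>
      ∑ j : Fin s, if ((j : ℕ) < n ∧ x j ∈ B) then 1 else 0 := by
    funext x
    rw [dcnt, Finset.card_filter]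
  rw [this]
  refine Finset.measurable_sum _ fun j _ => ?_
  by_cases hj : (j : ℕ) < n
  · simp only [hj, true_and]
    exact Measurable.ite ((measurable_pi_apply j) hB) measurable_const measurable_const
  · simp only [hj, false_and, if_false]
    exact measurable_const

lemma dcnt_comp_swap (B : Set E) {s n : ℕ} (a b : Fin s)
    (ha : (a : ℕ) < n) (hb : (b : ℕ) < n) (x : Fin s → E) :
    dcnt B s n (x ∘ Equiv.swap a b) = dcnt B s n x := by
  classical
  unfold dcnt
  set σ := Equiv.swap a b with hσ
  have hval : ∀ j : Fin s, ((σ j : Fin s) : ℕ) < n ↔ (j : ℕ) < n := by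
    intro j
    by_cases hja : j = a
    · subst hja; rw [hσ, Equiv.swap_apply_left]; exact ⟨fun _ => ha, fun _ => hb⟩
    by_cases hjb : j = b
    · subst hjb; rw [hσ, Equiv.swap_apply_right]; exact ⟨fun _ => hb, fun _ => ha⟩
    · rw [hσ, Equiv.swap_apply_of_ne_of_ne hja hjb]
  have himg : Finset.univ.filter (fun j : Fin s => (j : ℕ) < n ∧ (x ∘ σ) j ∈ B)
      = (Finset.univ.filter (fun j : Fin s => (j : ℕ) < n ∧ x j ∈ B)).image σ.symm := by
    ext j
    simp only [Finset.mem_filter, Finset.mem_univ, true_and, Finset.mem_image,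
      Function.comp_apply]
    constructor
    · intro ⟨h1, h2⟩
      exact ⟨σ j, ⟨(hval j).2 h1, h2⟩, Equiv.symm_apply_apply _ _⟩
    · rintro ⟨k, ⟨h1, h2⟩, rfl⟩
      have : σ (σ.symm k) = k := Equiv.apply_symm_apply _ _
      constructor
      · rw [← this] at h1; exact (hval _).1 h1
      · rw [this]; exact h2
  rw [himg, Finset.card_image_of_injective _ σ.symm.injective]


set_option maxHeartbeats 2000000

section Key

variable {E : Type*} [MeasurableSpace E]

/-- marginal of the iid sequence on the first `t` coordinates is the product measure -/
lemma marginal_pi (m : Measure E) [IsProbabilityMeasure m]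
    (ν' : Measure (ℕ → E)) [IsProbabilityMeasure ν']
    (hiid : ∀ (s : Finset ℕ) (A : ℕ → Set E), (∀ i, MeasurableSet (A i)) →
      ν' {f | ∀ i ∈ s, f i ∈ A i} = ∏ i ∈ s, m (A i)) (t : ℕ) :
    ν'.map (fun f (j : Fin t) => f j) = Measure.pi (fun _ : Fin t => m) := by
  have hproj : Measurable (fun f : ℕ → E => fun j : Fin t => f j) :=
    measurable_pi_lambda _ (fun j => measurable_pi_apply _)
  refine (Measure.pi_eq fun A hA => ?_).symm
  rw [Measure.map_apply hproj (MeasurableSet.univ_pi hA)]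
  have hset : (fun f (j : Fin t) => f j) ⁻¹' (Set.univ.pi A)
      = {f : ℕ → E | ∀ i ∈ Finset.range t, f i ∈
          (fun i => if h : i < t then A ⟨i, h⟩ else Set.univ) i} := by
    ext f
    simp only [Set.mem_preimage, Set.mem_univ_pi, Set.mem_setOf_eq, Finset.mem_range]
    constructor
    · intro h i hi
      rw [dif_pos hi]
      exact h ⟨i, hi⟩
    · intro h j
      have := h j.1 j.2
      rwa [dif_pos j.2, Fin.eta] at this
  rw [hset, hiid _ _ (fun i => by
    by_cases h : i < t
    · simpa only [dif_pos h] using hA ⟨i, h⟩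
    · simp only [dif_neg h]; exact MeasurableSet.univ)]
  rw [← Fin.prod_univ_eq_prod_range (fun i => m (if h : i < t then A ⟨i, h⟩ else Set.univ)) t]
  exact Finset.prod_congr rfl (fun j _ => by rw [dif_pos j.2, Fin.eta])


lemma measurable_g (B : Set E) (hB : MeasurableSet B) (N : ℕ) (hN1 : 1 ≤ N)
    (φ : E → ℝ) (hφm : Measurable φ) :
    Measurable fun f : ℕ → E =>
      (1 / ((tau B N f : ℝ) - 1)) * ∑ i ∈ Finset.range (tau B N f - 1), φ (f i) := by
  have h1 : Measurable (fun p : (ℕ → E) × ℕ =>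
      (1 / ((p.2 : ℝ) - 1)) * ∑ i ∈ Finset.range (p.2 - 1), φ (p.1 i)) := by
    refine measurable_from_prod_countable_left fun t => ?_
    dsimp only
    exact ((Finset.measurable_sum (Finset.range (t - 1)) fun i _ =>
      hφm.comp (measurable_pi_apply i))).const_mul _
  exact h1.comp (measurable_id.prodMk (measurable_tau B hB N hN1))

lemma abs_g_le (B : Set E) (N : ℕ) (φ : E → ℝ) (C : ℝ) (hφb : ∀ x, |φ x| ≤ C)
    (hC : 0 ≤ C) (f : ℕ → E) :
    |(1 / ((tau B N f : ℝ) - 1)) * ∑ i ∈ Finset.range (tau B N f - 1), φ (f i)| ≤ C := by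
  set t := tau B N f with ht
  rcases Nat.lt_or_ge t 2 with h2 | h2
  · have h0 : t - 1 = 0 := by omega
    simp only [h0, Finset.range_zero, Finset.sum_empty, mul_zero, abs_zero]
    exact hC
  · have hsum : |∑ i ∈ Finset.range (t - 1), φ (f i)| ≤ ((t - 1 : ℕ) : ℝ) * C := by
      calc |∑ i ∈ Finset.range (t - 1), φ (f i)|
          ≤ ∑ i ∈ Finset.range (t - 1), |φ (f i)| := Finset.abs_sum_le_sum_abs _ _
        _ ≤ ∑ _i ∈ Finset.range (t - 1), C := Finset.sum_le_sum fun i _ => hφb _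
        _ = ((t - 1 : ℕ) : ℝ) * C := by
            rw [Finset.sum_const, Finset.card_range, nsmul_eq_mul]
    have h1 : ((t : ℝ) - 1) = ((t - 1 : ℕ) : ℝ) := by
      have : (1 : ℕ) ≤ t := by omega
      push_cast [Nat.cast_sub this]
      ring
    have hpos : (0 : ℝ) < ((t - 1 : ℕ) : ℝ) := by
      have : 1 ≤ t - 1 := by omega
      exact_mod_cast Nat.lt_of_lt_of_le Nat.zero_lt_one this
    rw [abs_mul, h1, abs_of_nonneg (by positivity)]
    calc (1 / ((t - 1 : ℕ) : ℝ)) * |∑ i ∈ Finset.range (t - 1), φ (f i)|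
        ≤ (1 / ((t - 1 : ℕ) : ℝ)) * (((t - 1 : ℕ) : ℝ) * C) :=
          mul_le_mul_of_nonneg_left hsum (by positivity)
      _ = C := by rw [one_div, ← mul_assoc, inv_mul_cancel₀ (ne_of_gt hpos), one_mul]

/-- the key unbiasedness identity for a single i.i.d. sequence -/
lemma key (m : Measure E) [IsProbabilityMeasure m] (ν' : Measure (ℕ → E))
    [IsProbabilityMeasure ν'] (B : Set E) (hB : MeasurableSet B)
    (hiid : ∀ (s : Finset ℕ) (A : ℕ → Set E), (∀ i, MeasurableSet (A i)) →
      ν' {f | ∀ i ∈ s, f i ∈ A i} = ∏ i ∈ s, m (A i))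
    (hq0 : 0 < m B) (N : ℕ) (hN : 2 ≤ N)
    (φ : E → ℝ) (hφm : Measurable φ) (C : ℝ) (hφb : ∀ x, |φ x| ≤ C) :
    ∫ f, (1 / ((tau B N f : ℝ) - 1)) * ∑ i ∈ Finset.range (tau B N f - 1), φ (f i) ∂ν'
      = ∫ y, φ y ∂m := by
  classical
  have hN1 : (1 : ℕ) ≤ N := by omega
  -- E is nonempty and C ≥ 0
  have hE : Nonempty E := by
    by_contra h
    rw [not_nonempty_iff] at h
    have h0 : m Set.univ = 0 := by
      rw [Set.univ_eq_empty_iff.2 h]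
      exact measure_empty
    rw [measure_univ] at h0
    exact one_ne_zero h0
  have hC : 0 ≤ C := le_trans (abs_nonneg _) (hφb (Classical.arbitrary E))
  -- notation
  set g : (ℕ → E) → ℝ := fun f =>
    (1 / ((tau B N f : ℝ) - 1)) * ∑ i ∈ Finset.range (tau B N f - 1), φ (f i) with hg
  -- measurability of g
  have hg_meas : Measurable g := measurable_g B hB N hN1 φ hφm
  -- bound on g
  have hg_bound : ∀ f, |g f| ≤ C := abs_g_le B N φ C hφb hC
  -- integrability
  have hg_int : Integrable g ν' := by
    refine Integrable.mono' (integrable_const C) hg_meas.aestronglyMeasurable ?_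
    exact Filter.Eventually.of_forall fun f => by
      rw [Real.norm_eq_abs]; exact hg_bound f
  have hφ0_meas : ∀ i : ℕ, Measurable fun f : ℕ → E => φ (f i) :=
    fun i => hφm.comp (measurable_pi_apply i)
  have hφ0_int : ∀ i : ℕ, Integrable (fun f : ℕ → E => φ (f i)) ν' := by
    intro i
    refine Integrable.mono' (integrable_const C) (hφ0_meas i).aestronglyMeasurable ?_
    exact Filter.Eventually.of_forall fun f => by
      rw [Real.norm_eq_abs]; exact hφb _
  -- the events {tau = t}
  have htau_meas : ∀ t : ℕ, MeasurableSet {f : ℕ → E | tau B N f = t} :=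
    fun t => (measurable_tau B hB N hN1) (measurableSet_singleton t)
  -- {tau = 0} is null
  have null0 : ν' {f : ℕ → E | tau B N f = 0} = 0 := by
    have hsub : {f : ℕ → E | tau B N f = 0}
        ⊆ ⋃ M : ℕ, {f : ℕ → E | ∀ i, M ≤ i → f i ∉ B} := by
      intro f hf
      simp only [Set.mem_setOf_eq] at hf
      rw [tau_eq_zero_iff hN1 f] at hf
      by_contra hcon
      simp only [Set.mem_iUnion, Set.mem_setOf_eq, not_exists, not_forall] at hcon
      have grow : ∀ k : ℕ, ∃ n, k ≤ cnt B n f := by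
        intro k
        induction k with
        | zero => exact ⟨0, Nat.zero_le _⟩
        | succ k ih =>
          obtain ⟨n, hn⟩ := ih
          obtain ⟨i, hni, hiB⟩ := hcon n
          refine ⟨i + 1, ?_⟩
          have h1 : cnt B n f ≤ cnt B i f := cnt_mono B hni f
          have h2 : cnt B (i + 1) f = cnt B i f + 1 := cnt_succ_of_mem B (not_not.1 hiB)
          omega
      obtain ⟨n, hn⟩ := grow N
      exact absurd hn (not_le.2 (hf n))
    refine measure_mono_null hsub (measure_iUnion_null fun M => ?_)
    have hub : ∀ k : ℕ, ν' {f : ℕ → E | ∀ i, M ≤ i → f i ∉ B} ≤ (m Bᶜ) ^ k := by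
      intro k
      have hsub2 : {f : ℕ → E | ∀ i, M ≤ i → f i ∉ B}
          ⊆ {f : ℕ → E | ∀ i ∈ Finset.Ico M (M + k), f i ∈ (fun _ => Bᶜ) i} := by
        intro f hf i hi
        exact hf i (Finset.mem_Ico.1 hi).1
      refine le_trans (measure_mono hsub2) ?_
      rw [hiid _ (fun _ => Bᶜ) (fun _ => hB.compl), Finset.prod_const, Nat.card_Ico]
      simp
    have hq : m Bᶜ < 1 := by
      rw [prob_compl_eq_one_sub hB]
      exact ENNReal.sub_lt_self ENNReal.one_ne_top one_ne_zero hq0.ne'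
    have htend := ENNReal.tendsto_pow_atTop_nhds_zero_of_lt_one hq
    have := ge_of_tendsto' htend hub
    exact le_antisymm this zero_le
  -- partition of the integral according to the value of tau
  have hpart : ∀ (h : (ℕ → E) → ℝ), Integrable h ν' →
      ∫ f, h f ∂ν' = ∑' t : ℕ, ∫ f in {f : ℕ → E | tau B N f = t}, h f ∂ν' := by
    intro h hint
    have hunion : (⋃ t : ℕ, {f : ℕ → E | tau B N f = t}) = Set.univ := by
      ext f
      simp only [Set.mem_iUnion, Set.mem_setOf_eq, Set.mem_univ, iff_true]
      exact ⟨tau B N f, rfl⟩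
    have hdisj : Pairwise (Function.onFun Disjoint
        (fun t => {f : ℕ → E | tau B N f = t})) := by
      intro i j hij
      simp only [Function.onFun]
      rw [Set.disjoint_left]
      intro f h1 h2
      simp only [Set.mem_setOf_eq] at h1 h2
      exact hij (h1.symm.trans h2)
    calc ∫ f, h f ∂ν' = ∫ f in ⋃ t : ℕ, {f : ℕ → E | tau B N f = t}, h f ∂ν' := by
          rw [hunion, setIntegral_univ]
      _ = ∑' t : ℕ, ∫ f in {f : ℕ → E | tau B N f = t}, h f ∂ν' :=
          integral_iUnion htau_meas hdisj (hunion ▸ hint.integrableOn)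
  -- transfer to the product measure and exchangeability
  have swap_int : ∀ (s : ℕ), 2 ≤ s → ∀ (i : ℕ), i < s - 1 →
      ∫ f in {f : ℕ → E | tau B N f = s}, φ (f i) ∂ν'
        = ∫ f in {f : ℕ → E | tau B N f = s}, φ (f 0) ∂ν' := by
    intro s hs i hi
    set P : Measure (Fin s → E) := Measure.pi (fun _ : Fin s => m) with hP
    have hproj : Measurable (fun f : ℕ → E => fun j : Fin s => f j) :=
      measurable_pi_lambda _ (fun j => measurable_pi_apply _)
    set A : Set (Fin s → E) :=
      {x : Fin s → E | N ≤ dcnt B s s x ∧ dcnt B s (s - 1) x < N} with hA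
    have hAmeas : MeasurableSet A := by
      exact ((measurableSet_le measurable_const (measurable_dcnt B hB s s)).inter
        (measurableSet_lt (measurable_dcnt B hB s (s - 1)) measurable_const))
    have hApre : (fun f : ℕ → E => fun j : Fin s => f j) ⁻¹' A
        = {f : ℕ → E | tau B N f = s} := by
      ext f
      simp only [Set.mem_preimage, hA, Set.mem_setOf_eq]
      rw [← cnt_eq_dcnt B le_rfl f, ← cnt_eq_dcnt B (Nat.sub_le s 1) f]
      have hss : s = (s - 1) + 1 := by omega
      rw [hss, tau_eq_succ_iff (s - 1) f]
      tauto
    -- transfer of set integrals to P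
    have key_transfer : ∀ (j : ℕ) (hj : j < s),
        (∫ f in {f : ℕ → E | tau B N f = s}, φ (f j) ∂ν')
          = ∫ x in A, φ (x ⟨j, hj⟩) ∂P := by
      intro j hj
      have hm1 : Measurable fun x : Fin s → E => φ (x ⟨j, hj⟩) :=
        hφm.comp (measurable_pi_apply _)
      rw [hP, ← marginal_pi m ν' hiid s,
        setIntegral_map hAmeas hm1.aestronglyMeasurable hproj.aemeasurable, hApre]
    -- the swap
    have h0s : (0 : ℕ) < s := by omega
    have his : i < s := by omega
    set a : Fin s := ⟨0, h0s⟩ with ha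
    set b : Fin s := ⟨i, his⟩ with hb
    have hav : (a : ℕ) = 0 := rfl
    have hbv : (b : ℕ) = i := rfl
    set σ := Equiv.swap a b with hσ
    set Ψ : (Fin s → E) → (Fin s → E) := fun x => x ∘ σ with hΨ
    have hΨmeas : Measurable Ψ :=
      measurable_pi_lambda _ (fun j => measurable_pi_apply (σ j))
    have hmapΨ : P.map Ψ = P := by
      rw [hP]
      refine (Measure.pi_eq fun A' hA' => ?_).symm
      rw [Measure.map_apply hΨmeas (MeasurableSet.univ_pi hA')]
      have hpre : Ψ ⁻¹' (Set.univ.pi A') = Set.univ.pi (fun j => A' (σ.symm j)) := by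
        ext x
        simp only [Set.mem_preimage, Set.mem_univ_pi, hΨ, Function.comp_apply]
        constructor
        · intro h j
          have := h (σ.symm j)
          rwa [Equiv.apply_symm_apply] at this
        · intro h j
          have := h (σ j)
          rwa [Equiv.symm_apply_apply] at this
      rw [hpre, Measure.pi_pi]
      exact Equiv.prod_comp σ.symm (fun j => m (A' j))
    have hAinv : Ψ ⁻¹' A = A := by
      ext x
      simp only [Set.mem_preimage, hA, Set.mem_setOf_eq, hΨ]
      rw [dcnt_comp_swap B (n := s) a b (by rw [hav]; omega) (by rw [hbv]; omega) x,
        dcnt_comp_swap B (n := s - 1) a b (by rw [hav]; omega) (by rw [hbv]; omega) x]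
    have hswap : ∫ x in A, φ (x b) ∂P = ∫ x in A, φ (x a) ∂P := by
      conv_lhs => rw [← hmapΨ]
      have hmb : Measurable fun x : Fin s → E => φ (x b) :=
        hφm.comp (measurable_pi_apply b)
      rw [setIntegral_map hAmeas hmb.aestronglyMeasurable hΨmeas.aemeasurable, hAinv]
      have : ∀ x : Fin s → E, φ (Ψ x b) = φ (x a) := by
        intro x
        rw [hΨ]
        simp only [Function.comp_apply, hσ, Equiv.swap_apply_right]
      exact setIntegral_congr_fun hAmeas fun x _ => this x
    rw [key_transfer i his, key_transfer 0 h0s]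
    exact hswap
  -- per-t identity
  have claim : ∀ t : ℕ,
      ∫ f in {f : ℕ → E | tau B N f = t}, g f ∂ν'
        = ∫ f in {f : ℕ → E | tau B N f = t}, φ (f 0) ∂ν' := by
    intro t
    match t with
    | 0 =>
      rw [setIntegral_measure_zero _ null0, setIntegral_measure_zero _ null0]
    | 1 =>
      have hempty : {f : ℕ → E | tau B N f = 1} = ∅ := by
        ext f
        simp only [Set.mem_setOf_eq, Set.mem_empty_iff_false, iff_false]
        intro h
        rw [show (1 : ℕ) = 0 + 1 from rfl, tau_eq_succ_iff 0 f] at h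
        have := cnt_le B (0 + 1) f
        omega
      rw [hempty]
      simp
    | (t + 2) =>
      set s := t + 2 with hs
      have hmeas_s := htau_meas s
      have step1 : ∫ f in {f : ℕ → E | tau B N f = s}, g f ∂ν'
          = ∫ f in {f : ℕ → E | tau B N f = s},
              (1 / ((s : ℝ) - 1)) * ∑ i ∈ Finset.range (s - 1), φ (f i) ∂ν' := by
        refine setIntegral_congr_fun hmeas_s fun f hf => ?_
        simp only [Set.mem_setOf_eq] at hf
        rw [hg]
        simp only [hf]
      rw [step1]
      rw [integral_const_mul]
      have step2 : ∫ f in {f : ℕ → E | tau B N f = s},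
          ∑ i ∈ Finset.range (s - 1), φ (f i) ∂ν'
            = ∑ i ∈ Finset.range (s - 1),
                ∫ f in {f : ℕ → E | tau B N f = s}, φ (f i) ∂ν' := by
        exact integral_finset_sum _ fun i _ => (hφ0_int i).integrableOn
      rw [step2]
      have step3 : ∀ i ∈ Finset.range (s - 1),
          ∫ f in {f : ℕ → E | tau B N f = s}, φ (f i) ∂ν'
            = ∫ f in {f : ℕ → E | tau B N f = s}, φ (f 0) ∂ν' := by
        intro i hi
        exact swap_int s (by omega) i (Finset.mem_range.1 hi)
      rw [Finset.sum_congr rfl step3, Finset.sum_const, Finset.card_range, nsmul_eq_mul]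
      have hcast : ((s : ℝ) - 1) = ((s - 1 : ℕ) : ℝ) := by
        rw [hs]; push_cast; ring
      rw [hcast]
      have hne : ((s - 1 : ℕ) : ℝ) ≠ 0 := by
        rw [hs]
        push_cast
        positivity
      field_simp
  -- conclusion
  have eval0 : ν'.map (fun f : ℕ → E => f 0) = m := by
    refine Measure.ext fun A hA => ?_
    rw [Measure.map_apply (measurable_pi_apply 0) hA]
    have h1 := hiid {0} (fun _ => A) (fun _ => hA)
    simp at h1; exact h1
  calc ∫ f, g f ∂ν' = ∑' t : ℕ, ∫ f in {f : ℕ → E | tau B N f = t}, g f ∂ν' :=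
        hpart g hg_int
    _ = ∑' t : ℕ, ∫ f in {f : ℕ → E | tau B N f = t}, φ (f 0) ∂ν' :=
        tsum_congr claim
    _ = ∫ f, φ (f 0) ∂ν' := (hpart _ (hφ0_int 0)).symm
    _ = ∫ y, φ y ∂m := by
        rw [← eval0, integral_map (measurable_pi_apply 0).aemeasurable]
        exact hφm.aestronglyMeasurable

end Key

end AliveAux

/-- conditional unbiasedness of the one-step empirical measure: in the
alive particle filter, conditional on the past `𝓕_{n-1}` the step-`n` samples are
i.i.d. from the (random, past-measurable) measure `Φ_n(η_{n-1}^{T_{n-1}})` and `T_n`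
is the corresponding hitting time.  We model the past by a probability space `Ω₀`
(carrying the particle system up to time `n−1`), the sampling law by a Markov kernel
`κ : Ω₀ → E` (playing the role of `Φ_n(η_{n-1}^{T_{n-1}})`) and the conditionally
i.i.d. samples by a kernel `ν : Ω₀ → (ℕ → E)` whose finite-dimensional laws are
products of `κ`.  Then, on `Ω = Ω₀ × (ℕ → E)` with the measure `μ₀ ⊗ₘ ν` and
`𝓕_{n-1} = σ(fst)`,
`E[η_n^{T_n}(φ) | 𝓕_{n-1}] = Φ_n(η_{n-1}^{T_{n-1}})(φ) = ∫ φ dκ(·)` a.s. -/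
theorem alive_filter_conditional_unbiased
    {E Ω₀ : Type*} [MeasurableSpace E] [MeasurableSpace Ω₀]
    (μ₀ : Measure Ω₀) [IsProbabilityMeasure μ₀]
    (κ : ProbabilityTheory.Kernel Ω₀ E) [IsMarkovKernel κ]
    (ν : ProbabilityTheory.Kernel Ω₀ (ℕ → E)) [IsMarkovKernel ν]
    (hiid : ∀ ω₀ (s : Finset ℕ) (A : ℕ → Set E), (∀ i, MeasurableSet (A i)) →
      ν ω₀ {f | ∀ i ∈ s, f i ∈ A i} = ∏ i ∈ s, κ ω₀ (A i))
    (B : Set E) (hB : MeasurableSet B)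
    (hq0 : ∀ ω₀, 0 < κ ω₀ B) (hq1 : ∀ ω₀, κ ω₀ B < 1)
    (N : ℕ) (hN : 2 ≤ N)
    (T : Ω₀ × (ℕ → E) → ℕ)
    (hT : ∀ ω, T ω =
      sInf {n : ℕ | N ≤ ((Finset.range n).filter (fun i => ω.2 i ∈ B)).card})
    (φ : E → ℝ) (hφm : Measurable φ) (C : ℝ) (hφb : ∀ x, |φ x| ≤ C) :
    (μ₀ ⊗ₘ ν)[fun ω => (1 / ((T ω : ℝ) - 1)) *
          ∑ i ∈ Finset.range (T ω - 1), φ (ω.2 i)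
        | MeasurableSpace.comap (Prod.fst : Ω₀ × (ℕ → E) → Ω₀) inferInstance]
      =ᵐ[μ₀ ⊗ₘ ν] fun ω => ∫ y, φ y ∂(κ ω.1) := by
  classical
  have hN1 : (1 : ℕ) ≤ N := by omega
  -- the tail function of the samples alone
  set g : (ℕ → E) → ℝ := fun f =>
    (1 / ((AliveAux.tau B N f : ℝ) - 1)) *
      ∑ i ∈ Finset.range (AliveAux.tau B N f - 1), φ (f i) with hgdef
  have hfun : (fun ω : Ω₀ × (ℕ → E) => (1 / ((T ω : ℝ) - 1)) *
      ∑ i ∈ Finset.range (T ω - 1), φ (ω.2 i)) = fun ω => g ω.2 := by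
    funext ω
    rw [hgdef]
    simp only
    rw [hT ω]
    rfl
  rw [hfun]
  -- nonnegativity of the bound
  have hE : Nonempty E := by
    by_contra h
    rw [not_nonempty_iff] at h
    obtain ⟨x⟩ : Nonempty Ω₀ := by
      by_contra h₀
      rw [not_nonempty_iff] at h₀
      have h0 : μ₀ Set.univ = 0 := by
        rw [Set.univ_eq_empty_iff.2 h₀]; exact measure_empty
      rw [measure_univ] at h0
      exact one_ne_zero h0
    have h0 : κ x Set.univ = 0 := by
      rw [Set.univ_eq_empty_iff.2 h]; exact measure_empty
    rw [measure_univ] at h0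
    exact one_ne_zero h0
  have hC : 0 ≤ C := le_trans (abs_nonneg _) (hφb (Classical.arbitrary E))
  -- measurability and integrability of g ∘ snd
  have hg_meas : Measurable g := AliveAux.measurable_g B hB N hN1 φ hφm
  have hg_bound : ∀ f, |g f| ≤ C := AliveAux.abs_g_le B N φ C hφb hC
  have hf_int : Integrable (fun ω : Ω₀ × (ℕ → E) => g ω.2) (μ₀ ⊗ₘ ν) := by
    refine Integrable.mono' (integrable_const C)
      ((hg_meas.comp measurable_snd).aestronglyMeasurable) ?_
    exact Filter.Eventually.of_forall fun ω => by
      rw [Real.norm_eq_abs]; exact hg_bound ω.2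
  -- the conditional expectation candidate
  have hGm : StronglyMeasurable fun x : Ω₀ => ∫ y, φ y ∂κ x := by
    have h1 : StronglyMeasurable (Function.uncurry fun (_ : Ω₀) (y : E) => φ y) :=
      (hφm.comp measurable_snd).stronglyMeasurable
    exact MeasureTheory.StronglyMeasurable.integral_kernel_prod_right (κ := κ) h1
  have hGb : ∀ x : Ω₀, |∫ y, φ y ∂κ x| ≤ C := by
    intro x
    have h1 : ‖∫ y, φ y ∂κ x‖ ≤ C * ((κ x) Set.univ).toReal :=
      norm_integral_le_of_norm_le_const (Filter.Eventually.of_forall fun y => by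
        rw [Real.norm_eq_abs]; exact hφb y)
    rwa [Real.norm_eq_abs, measure_univ, ENNReal.toReal_one, mul_one] at h1
  have hG_int : Integrable (fun ω : Ω₀ × (ℕ → E) => ∫ y, φ y ∂κ ω.1) (μ₀ ⊗ₘ ν) := by
    refine Integrable.mono' (integrable_const C)
      ((hGm.comp_measurable measurable_fst).aestronglyMeasurable) ?_
    exact Filter.Eventually.of_forall fun ω => by
      rw [Real.norm_eq_abs]; exact hGb ω.1
  -- key pointwise identity
  have hkey : ∀ x : Ω₀, ∫ f, g f ∂ν x = ∫ y, φ y ∂κ x := fun x =>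
    AliveAux.key (κ x) (ν x) B hB (hiid x) (hq0 x) N hN φ hφm C hφb
  -- apply uniqueness of conditional expectation
  have hm : MeasurableSpace.comap (Prod.fst : Ω₀ × (ℕ → E) → Ω₀) inferInstance ≤
      (inferInstance : MeasurableSpace (Ω₀ × (ℕ → E))) := measurable_fst.comap_le
  refine (ae_eq_condExp_of_forall_setIntegral_eq hm hf_int ?_ ?_ ?_).symm
  · intro s _ _
    exact hG_int.integrableOn
  · rintro s ⟨u, hu, rfl⟩ _
    have hset : (Prod.fst : Ω₀ × (ℕ → E) → Ω₀) ⁻¹' u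
        = u ×ˢ (Set.univ : Set (ℕ → E)) := by
      ext ⟨x, y⟩
      simp
    rw [hset,
      Measure.setIntegral_compProd hu MeasurableSet.univ (hset ▸ hG_int.integrableOn),
      Measure.setIntegral_compProd hu MeasurableSet.univ (hset ▸ hf_int.integrableOn)]
    refine setIntegral_congr_fun hu fun x _ => ?_
    simp only [Measure.restrict_univ]
    rw [integral_const, probReal_univ, one_smul, hkey x]
  · have hfstm : @Measurable (Ω₀ × (ℕ → E)) Ω₀
        (MeasurableSpace.comap Prod.fst inferInstance) _ Prod.fst :=
      fun s hs => ⟨s, hs, rfl⟩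
    exact StronglyMeasurable.aestronglyMeasurable (hGm.comp_measurable hfstm)
end
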